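/- arXiv:1402.3532 — 4 statements merged into one kernel-verified Lean document; each statement's English description precedes it below -/
import Mathlib

section
/- Let K be a field and A = {u_1,...,u_n} a set of monomials of the same degree in K[t_1,...,t_d]. Suppose that for each pair 1 ≤ i < j ≤ n there exists a monomial order ≺ on K[x_1,...,x_n] such that every binomial g in the reduced Gröbner basis of the toric ideal I_A with respect to ≺ satisfies: (i) if x_i divides in_≺(g) and x_j does not divide in_≺(g), then g = x_i x_k − x_j x_ℓ for some 1 ≤ k, ℓ ≤ n; and (ii) if x_j divides in_≺(g) and x_i does not divide in_≺(g), then g = x_j x_ℓ − x_i x_k for some 1 ≤ k, ℓ ≤ n. Then the toric ring K[A] is strongly Koszul. -/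
/-!
Common definitions: toric ideals/rings of monomial families, strong Koszulness
with respect to a system of algebra generators, initial ideals with respect to
a relation on exponent vectors, (reduced) Gröbner bases, the (graded) reverse
lexicographic order induced by an ordering of the variables, minimal monomial
generators, and compressedness.
-/

open MvPolynomial

noncomputable section

/-- The total degree of an exponent vector. -/
def expDeg {n : ℕ} (d : Fin n →₀ ℕ) : ℕ := d.sum fun _ e => e

/-- The toric ideal `I_A ⊆ K[x_1,…,x_n]` of the family of monomials
`u i = t^(a i)` in `K[t_1,…,t_d]`: the kernel of `π : x_i ↦ u_i`. -/
def toricIdeal (K : Type) [Field K] {n d : ℕ} (a : Fin n → (Fin d →₀ ℕ)) :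
    Ideal (MvPolynomial (Fin n) K) :=
  RingHom.ker (MvPolynomial.aeval
    (fun i => (MvPolynomial.monomial (a i) (1 : K) : MvPolynomial (Fin d) K)) :
      MvPolynomial (Fin n) K →ₐ[K] MvPolynomial (Fin d) K).toRingHom

/-- The toric ring `K[A] ⊆ K[t_1,…,t_d]` generated by the monomials `t^(a i)`. -/
def toricRing (K : Type) [Field K] {n d : ℕ} (a : Fin n → (Fin d →₀ ℕ)) :
    Subalgebra K (MvPolynomial (Fin d) K) :=
  Algebra.adjoin K (Set.range fun i => (MvPolynomial.monomial (a i) (1 : K)))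

/-- The generator `u_i = t^(a i)`, as an element of the toric ring `K[A]`. -/
def toricGen (K : Type) [Field K] {n d : ℕ} (a : Fin n → (Fin d →₀ ℕ)) (i : Fin n) :
    toricRing K a :=
  ⟨MvPolynomial.monomial (a i) (1 : K), Algebra.subset_adjoin (Set.mem_range_self i)⟩

/-- A commutative ring `R` is strongly Koszul with respect to the system of
generators `u_1,…,u_n` (of its maximal graded ideal) if for every chain
`i_1 < i_2 < ⋯ < i_r` of indices and every `j = 1,…,r` the colon ideal
`(u_{i_1},…,u_{i_{j-1}}) : u_{i_j}` is generated by a subset of `{u_1,…,u_n}`. -/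
def StronglyKoszulWith {R : Type} [CommRing R] {n : ℕ} (u : Fin n → R) : Prop :=
  ∀ (r : ℕ) (c : Fin r → Fin n), StrictMono c → ∀ j : Fin r,
    ∃ S : Set R, S ⊆ Set.range u ∧
      Submodule.colon (Ideal.span ((fun k => u (c k)) '' {k : Fin r | k < j}))
        (Ideal.span {u (c j)}) = Ideal.span S

/-- The toric ring `K[A]` is strongly Koszul (with respect to its monomial
generators `u_1,…,u_n`, which form its distinguished minimal system of
generators of the same degree). -/
def ToricStronglyKoszul (K : Type) [Field K] {n d : ℕ} (a : Fin n → (Fin d →₀ ℕ)) : Prop :=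
  StronglyKoszulWith (toricGen K a)

/-- `dd` is the exponent vector of the initial (leading) monomial of `f` with
respect to the strict comparison `lt` on exponent vectors. -/
def IsInitialExp {K : Type} [Field K] {n : ℕ}
    (lt : (Fin n →₀ ℕ) → (Fin n →₀ ℕ) → Prop)
    (f : MvPolynomial (Fin n) K) (dd : Fin n →₀ ℕ) : Prop :=
  dd ∈ f.support ∧ ∀ d' ∈ f.support, d' ≠ dd → lt d' dd

/-- The initial ideal `in_lt(I)`: the monomial ideal generated by the initial
monomials of the nonzero elements of `I`. -/
def initialIdeal {K : Type} [Field K] {n : ℕ}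
    (lt : (Fin n →₀ ℕ) → (Fin n →₀ ℕ) → Prop)
    (I : Ideal (MvPolynomial (Fin n) K)) : Ideal (MvPolynomial (Fin n) K) :=
  Ideal.span {m | ∃ f ∈ I, ∃ dd, IsInitialExp lt f dd ∧
    m = MvPolynomial.monomial dd (1 : K)}

/-- `G` is the reduced Gröbner basis of `I` with respect to the strict
comparison `lt` (coming from a monomial order): the elements of `G` lie in `I`,
are monic, their initial monomials generate the initial ideal of `I`,
and no monomial occurring in an element of `G` is divisible by the initial
monomial of another element of `G`. -/
def IsReducedGB {K : Type} [Field K] {n : ℕ}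
    (lt : (Fin n →₀ ℕ) → (Fin n →₀ ℕ) → Prop)
    (I : Ideal (MvPolynomial (Fin n) K)) (G : Finset (MvPolynomial (Fin n) K)) : Prop :=
  (∀ g ∈ G, g ∈ I) ∧
  (∀ g ∈ G, ∃ dd, IsInitialExp lt g dd ∧ MvPolynomial.coeff dd g = 1) ∧
  (initialIdeal lt I =
    Ideal.span {m | ∃ g ∈ G, ∃ dd, IsInitialExp lt g dd ∧
      m = MvPolynomial.monomial dd (1 : K)}) ∧
  (∀ g ∈ G, ∀ g' ∈ G, g' ≠ g → ∀ d' ∈ g.support, ∀ dd, IsInitialExp lt g' dd → ¬ dd ≤ d')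

/-- The strict comparison of the (graded) reverse lexicographic order induced by
the ordering `x_{ord 0} < x_{ord 1} < ⋯ < x_{ord (n-1)}` of the variables:
`x < y` iff `deg x < deg y`, or the degrees agree and `x` has a strictly larger
exponent than `y` at the smallest variable where they differ. -/
def rlexLT {n : ℕ} (ord : Fin n ≃ Fin n) (x y : Fin n →₀ ℕ) : Prop :=
  expDeg x < expDeg y ∨ (expDeg x = expDeg y ∧
    ∃ p : Fin n, y (ord p) < x (ord p) ∧ ∀ q : Fin n, q < p → x (ord q) = y (ord q))

/-- `dd` is (the exponent vector of) a member of `G(I)`, the minimal system of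
monomial generators of the monomial ideal `I`: the monomial `x^dd` lies in `I`
but no proper divisor of it does. -/
def IsMinGen {K : Type} [Field K] {n : ℕ} (I : Ideal (MvPolynomial (Fin n) K))
    (dd : Fin n →₀ ℕ) : Prop :=
  MvPolynomial.monomial dd (1 : K) ∈ I ∧
  ∀ d' : Fin n →₀ ℕ, d' ≤ dd → d' ≠ dd → MvPolynomial.monomial d' (1 : K) ∉ I

/-- The toric ring `K[A]` is compressed: the initial ideal of `I_A` is radical
for every reverse lexicographic order. -/
def ToricCompressed (K : Type) [Field K] {n d : ℕ} (a : Fin n → (Fin d →₀ ℕ)) : Prop :=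
  ∀ ord : Fin n ≃ Fin n,
    (initialIdeal (rlexLT ord) (toricIdeal K a)).radical
      = initialIdeal (rlexLT ord) (toricIdeal K a)

/-- The strict comparison on exponent vectors associated to a monomial order. -/
def MonomialOrder.ltRel {σ : Type*} (m : MonomialOrder σ) :
    (σ →₀ ℕ) → (σ →₀ ℕ) → Prop :=
  fun a b => m.toSyn a < m.toSyn b

/-- A quadratic binomial: a difference of two (monic) monomials of degree 2. -/
def IsQuadBinomial {K : Type} [Field K] {n : ℕ} (g : MvPolynomial (Fin n) K) : Prop :=
  ∃ b c : Fin n →₀ ℕ, expDeg b = 2 ∧ expDeg c = 2 ∧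
    g = MvPolynomial.monomial b (1 : K) - MvPolynomial.monomial c (1 : K)

end

open MvPolynomial

section Aux

open MvPolynomial

noncomputable section

/-- The exponent-vector map induced by `a` : sends `c` to `∑ c_m • a m`. -/
def Bmap {n d : ℕ} (a : Fin n → (Fin d →₀ ℕ)) (c : Fin n →₀ ℕ) : Fin d →₀ ℕ :=
  c.sum fun m k => k • a m

lemma Bmap_add {n d : ℕ} (a : Fin n → (Fin d →₀ ℕ)) (x y : Fin n →₀ ℕ) :
    Bmap a (x + y) = Bmap a x + Bmap a y :=
  Finsupp.sum_add_index' (fun i => zero_smul ℕ (a i)) (fun i b₁ b₂ => add_smul b₁ b₂ (a i))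

lemma Bmap_single_one {n d : ℕ} (a : Fin n → (Fin d →₀ ℕ)) (i : Fin n) :
    Bmap a (Finsupp.single i 1) = a i := by
  rw [Bmap, Finsupp.sum_single_index (zero_smul ℕ (a i)), one_smul]

lemma Bmap_sub_single {n d : ℕ} (a : Fin n → (Fin d →₀ ℕ)) {c : Fin n →₀ ℕ} {l : Fin n}
    (h : Finsupp.single l 1 ≤ c) :
    Bmap a c = a l + Bmap a (c - Finsupp.single l 1) := by
  conv_lhs => rw [← tsub_add_cancel_of_le h]
  rw [Bmap_add, Bmap_single_one, add_comm]

lemma finsupp_add_left_cancel {d : ℕ} {x y z : Fin d →₀ ℕ} (h : x + y = x + z) : y = z := by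
  ext q
  have := congrArg (fun v : Fin d →₀ ℕ => v q) h
  simp only [Finsupp.add_apply] at this
  omega

/-- The defining map `π : K[x] → K[t]`, `x_i ↦ t^{a i}`. -/
abbrev piA (K : Type) [Field K] {n d : ℕ} (a : Fin n → (Fin d →₀ ℕ)) :
    MvPolynomial (Fin n) K →ₐ[K] MvPolynomial (Fin d) K :=
  MvPolynomial.aeval fun i => MvPolynomial.monomial (a i) (1 : K)

lemma piA_monomial {K : Type} [Field K] {n d : ℕ} (a : Fin n → (Fin d →₀ ℕ))
    (c : Fin n →₀ ℕ) (r : K) :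
    piA K a (MvPolynomial.monomial c r) = MvPolynomial.monomial (Bmap a c) r := by
  rw [aeval_monomial, MvPolynomial.algebraMap_eq]
  have h1 : (c.prod fun i k => (MvPolynomial.monomial (a i) (1 : K)) ^ k)
      = MvPolynomial.monomial (Bmap a c) 1 := by
    rw [Bmap, monomial_finsupp_sum_index, map_one, one_mul]
    exact Finsupp.prod_congr fun i _ => by rw [monomial_pow, one_pow]
  rw [h1, C_mul_monomial, mul_one]

lemma exists_preimage_exp {K : Type} [Field K] {n d : ℕ} (a : Fin n → (Fin d →₀ ℕ))
    {p : MvPolynomial (Fin n) K} {b : Fin d →₀ ℕ}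
    (h : MvPolynomial.coeff b (piA K a p) ≠ 0) : ∃ γ ∈ p.support, Bmap a γ = b := by
  by_contra hcon
  push_neg at hcon
  apply h
  conv_lhs => rw [p.as_sum, map_sum]
  rw [MvPolynomial.coeff_sum]
  refine Finset.sum_eq_zero fun γ hγ => ?_
  rw [piA_monomial, MvPolynomial.coeff_monomial, if_neg (hcon γ hγ)]

lemma monomial_one_injExp {K : Type} [Field K] {d : ℕ} {s t : Fin d →₀ ℕ}
    (h : (MvPolynomial.monomial s (1 : K)) = MvPolynomial.monomial t 1) : s = t := by
  rcases (MvPolynomial.monomial_eq_monomial_iff s t (1 : K) 1).mp h with ⟨h1, -⟩ | ⟨h1, -⟩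
  · exact h1
  · exact absurd h1 one_ne_zero

lemma X_mul_X_eq {K : Type} [Field K] {n : ℕ} (p q : Fin n) :
    (X p * X q : MvPolynomial (Fin n) K)
      = MvPolynomial.monomial (Finsupp.single p 1 + Finsupp.single q 1) 1 := by
  rw [show (X p : MvPolynomial (Fin n) K) = MvPolynomial.monomial (Finsupp.single p 1) 1 by
      rw [← X_pow_eq_monomial, pow_one],
    show (X q : MvPolynomial (Fin n) K) = MvPolynomial.monomial (Finsupp.single q 1) 1 by
      rw [← X_pow_eq_monomial, pow_one],
    MvPolynomial.monomial_mul, one_mul]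

lemma initialExp_unique {K : Type} [Field K] {n : ℕ} {m : MonomialOrder (Fin n)}
    {g : MvPolynomial (Fin n) K} {β β' : Fin n →₀ ℕ}
    (h : IsInitialExp m.ltRel g β) (h' : IsInitialExp m.ltRel g β') : β = β' := by
  by_contra hne
  have h1 : m.toSyn β < m.toSyn β' := h'.2 β h.1 hne
  have h2 : m.toSyn β' < m.toSyn β := h.2 β' h'.1 (fun hx => hne hx.symm)
  exact lt_asymm h1 h2

lemma mem_support_binomial {K : Type} [Field K] {n : ℕ} {α α' d' : Fin n →₀ ℕ}
    (hd' : d' ∈ (MvPolynomial.monomial α (1 : K) - MvPolynomial.monomial α' 1).support) :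
    d' = α ∨ d' = α' := by
  classical
  have := MvPolynomial.support_sub _ _ _ hd'
  rw [Finset.mem_union] at this
  rcases this with h1 | h1 <;> rw [MvPolynomial.support_monomial] at h1 <;>
    simp only [one_ne_zero, if_false, Finset.mem_singleton] at h1
  · exact Or.inl h1
  · exact Or.inr h1

lemma isInitialExp_binomial_left {K : Type} [Field K] {n : ℕ} {m : MonomialOrder (Fin n)}
    {α α' : Fin n →₀ ℕ} (hne : α' ≠ α) (hlt : m.toSyn α' < m.toSyn α) :
    IsInitialExp m.ltRel (MvPolynomial.monomial α (1 : K) - MvPolynomial.monomial α' 1) α := by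
  constructor
  · rw [MvPolynomial.mem_support_iff, MvPolynomial.coeff_sub, MvPolynomial.coeff_monomial,
      MvPolynomial.coeff_monomial, if_pos rfl, if_neg hne, sub_zero]
    exact one_ne_zero
  · intro d' hd' hne'
    rcases mem_support_binomial hd' with h1 | h1
    · exact absurd h1 hne'
    · show m.toSyn d' < m.toSyn α
      rw [h1]; exact hlt

lemma isInitialExp_binomial_right {K : Type} [Field K] {n : ℕ} {m : MonomialOrder (Fin n)}
    {α α' : Fin n →₀ ℕ} (hne : α ≠ α') (hlt : m.toSyn α < m.toSyn α') :
    IsInitialExp m.ltRel (MvPolynomial.monomial α (1 : K) - MvPolynomial.monomial α' 1) α' := by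
  constructor
  · rw [MvPolynomial.mem_support_iff, MvPolynomial.coeff_sub, MvPolynomial.coeff_monomial,
      MvPolynomial.coeff_monomial, if_neg hne, if_pos rfl, zero_sub]
    exact neg_ne_zero.mpr one_ne_zero
  · intro d' hd' hne'
    rcases mem_support_binomial hd' with h1 | h1
    · show m.toSyn d' < m.toSyn α'
      rw [h1]; exact hlt
    · exact absurd h1 hne'

lemma le_of_le_single_add {n : ℕ} {β c : Fin n →₀ ℕ} {j : Fin n}
    (h : β ≤ Finsupp.single j 1 + c) (hj : β j = 0) : β ≤ c := by
  rw [Finsupp.le_def] at h ⊢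
  intro q
  by_cases hq : q = j
  · subst hq; simp [hj]
  · have := h q
    rwa [Finsupp.add_apply, Finsupp.single_apply, if_neg (Ne.symm hq), zero_add] at this

lemma reduce_step {K : Type} [Field K] {n d : ℕ} (a : Fin n → (Fin d →₀ ℕ))
    (m : MonomialOrder (Fin n)) (g : MvPolynomial (Fin n) K) (β : Fin n →₀ ℕ)
    (hβinit : IsInitialExp m.ltRel g β) (hβ1 : MvPolynomial.coeff β g = 1)
    (hg0 : piA K a g = 0) (c : Fin n →₀ ℕ) (hβc : β ≤ c) :
    ∃ γ : Fin n →₀ ℕ, m.toSyn γ < m.toSyn c ∧ Bmap a γ = Bmap a c := by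
  classical
  set h : MvPolynomial (Fin n) K :=
    MvPolynomial.monomial c 1 - MvPolynomial.monomial (c - β) 1 * g with hh
  have hch : MvPolynomial.coeff c h = 0 := by
    rw [hh, MvPolynomial.coeff_sub, MvPolynomial.coeff_monomial, if_pos rfl,
      MvPolynomial.coeff_monomial_mul', if_pos tsub_le_self, one_mul,
      tsub_tsub_cancel_of_le hβc, hβ1, sub_self]
  have hπ : piA K a h = MvPolynomial.monomial (Bmap a c) 1 := by
    rw [hh, map_sub, map_mul, hg0, mul_zero, sub_zero, piA_monomial]
  have hco : MvPolynomial.coeff (Bmap a c) (piA K a h) ≠ 0 := by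
    rw [hπ, MvPolynomial.coeff_monomial, if_pos rfl]; exact one_ne_zero
  obtain ⟨γ, hγh, hγB⟩ := exists_preimage_exp a hco
  refine ⟨γ, ?_, hγB⟩
  have hγc : γ ≠ c := fun hx => by
    rw [hx] at hγh; exact (MvPolynomial.mem_support_iff.mp hγh) hch
  have hmem := MvPolynomial.support_sub _ _ _ hγh
  rw [Finset.mem_union] at hmem
  rcases hmem with h1 | h1
  · rw [MvPolynomial.support_monomial] at h1
    simp only [one_ne_zero, if_false, Finset.mem_singleton] at h1
    exact absurd h1 hγc
  · have hcoeff : MvPolynomial.coeff γ (MvPolynomial.monomial (c - β) 1 * g) ≠ 0 :=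
      MvPolynomial.mem_support_iff.mp h1
    rw [MvPolynomial.coeff_monomial_mul'] at hcoeff
    by_cases hcb : c - β ≤ γ
    swap
    · rw [if_neg hcb] at hcoeff; exact absurd rfl hcoeff
    rw [if_pos hcb, one_mul] at hcoeff
    have hγeq : γ = (c - β) + (γ - (c - β)) := by
      rw [add_comm, tsub_add_cancel_of_le hcb]
    have hγ'supp : γ - (c - β) ∈ g.support := MvPolynomial.mem_support_iff.mpr hcoeff
    have hγ'β : γ - (c - β) ≠ β := by
      intro hx
      apply hγc
      rw [hγeq, hx, tsub_add_cancel_of_le hβc]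
    have hlt : m.toSyn (γ - (c - β)) < m.toSyn β := hβinit.2 _ hγ'supp hγ'β
    calc m.toSyn γ = m.toSyn (c - β) + m.toSyn (γ - (c - β)) := by rw [← map_add, ← hγeq]
      _ < m.toSyn (c - β) + m.toSyn β := (add_lt_add_iff_left _).mpr hlt
      _ = m.toSyn c := by rw [← map_add, tsub_add_cancel_of_le hβc]

end

end Aux

open MvPolynomial in
lemma keyLemma (K : Type) [Field K] {n d : ℕ} (a : Fin n → (Fin d →₀ ℕ)) {i j : Fin n}
    (hij : i < j) (m : MonomialOrder (Fin n)) (G : Finset (MvPolynomial (Fin n) K))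
    (hGB : IsReducedGB m.ltRel (toricIdeal K a) G)
    (hH : ∀ g ∈ G, ∀ dd : Fin n →₀ ℕ, IsInitialExp m.ltRel g dd →
      (dd i ≠ 0 → dd j = 0 → ∃ k l : Fin n, g = X i * X k - X j * X l) ∧
      (dd j ≠ 0 → dd i = 0 → ∃ k l : Fin n, g = X j * X l - X i * X k)) :
    ∀ c e : Fin n →₀ ℕ, a j + Bmap a c = a i + Bmap a e →
      ∃ l k : Fin n, ∃ c' : Fin n →₀ ℕ,
        Bmap a c = a l + Bmap a c' ∧ a j + a l = a i + a k := by
  classical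
  have hija : i ≠ j := ne_of_lt hij
  have hmemI : ∀ g ∈ G, piA K a g = 0 := by
    intro g hg
    have := hGB.1 g hg
    rw [toricIdeal, RingHom.mem_ker] at this
    exact this
  suffices hmain : ∀ sc se : m.syn, ∀ c e : Fin n →₀ ℕ, m.toSyn c = sc → m.toSyn e = se →
      a j + Bmap a c = a i + Bmap a e →
      ∃ l k : Fin n, ∃ c' : Fin n →₀ ℕ,
        Bmap a c = a l + Bmap a c' ∧ a j + a l = a i + a k by
    exact fun c e h => hmain _ _ c e rfl rfl h
  intro sc
  induction sc using WellFoundedLT.induction with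
  | _ sc ihc =>
  intro se
  induction se using WellFoundedLT.induction with
  | _ se ihe =>
  rintro c e rfl rfl h
  by_cases hαα' : Finsupp.single j 1 + c = Finsupp.single i 1 + e
  · -- the two monomials coincide
    have hci : Finsupp.single i 1 ≤ c := by
      rw [Finsupp.single_le_iff]
      have h2 := DFunLike.congr_fun hαα' i
      rw [Finsupp.add_apply, Finsupp.add_apply, Finsupp.single_eq_of_ne' (Ne.symm hija),
        Finsupp.single_eq_same, zero_add] at h2
      omega
    exact ⟨i, j, c - Finsupp.single i 1, Bmap_sub_single a hci, add_comm _ _⟩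
  · set α : Fin n →₀ ℕ := Finsupp.single j 1 + c with hα
    set α' : Fin n →₀ ℕ := Finsupp.single i 1 + e with hα'
    have hBα : Bmap a α = a j + Bmap a c := by rw [hα, Bmap_add, Bmap_single_one]
    have hBα' : Bmap a α' = a i + Bmap a e := by rw [hα', Bmap_add, Bmap_single_one]
    set f : MvPolynomial (Fin n) K :=
      MvPolynomial.monomial α 1 - MvPolynomial.monomial α' 1 with hf
    have hfI : f ∈ toricIdeal K a := by
      rw [toricIdeal, RingHom.mem_ker]
      show piA K a f = 0
      rw [hf, map_sub, piA_monomial, piA_monomial, hBα, hBα', h, sub_self]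
    have getg : ∀ dd : Fin n →₀ ℕ, IsInitialExp m.ltRel f dd →
        ∃ g ∈ G, ∃ β : Fin n →₀ ℕ, IsInitialExp m.ltRel g β ∧
          MvPolynomial.coeff β g = 1 ∧ β ≤ dd := by
      intro dd hdd
      have h1 : MvPolynomial.monomial dd (1 : K) ∈ initialIdeal m.ltRel (toricIdeal K a) :=
        Ideal.subset_span ⟨f, hfI, dd, hdd, rfl⟩
      rw [hGB.2.2.1] at h1
      have hset : {m' : MvPolynomial (Fin n) K | ∃ g ∈ G, ∃ β, IsInitialExp m.ltRel g β ∧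
            m' = MvPolynomial.monomial β 1}
          = (fun s => MvPolynomial.monomial s (1 : K)) ''
              {β : Fin n →₀ ℕ | ∃ g ∈ G, IsInitialExp m.ltRel g β} := by
        ext y
        constructor
        · rintro ⟨g, hg, β, hβ, rfl⟩; exact ⟨β, ⟨g, hg, hβ⟩, rfl⟩
        · rintro ⟨β, ⟨g, hg, hβ⟩, rfl⟩; exact ⟨g, hg, β, hβ, rfl⟩
      rw [hset] at h1
      have h2 := MvPolynomial.mem_ideal_span_monomial_image.mp h1 dd (by
        rw [MvPolynomial.support_monomial]
        simp)
      obtain ⟨β, ⟨g, hg, hβ⟩, hle⟩ := h2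
      obtain ⟨β₂, hβ₂, hco⟩ := hGB.2.1 g hg
      have hββ : β₂ = β := initialExp_unique hβ₂ hβ
      exact ⟨g, hg, β, hβ, hββ ▸ hco, hle⟩
    have hane : m.toSyn α ≠ m.toSyn α' := fun hx => hαα' (m.toSyn.injective hx)
    rcases lt_or_gt_of_ne hane with hcmp | hcmp
    · -- initial monomial is x_i x^e  (exponent α')
      obtain ⟨g, hgG, β, hβinit, hβ1, hle⟩ := getg α' (isInitialExp_binomial_right hαα' hcmp)
      by_cases hβj : β j = 0
      · by_cases hβi : β i = 0
        · -- reduce e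
          have hβe : β ≤ e := le_of_le_single_add hle hβi
          obtain ⟨γ, hγlt, hγB⟩ :=
            reduce_step a m g β hβinit hβ1 (hmemI g hgG) e hβe
          exact ihe _ hγlt c γ rfl rfl (by rw [hγB]; exact h)
        · -- β i ≠ 0, β j = 0 : g = x_i x_k - x_j x_l
          obtain ⟨k, l, hgform⟩ := (hH g hgG β hβinit).1 hβi hβj
          rw [X_mul_X_eq, X_mul_X_eq] at hgform
          have hβeq : β = Finsupp.single i 1 + Finsupp.single k 1 := by
            rcases mem_support_binomial (hgform ▸ hβinit.1) with h1 | h1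
            · exact h1
            · exfalso
              rw [h1, Finsupp.add_apply, Finsupp.single_eq_same] at hβj
              omega
          have hke : Finsupp.single k 1 ≤ e := by
            have := hle
            rw [hβeq, hα'] at this
            exact le_of_add_le_add_left this
          have hrel : a i + a k = a j + a l := by
            have hg0 := hmemI g hgG
            rw [hgform, map_sub, piA_monomial, piA_monomial] at hg0
            have h2 := monomial_one_injExp (sub_eq_zero.mp hg0)
            rwa [Bmap_add, Bmap_add, Bmap_single_one, Bmap_single_one, Bmap_single_one,
              Bmap_single_one] at h2
          have hBe : Bmap a e = a k + Bmap a (e - Finsupp.single k 1) := Bmap_sub_single a hke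
          have hBc : Bmap a c = a l + Bmap a (e - Finsupp.single k 1) := by
            apply finsupp_add_left_cancel (x := a j)
            rw [h, hBe, ← add_assoc, ← add_assoc, hrel]
          exact ⟨l, k, e - Finsupp.single k 1, hBc, hrel.symm⟩
      · -- β j ≠ 0 : e j ≥ 1
        have hej : Finsupp.single j 1 ≤ e := by
          rw [Finsupp.single_le_iff]
          have := (Finsupp.le_def.mp hle) j
          rw [hα', Finsupp.add_apply, Finsupp.single_eq_of_ne' hija, zero_add] at this
          omega
        have hBe : Bmap a e = a j + Bmap a (e - Finsupp.single j 1) := Bmap_sub_single a hej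
        have hBc : Bmap a c = a i + Bmap a (e - Finsupp.single j 1) := by
          apply finsupp_add_left_cancel (x := a j)
          rw [h, hBe, add_left_comm]
        exact ⟨i, j, e - Finsupp.single j 1, hBc, add_comm _ _⟩
    · -- initial monomial is x_j x^c  (exponent α)
      obtain ⟨g, hgG, β, hβinit, hβ1, hle⟩ :=
        getg α (isInitialExp_binomial_left (fun hx => hαα' hx.symm) hcmp)
      by_cases hβi : β i = 0
      · by_cases hβj : β j = 0
        · -- reduce c
          have hβc : β ≤ c := le_of_le_single_add hle hβj
          obtain ⟨γ, hγlt, hγB⟩ :=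
            reduce_step a m g β hβinit hβ1 (hmemI g hgG) c hβc
          obtain ⟨l, k, c', h1, h2⟩ := ihc _ hγlt (m.toSyn e) γ e rfl rfl (by rw [hγB]; exact h)
          exact ⟨l, k, c', by rw [← hγB]; exact h1, h2⟩
        · -- β j ≠ 0, β i = 0 : g = x_j x_l - x_i x_k
          obtain ⟨k, l, hgform⟩ := (hH g hgG β hβinit).2 hβj hβi
          rw [X_mul_X_eq, X_mul_X_eq] at hgform
          have hβeq : β = Finsupp.single j 1 + Finsupp.single l 1 := by
            rcases mem_support_binomial (hgform ▸ hβinit.1) with h1 | h1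
            · exact h1
            · exfalso
              rw [h1, Finsupp.add_apply, Finsupp.single_eq_same] at hβi
              omega
          have hlc : Finsupp.single l 1 ≤ c := by
            have := hle
            rw [hβeq, hα] at this
            exact le_of_add_le_add_left this
          have hrel : a j + a l = a i + a k := by
            have hg0 := hmemI g hgG
            rw [hgform, map_sub, piA_monomial, piA_monomial] at hg0
            have h2 := monomial_one_injExp (sub_eq_zero.mp hg0)
            rwa [Bmap_add, Bmap_add, Bmap_single_one, Bmap_single_one, Bmap_single_one,
              Bmap_single_one] at h2
          exact ⟨l, k, c - Finsupp.single l 1, Bmap_sub_single a hlc, hrel⟩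
      · -- β i ≠ 0 : c i ≥ 1
        have hci : Finsupp.single i 1 ≤ c := by
          rw [Finsupp.single_le_iff]
          have := (Finsupp.le_def.mp hle) i
          rw [hα, Finsupp.add_apply, Finsupp.single_eq_of_ne' (Ne.symm hija), zero_add]
            at this
          omega
        exact ⟨i, j, c - Finsupp.single i 1, Bmap_sub_single a hci, add_comm _ _⟩

open MvPolynomial in
lemma toricRing_eq_range (K : Type) [Field K] {n d : ℕ} (a : Fin n → (Fin d →₀ ℕ)) :
    toricRing K a = (piA K a).range := by
  rw [← Algebra.adjoin_range_eq_range_aeval]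
  rfl

open MvPolynomial in
noncomputable def piR (K : Type) [Field K] {n d : ℕ} (a : Fin n → (Fin d →₀ ℕ)) :
    MvPolynomial (Fin n) K →ₐ[K] toricRing K a :=
  AlgHom.codRestrict (piA K a) (toricRing K a) (fun p => by
    rw [toricRing_eq_range]
    exact ⟨p, rfl⟩)

open MvPolynomial in
lemma piR_coe {K : Type} [Field K] {n d : ℕ} (a : Fin n → (Fin d →₀ ℕ))
    (p : MvPolynomial (Fin n) K) :
    (piR K a p : MvPolynomial (Fin d) K) = piA K a p := rfl

open MvPolynomial in
lemma piR_surjective {K : Type} [Field K] {n d : ℕ} (a : Fin n → (Fin d →₀ ℕ)) :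
    Function.Surjective (piR K a) := by
  intro y
  obtain ⟨p, hp⟩ := (toricRing_eq_range K a).le y.2
  exact ⟨p, Subtype.ext hp⟩

open MvPolynomial in
lemma piR_X {K : Type} [Field K] {n d : ℕ} (a : Fin n → (Fin d →₀ ℕ)) (i : Fin n) :
    piR K a (X i) = toricGen K a i :=
  Subtype.ext (by rw [piR_coe]; exact aeval_X _ i)

set_option maxHeartbeats 1000000 in
set_option synthInstance.maxHeartbeats 200000 in
/-- **Lemma 1.1.** Suppose that for each pair `i < j` there is a monomial order `≺`
such that every binomial `g` in the reduced Gröbner basis of the toric ideal `I_A`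
satisfies: (i) if `x_i ∣ in_≺(g)` and `x_j ∤ in_≺(g)` then `g = x_i x_k - x_j x_l`
for some `k, l`; (ii) if `x_j ∣ in_≺(g)` and `x_i ∤ in_≺(g)` then
`g = x_j x_l - x_i x_k` for some `k, l`.  Then `K[A]` is strongly Koszul. -/
theorem reducedGB_binomial_condition_implies_stronglyKoszul
    (K : Type) [Field K] {n d : ℕ} (a : Fin n → (Fin d →₀ ℕ))
    (δ : ℕ) (hdeg : ∀ i, expDeg (a i) = δ) (hinj : Function.Injective a)
    (H : ∀ i j : Fin n, i < j →
      ∃ m : MonomialOrder (Fin n), ∃ G : Finset (MvPolynomial (Fin n) K),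
        IsReducedGB m.ltRel (toricIdeal K a) G ∧
        ∀ g ∈ G, ∀ dd : Fin n →₀ ℕ, IsInitialExp m.ltRel g dd →
          (dd i ≠ 0 → dd j = 0 →
            ∃ k l : Fin n, g = X i * X k - X j * X l) ∧
          (dd j ≠ 0 → dd i = 0 →
            ∃ k l : Fin n, g = X j * X l - X i * X k)) :
    ToricStronglyKoszul K a := by
  classical
  intro r ch hch jj
  set u : Fin n → toricRing K a := toricGen K a with hu
  set N : Ideal (toricRing K a) :=
    Ideal.span ((fun k => u (ch k)) '' {k : Fin r | k < jj}) with hN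
  refine ⟨Set.range u ∩ {s | s * u (ch jj) ∈ N}, Set.inter_subset_left, ?_⟩
  set J : Ideal (MvPolynomial (Fin n) K) :=
    Ideal.span ((fun k => (X (ch k) : MvPolynomial (Fin n) K)) '' {k : Fin r | k < jj}) with hJ
  have hNmap : N = Ideal.map (piR K a) J := by
    rw [hN, hJ, Ideal.map_span, Set.image_image]
    congr 1
    exact Set.image_congr fun k _ => (piR_X a (ch k)).symm
  apply le_antisymm
  · -- colon ≤ span S
    intro x hx
    have hxu : x * u (ch jj) ∈ N := by
      have := Submodule.mem_colon_span_singleton.mp hx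
      rwa [smul_eq_mul] at this
    obtain ⟨p, hp⟩ : ∃ p : MvPolynomial (Fin n) K,
        piA K a p = (x : MvPolynomial (Fin d) K) := by
      exact (toricRing_eq_range K a).le x.2
    obtain ⟨q, hqJ, hq⟩ : ∃ q ∈ J,
        piA K a q = ((x * u (ch jj) : toricRing K a) : MvPolynomial (Fin d) K) := by
      rw [hNmap] at hxu
      obtain ⟨q, hqJ, hqy⟩ := Ideal.mem_map_iff_of_surjective _ (piR_surjective a) |>.mp hxu
      exact ⟨q, hqJ, by rw [← hqy]; rfl⟩
    have hq' : piA K a q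
        = (x : MvPolynomial (Fin d) K) * MvPolynomial.monomial (a (ch jj)) 1 := by
      rw [hq]; rfl
    have key : ∀ b : Fin d →₀ ℕ, ∃ w : toricRing K a,
        w ∈ Ideal.span (Set.range u ∩ {s | s * u (ch jj) ∈ N}) ∧
        (b ∈ (x : MvPolynomial (Fin d) K).support →
          (w : MvPolynomial (Fin d) K) = MvPolynomial.monomial b 1) := by
      intro b
      by_cases hb : b ∈ (x : MvPolynomial (Fin d) K).support
      swap
      · exact ⟨0, Ideal.zero_mem _, fun hx' => absurd hx' hb⟩
      have hcoeffb : MvPolynomial.coeff b (x : MvPolynomial (Fin d) K) ≠ 0 :=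
        MvPolynomial.mem_support_iff.mp hb
      obtain ⟨γ, hγp, hγB⟩ := exists_preimage_exp a (p := p) (b := b)
        (by rw [hp]; exact hcoeffb)
      have h2 : MvPolynomial.coeff (b + a (ch jj)) (piA K a q) ≠ 0 := by
        rw [hq', MvPolynomial.coeff_mul_monomial, mul_one]
        exact hcoeffb
      obtain ⟨ρ, hρq, hρB⟩ := exists_preimage_exp a h2
      obtain ⟨k, hk, hρk⟩ : ∃ k : Fin r, k < jj ∧ ρ (ch k) ≠ 0 := by
        have hq2 : q ∈ Ideal.span
            ((X : Fin n → MvPolynomial (Fin n) K) ''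
              ((fun k : Fin r => ch k) '' {k : Fin r | k < jj})) := by
          rw [Set.image_image]
          exact hqJ
        obtain ⟨ii, hii, hrii⟩ := MvPolynomial.mem_ideal_span_X_image.mp hq2 ρ hρq
        obtain ⟨k, hkT, rfl⟩ := hii
        exact ⟨k, hkT, hrii⟩
      have hsk : Finsupp.single (ch k) 1 ≤ ρ :=
        Finsupp.single_le_iff.mpr (Nat.one_le_iff_ne_zero.mpr hρk)
      have hρsub : Bmap a ρ = a (ch k) + Bmap a (ρ - Finsupp.single (ch k) 1) :=
        Bmap_sub_single a hsk
      obtain ⟨m, G, hGB, hH⟩ := H (ch k) (ch jj) (hch hk)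
      obtain ⟨l, k', c', hBγ, hrel⟩ := keyLemma K a (hch hk) m G hGB hH γ
        (ρ - Finsupp.single (ch k) 1)
        (by rw [← hρsub, hρB, hγB, add_comm])
      refine ⟨u l * piR K a (MvPolynomial.monomial c' 1), ?_, fun _ => ?_⟩
      · refine Ideal.mul_mem_right _ _ (Ideal.subset_span ⟨⟨l, rfl⟩, ?_⟩)
        show u l * u (ch jj) ∈ N
        have heq : u l * u (ch jj) = u k' * u (ch k) := by
          apply Subtype.ext
          show MvPolynomial.monomial (a l) 1 * MvPolynomial.monomial (a (ch jj)) 1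
            = MvPolynomial.monomial (a k') 1 * MvPolynomial.monomial (a (ch k)) 1
          rw [MvPolynomial.monomial_mul, MvPolynomial.monomial_mul, one_mul]
          congr 1
          rw [add_comm (a l), add_comm (a k'), hrel]
        rw [heq]
        exact Ideal.mul_mem_left _ _ (Ideal.subset_span ⟨k, hk, rfl⟩)
      · show ((u l * piR K a (MvPolynomial.monomial c' 1) : toricRing K a) :
            MvPolynomial (Fin d) K) = _
        have hcoe : ((u l * piR K a (MvPolynomial.monomial c' 1) : toricRing K a) :
            MvPolynomial (Fin d) K)
            = MvPolynomial.monomial (a l) 1 * MvPolynomial.monomial (Bmap a c') 1 := by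
          rw [MulMemClass.coe_mul, piR_coe, piA_monomial]
          rfl
        rw [hcoe, MvPolynomial.monomial_mul, one_mul, ← hBγ, hγB]
    choose w hw1 hw2 using key
    have hxsum : x = ∑ b ∈ (x : MvPolynomial (Fin d) K).support,
        algebraMap K (toricRing K a) (MvPolynomial.coeff b (x : MvPolynomial (Fin d) K))
          * w b := by
      apply Subtype.ext
      rw [AddSubmonoidClass.coe_finset_sum]
      conv_lhs => rw [(x : MvPolynomial (Fin d) K).as_sum]
      refine Finset.sum_congr rfl fun b hb => ?_
      rw [MulMemClass.coe_mul, hw2 b hb]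
      have halg : ((algebraMap K (toricRing K a)
          (MvPolynomial.coeff b (x : MvPolynomial (Fin d) K)) : toricRing K a) :
            MvPolynomial (Fin d) K)
          = MvPolynomial.C (MvPolynomial.coeff b (x : MvPolynomial (Fin d) K)) := rfl
      rw [halg, MvPolynomial.C_mul_monomial, mul_one]
    rw [hxsum]
    exact Submodule.sum_mem _ fun b _ => Ideal.mul_mem_left _ _ (hw1 b)
  · -- span S ≤ colon
    rw [Ideal.span_le]
    rintro s ⟨-, hs⟩
    exact Submodule.mem_colon_span_singleton.mpr (by rw [smul_eq_mul]; exact hs)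
end

section
/- Let K be a field and A = {u_1,...,u_n} a set of monomials of the same degree in K[t_1,...,t_d]. Suppose that for each pair 1 ≤ i < j ≤ n there exists an ordering x_{i_1} < x_{i_2} < ⋯ < x_{i_n} of the variables with {i_1, i_2} = {i, j} such that every monomial in G(in_{<_rlex}(I_A)) that is divisible by x_{i_2} is quadratic, where <_rlex is the reverse lexicographic order induced by this ordering. Then the toric ring K[A] is strongly Koszul. -/
/-!
Common definitions: toric ideals/rings of monomial families, strong Koszulness
with respect to a system of algebra generators, initial ideals with respect to
a relation on exponent vectors, (reduced) Gröbner bases, the (graded) reverse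
lexicographic order induced by an ordering of the variables, minimal monomial
generators, and compressedness.
-/

open MvPolynomial

open MvPolynomial

noncomputable section
namespace Aux

variable {n d : ℕ}

abbrev e (i : Fin n) : Fin n →₀ ℕ := Finsupp.single i 1

def Av (a : Fin n → (Fin d →₀ ℕ)) (y : Fin n →₀ ℕ) : Fin d →₀ ℕ := y.sum fun i k => k • a i

theorem Av_zero (a : Fin n → (Fin d →₀ ℕ)) : Av a 0 = 0 := Finsupp.sum_zero_index

theorem Av_add (a : Fin n → (Fin d →₀ ℕ)) (x y : Fin n →₀ ℕ) :
    Av a (x + y) = Av a x + Av a y :=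
  Finsupp.sum_add_index' (fun i => zero_smul ℕ (a i)) (fun i b c => add_smul b c (a i))

theorem Av_single (a : Fin n → (Fin d →₀ ℕ)) (i : Fin n) (k : ℕ) :
    Av a (Finsupp.single i k) = k • a i := by
  classical
  simp [Av, Finsupp.sum_single_index]

theorem Av_e (a : Fin n → (Fin d →₀ ℕ)) (i : Fin n) : Av a (e i) = a i := by
  simp [Av_single]

theorem expDeg_zero : expDeg (0 : Fin n →₀ ℕ) = 0 := Finsupp.sum_zero_index

theorem expDeg_add (x y : Fin n →₀ ℕ) : expDeg (x + y) = expDeg x + expDeg y :=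
  Finsupp.sum_add_index' (fun _ => rfl) (fun _ _ _ => rfl)

theorem expDeg_single (i : Fin n) (k : ℕ) : expDeg (Finsupp.single i k) = k := by
  classical
  simp [expDeg, Finsupp.sum_single_index]

theorem apply_le_expDeg (x : Fin n →₀ ℕ) (i : Fin n) : x i ≤ expDeg x := by
  classical
  by_cases hi : i ∈ x.support
  · exact Finset.single_le_sum (f := fun j => x j) (fun j _ => Nat.zero_le _) hi
  · simp [Finsupp.notMem_support_iff.mp hi]

theorem expDeg_eq_zero {x : Fin n →₀ ℕ} (h : expDeg x = 0) : x = 0 := by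
  classical
  ext i
  have := apply_le_expDeg x i
  simp only [Finsupp.coe_zero, Pi.zero_apply]
  omega

theorem expDeg_nsmul (x : Fin n →₀ ℕ) (b : ℕ) : expDeg (b • x) = b * expDeg x := by
  induction b with
  | zero => simp [expDeg_zero]
  | succ m ihm =>
      rw [succ_nsmul, expDeg_add, ihm]
      ring

theorem expDeg_Av (a : Fin n → (Fin d →₀ ℕ)) {δ : ℕ} (hdeg : ∀ i, expDeg (a i) = δ)
    (y : Fin n →₀ ℕ) : expDeg (Av a y) = expDeg y * δ := by
  classical
  induction y using Finsupp.induction with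
  | zero => simp [Av_zero, expDeg_zero]
  | single_add i b f hi hb ih =>
      rw [Av_add, expDeg_add, Av_single, expDeg_add, expDeg_single, expDeg_nsmul, hdeg, ih]
      ring

theorem expDeg_one {x : Fin n →₀ ℕ} (h : expDeg x = 1) : ∃ k, x = e k := by
  classical
  have hx : x ≠ 0 := by
    intro h0; rw [h0, expDeg_zero] at h; omega
  obtain ⟨k, hk⟩ := Finsupp.ne_iff.mp hx
  simp only [Finsupp.coe_zero, Pi.zero_apply] at hk
  have hk1 : 1 ≤ x k := Nat.one_le_iff_ne_zero.mpr hk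
  refine ⟨k, ?_⟩
  have hle : e k ≤ x := by
    rw [Finsupp.le_def]; intro i
    rw [Finsupp.single_apply]
    by_cases hik : k = i
    · subst hik; simpa using hk1
    · simp [hik]
  have hx2 : e k + (x - e k) = x := add_tsub_cancel_of_le hle
  have hrest : expDeg (x - e k) = 0 := by
    have h2 : expDeg (e k + (x - e k)) = 1 := by rw [hx2, h]
    rw [expDeg_add, expDeg_single] at h2
    omega
  rw [expDeg_eq_zero hrest, add_zero] at hx2
  exact hx2.symm

theorem le_of_one_le {D : Fin n →₀ ℕ} {i : Fin n} (hi : 1 ≤ D i) : e i ≤ D := by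
  rw [Finsupp.le_def]; intro j
  rw [Finsupp.single_apply]
  by_cases hij : i = j
  · subst hij; simpa using hi
  · simp [hij]

theorem expDeg_two_decomp {D : Fin n →₀ ℕ} (h2 : expDeg D = 2) {i : Fin n} (hi : 1 ≤ D i) :
    ∃ k, D = e i + e k := by
  classical
  have hle : e i ≤ D := le_of_one_le hi
  have hsum : e i + (D - e i) = D := add_tsub_cancel_of_le hle
  have h1 : expDeg (D - e i) = 1 := by
    have := congrArg expDeg hsum
    rw [expDeg_add, expDeg_single] at this
    omega
  obtain ⟨k, hk⟩ := expDeg_one h1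
  exact ⟨k, by rw [← hsum, hk]⟩

theorem Av_sub (a : Fin n → (Fin d →₀ ℕ)) {s T : Fin n →₀ ℕ} (h : s ≤ T) :
    Av a T = Av a s + Av a (T - s) := by
  conv_lhs => rw [← add_tsub_cancel_of_le h]
  rw [Av_add]

theorem expDeg_sub {s T : Fin n →₀ ℕ} (h : s ≤ T) :
    expDeg T = expDeg s + expDeg (T - s) := by
  conv_lhs => rw [← add_tsub_cancel_of_le h]
  rw [expDeg_add]

end Aux
end

noncomputable section
set_option synthInstance.maxHeartbeats 1000000
set_option maxHeartbeats 1000000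
namespace Aux
open MvPolynomial
variable {K : Type} [Field K] {n d : ℕ} (a : Fin n → (Fin d →₀ ℕ))

/-- The defining algebra map `π`. -/
abbrev piA : MvPolynomial (Fin n) K →ₐ[K] MvPolynomial (Fin d) K :=
  MvPolynomial.aeval (fun i => (MvPolynomial.monomial (a i) (1 : K)))

theorem mem_toricIdeal_iff (f : MvPolynomial (Fin n) K) :
    f ∈ toricIdeal K a ↔ piA a f = 0 := Iff.rfl

theorem prod_pow_monomial (b : Fin n →₀ ℕ) :
    (b.prod fun i k => (monomial (a i) (1:K)) ^ k) = monomial (Av a b) 1 := by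
  classical
  induction b using Finsupp.induction with
  | zero => simp [Av_zero]
  | single_add i k f hi hk ih =>
      rw [Finsupp.prod_add_index (fun i _ => pow_zero _) (fun i _ b c => pow_add _ b c), ih,
        Av_add, Av_single]
      rw [Finsupp.prod_single_index (h := fun i k => (monomial (a i) (1:K)) ^ k) (pow_zero _), monomial_pow, monomial_mul, one_pow, one_mul]

theorem piA_monomial (b : Fin n →₀ ℕ) (r : K) :
    piA a (monomial b r) = monomial (Av a b) r := by
  rw [aeval_monomial, prod_pow_monomial, algebraMap_eq, C_mul_monomial, mul_one]

theorem binomial_mem_toricIdeal {L R : Fin n →₀ ℕ} (h : Av a L = Av a R) :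
    (monomial L (1:K) - monomial R 1) ∈ toricIdeal K a := by
  rw [mem_toricIdeal_iff, map_sub, piA_monomial, piA_monomial, h, sub_self]

theorem exists_sibling {f : MvPolynomial (Fin n) K} (hf : f ∈ toricIdeal K a)
    {dd : Fin n →₀ ℕ} (hdd : dd ∈ f.support) :
    ∃ c ∈ f.support, c ≠ dd ∧ Av a c = Av a dd := by
  classical
  by_contra hcon
  push_neg at hcon
  have h0 : piA a f = 0 := hf
  have hcoeff : coeff (Av a dd) (piA a f) = coeff dd f := by
    conv_lhs => rw [f.as_sum, map_sum]
    rw [coeff_sum]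
    simp only [piA_monomial, coeff_monomial]
    rw [Finset.sum_eq_single_of_mem dd hdd (fun b hb hbdd => if_neg (hcon b hb hbdd)), if_pos rfl]
  rw [h0] at hcoeff
  simp only [coeff_zero] at hcoeff
  exact (mem_support_iff.mp hdd) hcoeff.symm

theorem monomial_Av_one_mem (y : Fin n →₀ ℕ) :
    (monomial (Av a y) (1:K)) ∈ toricRing K a := by
  classical
  induction y using Finsupp.induction with
  | zero =>
      rw [Av_zero]
      simpa [monomial_zero'] using (toricRing K a).algebraMap_mem 1
  | single_add i k f hi hk ih =>
      rw [Av_add, Av_single, ← one_mul (1:K), ← monomial_mul]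
      have h1 : (monomial (k • a i)) (1:K) = (monomial (a i) (1:K)) ^ k := by
        rw [monomial_pow, one_pow]
      rw [h1]
      exact mul_mem (pow_mem (Algebra.subset_adjoin (Set.mem_range_self i)) k) ih

theorem monomial_Av_mem (y : Fin n →₀ ℕ) (r : K) :
    (monomial (Av a y) r) ∈ toricRing K a := by
  have : monomial (Av a y) r = C r * monomial (Av a y) 1 := by
    rw [C_mul_monomial, mul_one]
  rw [this]
  exact mul_mem ((toricRing K a).algebraMap_mem r) (monomial_Av_one_mem a y)

/-- The membership characterization of the toric ring. -/
theorem mem_toricRing_iff (f : MvPolynomial (Fin d) K) :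
    f ∈ toricRing K a ↔ ∀ σ ∈ f.support, ∃ y, Av a y = σ := by
  classical
  constructor
  · intro hf
    let T : Subalgebra K (MvPolynomial (Fin d) K) :=
      { carrier := {g | ∀ σ ∈ g.support, ∃ y, Av a y = σ}
        mul_mem' := by
          intro p q hp hq σ hσ
          obtain ⟨τ₁, hτ₁, τ₂, hτ₂, rfl⟩ := Finset.mem_add.mp (support_mul p q hσ)
          obtain ⟨y₁, hy₁⟩ := hp τ₁ hτ₁
          obtain ⟨y₂, hy₂⟩ := hq τ₂ hτ₂
          exact ⟨y₁ + y₂, by rw [Av_add, hy₁, hy₂]⟩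
        add_mem' := by
          intro p q hp hq σ hσ
          rcases Finset.mem_union.mp (Finsupp.support_add hσ) with h | h
          · exact hp σ h
          · exact hq σ h
        algebraMap_mem' := by
          intro r σ hσ
          rw [algebraMap_eq] at hσ
          have h0 : σ = 0 := by
            rw [C_apply] at hσ
            exact Finset.mem_singleton.mp (support_monomial_subset hσ)
          exact ⟨0, by rw [Av_zero, h0]⟩ }
    have hle : toricRing K a ≤ T := by
      apply Algebra.adjoin_le
      rintro g ⟨i, rfl⟩
      intro σ hσ
      rcases (Finset.mem_singleton.mp (support_monomial_subset hσ))
      exact ⟨e i, Av_e a i⟩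
    exact hle hf
  · intro hf
    rw [f.as_sum]
    apply sum_mem
    intro σ hσ
    obtain ⟨y, rfl⟩ := hf σ hσ
    exact monomial_Av_mem a y (coeff (Av a y) f)

theorem val_toricGen (i : Fin n) :
    ((toricGen K a i : toricRing K a) : MvPolynomial (Fin d) K) = monomial (a i) 1 := rfl

/-- Membership characterization for the ideal of `K[A]` generated by a set of
the monomial generators. -/
theorem mem_span_gen_iff (T : Set (Fin n)) (x : toricRing K a) :
    x ∈ Ideal.span (toricGen K a '' T) ↔
      ∀ σ ∈ (x : MvPolynomial (Fin d) K).support, ∃ i ∈ T, ∃ y, σ = a i + Av a y := by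
  classical
  constructor
  · intro hx
    refine Submodule.span_induction ?_ ?_ ?_ ?_ hx
    · rintro g ⟨i, hi, rfl⟩ σ hσ
      rcases Finset.mem_singleton.mp (support_monomial_subset hσ)
      exact ⟨i, hi, 0, by rw [Av_zero, add_zero]⟩
    · intro σ hσ
      simp at hσ
    · intro p q hp hq ihp ihq σ hσ
      rcases Finset.mem_union.mp (Finsupp.support_add hσ) with h | h
      · exact ihp σ h
      · exact ihq σ h
    · intro r p hp ihp σ hσ
      have hval : ((r • p : toricRing K a) : MvPolynomial (Fin d) K) = ↑r * ↑p := rfl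
      rw [hval] at hσ
      obtain ⟨τ₁, hτ₁, τ₂, hτ₂, rfl⟩ := Finset.mem_add.mp (support_mul _ _ hσ)
      obtain ⟨yr, hyr⟩ := (mem_toricRing_iff a _).mp r.2 τ₁ hτ₁
      obtain ⟨i, hi, y, hy⟩ := ihp τ₂ hτ₂
      exact ⟨i, hi, y + yr, by rw [hy, Av_add, hyr]; abel⟩
  · intro hx
    have hxmem : ∀ σ ∈ (x : MvPolynomial (Fin d) K).support,
        (monomial σ (coeff σ (x : MvPolynomial (Fin d) K)) : MvPolynomial (Fin d) K)
          ∈ toricRing K a := by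
      intro σ hσ
      rw [mem_toricRing_iff]
      intro τ hτ
      rcases Finset.mem_singleton.mp (support_monomial_subset hτ)
      obtain ⟨i, _, y, hy⟩ := hx σ hσ
      exact ⟨e i + y, by rw [Av_add, Av_e, ← hy]⟩
    have hxeq : x = ∑ σ ∈ (x : MvPolynomial (Fin d) K).support.attach,
        (⟨monomial σ.1 (coeff σ.1 (x : MvPolynomial (Fin d) K)), hxmem σ.1 σ.2⟩ :
          toricRing K a) := by
      apply Subtype.ext
      rw [AddSubmonoidClass.coe_finset_sum]
      simp only []
      rw [Finset.sum_attach _ (fun σ => (monomial σ (coeff σ (x : MvPolynomial (Fin d) K)) :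
        MvPolynomial (Fin d) K))]
      exact (x : MvPolynomial (Fin d) K).as_sum
    rw [hxeq]
    apply Ideal.sum_mem
    rintro ⟨σ, hσ⟩ _
    obtain ⟨i, hi, y, hy⟩ := hx σ hσ
    have heq : (⟨monomial σ (coeff σ (x : MvPolynomial (Fin d) K)), hxmem σ hσ⟩ :
        toricRing K a) =
        (⟨monomial (Av a y) (coeff σ (x : MvPolynomial (Fin d) K)),
          monomial_Av_mem a y _⟩ : toricRing K a) * toricGen K a i := by
      apply Subtype.ext
      show (monomial σ) _ = (monomial (Av a y)) _ * (monomial (a i)) 1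
      rw [monomial_mul, mul_one, hy, add_comm]
    rw [heq]
    exact Ideal.mul_mem_left _ _ (Ideal.subset_span ⟨i, hi, rfl⟩)

/-! ### reverse lexicographic order machinery -/

theorem rlexLT_total (ord : Fin n ≃ Fin n) {x y : Fin n →₀ ℕ} (hxy : x ≠ y)
    (hdeg : expDeg x = expDeg y) : rlexLT ord x y ∨ rlexLT ord y x := by
  classical
  have hne : (Finset.univ.filter (fun p => x (ord p) ≠ y (ord p))).Nonempty := by
    by_contra hcon
    rw [Finset.not_nonempty_iff_eq_empty, Finset.filter_eq_empty_iff] at hcon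
    apply hxy
    ext i
    have := hcon (Finset.mem_univ (ord.symm i))
    simpa using this
  set D := Finset.univ.filter (fun p => x (ord p) ≠ y (ord p))
  set p := D.min' hne with hp
  have hpD : p ∈ D := D.min'_mem hne
  have hpd : x (ord p) ≠ y (ord p) := (Finset.mem_filter.mp hpD).2
  have hagree : ∀ q, q < p → x (ord q) = y (ord q) := by
    intro q hq
    by_contra hcon
    have : q ∈ D := Finset.mem_filter.mpr ⟨Finset.mem_univ q, hcon⟩
    exact absurd (D.min'_le q this) (not_le.mpr hq)
  rcases lt_or_gt_of_ne hpd with h | h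
  · -- x smaller at p ⇒ y is rlex-smaller: rlexLT y x
    exact Or.inr (Or.inr ⟨hdeg.symm, p, h, fun q hq => (hagree q hq).symm⟩)
  · exact Or.inl (Or.inr ⟨hdeg, p, h, hagree⟩)

/-- first coordinate monotonicity: if `c` is rlex-smaller than `s` (same degree),
then `c (ord 0) ≥ s (ord 0)`. -/
theorem rlexLT_apply_zero_le (ord : Fin n ≃ Fin n) {c s : Fin n →₀ ℕ}
    (hp : ∃ p, s (ord p) < c (ord p) ∧ ∀ q, q < p → c (ord q) = s (ord q))
    (p0 : Fin n) (hp0 : (p0 : ℕ) = 0) : s (ord p0) ≤ c (ord p0) := by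
  obtain ⟨p, h1, h2⟩ := hp
  rcases eq_or_ne p p0 with rfl | hne
  · exact le_of_lt h1
  · have : p0 < p := by
      rcases lt_trichotomy p0 p with h | h | h
      · exact h
      · exact absurd h hne.symm
      · exact absurd (by omega : (p:ℕ) < 0) (by omega)
    rw [h2 p0 this]

/-- The numeric measure of an exponent vector for the ordering `ord`, base `B`. -/
def mu (B : ℕ) (ord : Fin n ≃ Fin n) (x : Fin n →₀ ℕ) : ℕ :=
  ∑ p : Fin n, x (ord p) * B ^ ((Fin.rev p : Fin n) : ℕ)

theorem geo_aux (B : ℕ) (hB : 1 ≤ B) : ∀ m : ℕ,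
    (B - 1) * (∑ j ∈ Finset.range m, B ^ j) + 1 = B ^ m := by
  intro m
  induction m with
  | zero => simp
  | succ m ih =>
      calc (B - 1) * (∑ j ∈ Finset.range (m+1), B ^ j) + 1
          = ((B - 1) * (∑ j ∈ Finset.range m, B ^ j) + 1) + (B - 1) * B ^ m := by
            rw [Finset.sum_range_succ]; ring
        _ = B ^ m + (B - 1) * B ^ m := by rw [ih]
        _ = (1 + (B - 1)) * B ^ m := by ring
        _ = B * B ^ m := by rw [Nat.add_sub_cancel' hB]
        _ = B ^ (m + 1) := by rw [pow_succ]; ring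

theorem mu_lt_pow {B : ℕ} (ord : Fin n ≃ Fin n) {x : Fin n →₀ ℕ}
    (hx : ∀ i, x i < B) : mu B ord x < B ^ n := by
  classical
  rcases Nat.eq_zero_or_pos n with rfl | hn
  · simp [mu]
  have hB : 1 ≤ B := Nat.lt_of_le_of_lt (Nat.zero_le _) (hx (ord ⟨0, hn⟩))
  have h1 : mu B ord x ≤ ∑ p : Fin n, (B - 1) * B ^ ((Fin.rev p : Fin n) : ℕ) := by
    apply Finset.sum_le_sum
    intro p _
    exact Nat.mul_le_mul_right _ (Nat.le_sub_one_of_lt (hx (ord p)))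
  have h2 : ∑ p : Fin n, (B - 1) * B ^ ((Fin.rev p : Fin n) : ℕ)
      = (B - 1) * ∑ j ∈ Finset.range n, B ^ j := by
    rw [← Finset.mul_sum]
    congr 1
    rw [Fintype.sum_bijective Fin.rev Fin.rev_bijective _ (fun q : Fin n => B ^ (q : ℕ))
      (fun q => rfl)]
    exact Fin.sum_univ_eq_sum_range (fun j => B ^ j) n
  have := geo_aux B hB n
  omega

/-- The crucial measure inequality: if `x` and `y` agree strictly below `p` and
`y (ord p) < x (ord p)`, with all entries `< B`, then `mu B ord y < mu B ord x`. -/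
theorem mu_lt_mu {B : ℕ} (ord : Fin n ≃ Fin n) {x y : Fin n →₀ ℕ}
    (hxB : ∀ i, x i < B) (hyB : ∀ i, y i < B) {p : Fin n}
    (hp : y (ord p) < x (ord p)) (hagree : ∀ q, q < p → x (ord q) = y (ord q)) :
    mu B ord y < mu B ord x := by
  classical
  have hB : 1 ≤ B := Nat.lt_of_le_of_lt (Nat.zero_le _) (hxB (ord p))
  -- split the sum at p
  have hsplit : ∀ z : Fin n →₀ ℕ, mu B ord z =
      (∑ q ∈ Finset.univ.filter (fun q => q < p), z (ord q) * B ^ ((Fin.rev q : Fin n) : ℕ))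
      + z (ord p) * B ^ ((Fin.rev p : Fin n) : ℕ)
      + (∑ q ∈ Finset.univ.filter (fun q => p < q), z (ord q) * B ^ ((Fin.rev q : Fin n) : ℕ)) := by
    intro z
    rw [mu]
    rw [← Finset.sum_filter_add_sum_filter_not Finset.univ (fun q => q < p)]
    have : Finset.univ.filter (fun q => ¬ q < p)
        = insert p (Finset.univ.filter (fun q => p < q)) := by
      ext q
      simp only [Finset.mem_filter, Finset.mem_univ, true_and, Finset.mem_insert, not_lt]
      constructor
      · intro h
        rcases eq_or_lt_of_le h with h' | h'
        · exact Or.inl h'.symm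
        · exact Or.inr h'
      · rintro (rfl | h)
        · exact le_refl _
        · exact le_of_lt h
    rw [this, Finset.sum_insert (by simp), ← add_assoc]
  rw [hsplit x, hsplit y]
  have hpre : (∑ q ∈ Finset.univ.filter (fun q => q < p), y (ord q) * B ^ ((Fin.rev q : Fin n) : ℕ))
      = (∑ q ∈ Finset.univ.filter (fun q => q < p), x (ord q) * B ^ ((Fin.rev q : Fin n) : ℕ)) := by
    apply Finset.sum_congr rfl
    intro q hq
    rw [hagree q (Finset.mem_filter.mp hq).2]
  rw [hpre]
  have htail : (∑ q ∈ Finset.univ.filter (fun q => p < q), y (ord q) * B ^ ((Fin.rev q : Fin n) : ℕ))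
      < B ^ ((Fin.rev p : Fin n) : ℕ) := by
    have hle : (∑ q ∈ Finset.univ.filter (fun q => p < q), y (ord q) * B ^ ((Fin.rev q : Fin n) : ℕ))
        ≤ ∑ q ∈ Finset.univ.filter (fun q => p < q), (B - 1) * B ^ ((Fin.rev q : Fin n) : ℕ) :=
      Finset.sum_le_sum fun q _ => Nat.mul_le_mul_right _ (Nat.le_sub_one_of_lt (hyB (ord q)))
    have himg : (∑ q ∈ Finset.univ.filter (fun q => p < q), (B - 1) * B ^ ((Fin.rev q : Fin n) : ℕ))
        = ∑ j ∈ (Finset.univ.filter (fun q => p < q)).image (fun q : Fin n => ((Fin.rev q : Fin n) : ℕ)),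
            (B - 1) * B ^ j := by
      rw [Finset.sum_image]
      intro q₁ _ q₂ _ h
      have : (Fin.rev q₁ : Fin n) = Fin.rev q₂ := Fin.val_injective h
      simpa using congrArg Fin.rev this
    have hsub : (Finset.univ.filter (fun q => p < q)).image (fun q : Fin n => ((Fin.rev q : Fin n) : ℕ))
        ⊆ Finset.range ((Fin.rev p : Fin n) : ℕ) := by
      intro j hj
      obtain ⟨q, hq, rfl⟩ := Finset.mem_image.mp hj
      rw [Finset.mem_range]
      have : Fin.rev q < Fin.rev p := Fin.rev_lt_rev.mpr (Finset.mem_filter.mp hq).2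
      exact this
    have hle2 : (∑ j ∈ (Finset.univ.filter (fun q => p < q)).image (fun q : Fin n => ((Fin.rev q : Fin n) : ℕ)),
            (B - 1) * B ^ j) ≤ ∑ j ∈ Finset.range ((Fin.rev p : Fin n) : ℕ), (B - 1) * B ^ j :=
      Finset.sum_le_sum_of_subset hsub
    have := geo_aux B hB ((Fin.rev p : Fin n) : ℕ)
    rw [Finset.mul_sum] at this
    omega
  have hmid : y (ord p) * B ^ ((Fin.rev p : Fin n) : ℕ) + B ^ ((Fin.rev p : Fin n) : ℕ)
      ≤ x (ord p) * B ^ ((Fin.rev p : Fin n) : ℕ) := by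
    have : (y (ord p) + 1) * B ^ ((Fin.rev p : Fin n) : ℕ) ≤ x (ord p) * B ^ ((Fin.rev p : Fin n) : ℕ) :=
      Nat.mul_le_mul_right _ hp
    calc y (ord p) * B ^ ((Fin.rev p : Fin n) : ℕ) + B ^ ((Fin.rev p : Fin n) : ℕ)
        = (y (ord p) + 1) * B ^ ((Fin.rev p : Fin n) : ℕ) := by ring
      _ ≤ _ := this
  omega

/-! ### initial ideal machinery -/

theorem support_binomial {L R : Fin n →₀ ℕ} (hne : L ≠ R) {d' : Fin n →₀ ℕ}
    (hd' : d' ∈ (monomial L (1:K) - monomial R 1).support) : d' = L ∨ d' = R := by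
  classical
  rcases Finset.mem_union.mp (support_sub (Fin n) (monomial L (1:K)) (monomial R 1) hd') with h | h
  · exact Or.inl (Finset.mem_singleton.mp (support_monomial_subset h))
  · exact Or.inr (Finset.mem_singleton.mp (support_monomial_subset h))

theorem binomial_isInitialExp (ord : Fin n ≃ Fin n) {L R : Fin n →₀ ℕ} (hne : L ≠ R)
    (hlt : rlexLT ord R L) :
    IsInitialExp (rlexLT ord) (monomial L (1:K) - monomial R 1) L := by
  classical
  constructor
  · rw [mem_support_iff, coeff_sub, coeff_monomial, coeff_monomial, if_pos rfl,
      if_neg (Ne.symm hne)]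
    simp
  · intro d' hd' hdne
    rcases support_binomial hne hd' with rfl | rfl
    · exact absurd rfl hdne
    · exact hlt

theorem monomial_mem_initialIdeal (ord : Fin n ≃ Fin n) {L R : Fin n →₀ ℕ}
    (hAv : Av a L = Av a R) (hne : L ≠ R) (hlt : rlexLT ord R L) :
    monomial L (1:K) ∈ initialIdeal (rlexLT ord) (toricIdeal K a) :=
  Ideal.subset_span ⟨monomial L (1:K) - monomial R 1, binomial_mem_toricIdeal a hAv, L,
    binomial_isInitialExp ord hne hlt, rfl⟩

theorem initialIdeal_eq_span_image (lt : (Fin n →₀ ℕ) → (Fin n →₀ ℕ) → Prop)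
    (I : Ideal (MvPolynomial (Fin n) K)) :
    initialIdeal lt I =
      Ideal.span ((fun s => monomial s (1:K)) '' {dd | ∃ f ∈ I, IsInitialExp lt f dd}) := by
  unfold initialIdeal
  congr 1
  ext m
  constructor
  · rintro ⟨f, hf, dd, hdd, rfl⟩
    exact ⟨dd, ⟨f, hf, hdd⟩, rfl⟩
  · rintro ⟨dd, ⟨f, hf, hdd⟩, rfl⟩
    exact ⟨f, hf, dd, hdd, rfl⟩

theorem exists_minGen (lt : (Fin n →₀ ℕ) → (Fin n →₀ ℕ) → Prop)
    (I : Ideal (MvPolynomial (Fin n) K)) :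
    ∀ (s : Fin n →₀ ℕ), monomial s (1:K) ∈ initialIdeal lt I →
      ∃ dd, IsMinGen (initialIdeal lt I) dd ∧ dd ≤ s := by
  classical
  suffices H : ∀ (m : ℕ) (s : Fin n →₀ ℕ), expDeg s = m →
      monomial s (1:K) ∈ initialIdeal lt I →
      ∃ dd, IsMinGen (initialIdeal lt I) dd ∧ dd ≤ s by
    intro s hs; exact H (expDeg s) s rfl hs
  intro m
  induction m using Nat.strong_induction_on with
  | _ m ih =>
      intro s hsm hs
      by_cases hmin : ∀ d' : Fin n →₀ ℕ, d' ≤ s → d' ≠ s → monomial d' (1:K) ∉ initialIdeal lt I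
      · exact ⟨s, ⟨hs, hmin⟩, le_refl s⟩
      · push_neg at hmin
        obtain ⟨d', hle, hne, hd'⟩ := hmin
        have hlt : expDeg d' < m := by
          have h1 := expDeg_sub hle
          have h2 : s - d' ≠ 0 := by
            intro h0
            apply hne
            have := add_tsub_cancel_of_le hle
            rw [h0, add_zero] at this
            exact this
          have h3 : 1 ≤ expDeg (s - d') := by
            rcases Nat.eq_zero_or_pos (expDeg (s - d')) with h | h
            · exact absurd (expDeg_eq_zero h) h2
            · exact h
          omega
        obtain ⟨dd, hdd, hdd'⟩ := ih (expDeg d') hlt d' rfl hd'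
        exact ⟨dd, hdd, le_trans hdd' hle⟩

theorem minGen_initialExp (lt : (Fin n →₀ ℕ) → (Fin n →₀ ℕ) → Prop)
    {dd : Fin n →₀ ℕ} (h : IsMinGen (initialIdeal lt (toricIdeal K a)) dd) :
    ∃ f ∈ toricIdeal K a, IsInitialExp lt f dd := by
  classical
  have h1 := h.1
  rw [initialIdeal_eq_span_image, mem_ideal_span_monomial_image] at h1
  have h2 := h1 dd (by
    rw [mem_support_iff, coeff_monomial, if_pos rfl]; exact one_ne_zero)
  obtain ⟨si, hsi, hle⟩ := h2
  have hmem : monomial si (1:K) ∈ initialIdeal lt (toricIdeal K a) := by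
    rw [initialIdeal_eq_span_image]
    exact Ideal.subset_span ⟨si, hsi, rfl⟩
  have : si = dd := by
    by_contra hne
    exact h.2 si hle hne hmem
  rw [← this]
  exact hsi

/-- reduction data: every minimal generator of the initial ideal has a
rlex-smaller sibling representing the same element of the semigroup. -/
theorem sibling_of_minGen (ord : Fin n ≃ Fin n) {dd : Fin n →₀ ℕ}
    (h : IsMinGen (initialIdeal (rlexLT ord) (toricIdeal K a)) dd) :
    ∃ c, c ≠ dd ∧ rlexLT ord c dd ∧ Av a c = Av a dd := by
  obtain ⟨f, hf, hinit⟩ := minGen_initialExp a (rlexLT ord) h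
  obtain ⟨c, hc, hcne, hAv⟩ := exists_sibling a hf hinit.1
  exact ⟨c, hcne, hinit.2 c hc hcne, hAv⟩

/-! ### the key combinatorial lemma -/

section Core

variable {δ : ℕ} (hdeg : ∀ i, expDeg (a i) = δ) (hδ : 1 ≤ δ) (hinj : Function.Injective a)
variable (ord : Fin n ≃ Fin n) (v w : Fin n)
variable (hv : ((ord.symm v : Fin n) : ℕ) = 0) (hw : ((ord.symm w : Fin n) : ℕ) = 1)

include hdeg hδ in
theorem expDeg_eq_of_Av_eq {x y : Fin n →₀ ℕ} (h : Av a x = Av a y) :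
    expDeg x = expDeg y := by
  have h1 := expDeg_Av a hdeg x
  have h2 := expDeg_Av a hdeg y
  rw [h] at h1
  have := h1.symm.trans h2
  exact Nat.eq_of_mul_eq_mul_right hδ this

include hdeg hδ hinj hv hw in
/-- If a quadratic `dd' = e w + e k` has a rlex-smaller sibling `c` with the same
image in the semigroup, then `c` must contain the variable `v`. -/
theorem sibling_hits_v {k : Fin n} {c : Fin n →₀ ℕ} (hcne : c ≠ e w + e k)
    (hrl : rlexLT ord c (e w + e k)) (hAvc : Av a c = Av a (e w + e k)) :
    ∃ β, c = e v + e β ∧ a w + a k = a v + a β := by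
  classical
  have hvw : v ≠ w := by
    intro h
    rw [h] at hv
    omega
  have hdd2 : expDeg (e w + e k) = 2 := by
    rw [expDeg_add, expDeg_single, expDeg_single]
  have hc2 : expDeg c = 2 := by
    rw [expDeg_eq_of_Av_eq a hdeg hδ hAvc, hdd2]
  have hAvdd : Av a (e w + e k) = a w + a k := by rw [Av_add, Av_e, Av_e]
  have hcv : 1 ≤ c v := by
    by_contra hcon
    have hcv0 : c v = 0 := by omega
    rcases hrl with hlt | ⟨_, p, hp1, hp2⟩
    · omega
    · -- case analysis on the position p
      have hpv : (ord.symm v : ℕ) < (p : ℕ) → c v = (e w + e k) v := by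
        intro hlt
        have := hp2 (ord.symm v) (by rw [Fin.lt_def]; exact hlt)
        rwa [Equiv.apply_symm_apply] at this
      have hpw : (ord.symm w : ℕ) < (p : ℕ) → c w = (e w + e k) w := by
        intro hlt
        have := hp2 (ord.symm w) (by rw [Fin.lt_def]; exact hlt)
        rwa [Equiv.apply_symm_apply] at this
      rcases Nat.lt_or_ge (p : ℕ) 1 with hp0 | hp1'
      · -- p is the position of v
        have : p = ord.symm v := by
          apply Fin.ext
          omega
        rw [this, Equiv.apply_symm_apply] at hp1
        omega
      rcases Nat.lt_or_ge (p : ℕ) 2 with hp0 | hp2'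
      · -- p is the position of w
        have hpeq : p = ord.symm w := by
          apply Fin.ext
          omega
        rw [hpeq, Equiv.apply_symm_apply] at hp1
        have hddw : (e w + e k) w = 1 + (e k) w := by
          rw [Finsupp.add_apply, Finsupp.single_eq_same]
        have hcw_le : c w ≤ 2 := by
          have := apply_le_expDeg c w
          omega
        by_cases hkw : k = w
        · subst hkw
          rw [hddw, Finsupp.single_eq_same] at hp1
          omega
        · have hekw : (e k) w = 0 := Finsupp.single_eq_of_ne' hkw
          rw [hddw, hekw] at hp1
          have hcw2 : c w = 2 := by omega
          obtain ⟨γ, hγ⟩ := expDeg_two_decomp hc2 (i := w) (by omega)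
          have hγw : γ = w := by
            by_contra hγw
            have : c w = 1 := by
              rw [hγ, Finsupp.add_apply, Finsupp.single_eq_same,
                Finsupp.single_eq_of_ne' hγw]
              omega
            omega
          rw [hγ, hγw] at hAvc
          simp only [Av_add, Av_e] at hAvc
          have : a w = a k := add_left_cancel hAvc
          exact hkw (hinj this.symm)
      · -- p beyond both v and w positions
        have hcweq : c w = (e w + e k) w := hpw (by omega)
        have hcw1 : 1 ≤ c w := by
          rw [hcweq, Finsupp.add_apply, Finsupp.single_eq_same]
          omega
        obtain ⟨γ, hγ⟩ := expDeg_two_decomp hc2 (i := w) hcw1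
        rw [hγ] at hAvc
        simp only [Av_add, Av_e] at hAvc
        have : a γ = a k := add_left_cancel hAvc
        have : γ = k := hinj this
        rw [this] at hγ
        exact hcne hγ
  obtain ⟨β, hβ⟩ := expDeg_two_decomp hc2 (i := v) hcv
  refine ⟨β, hβ, ?_⟩
  rw [hβ] at hAvc
  simp only [Av_add, Av_e] at hAvc
  exact hAvc.symm

include hdeg hδ hinj hv hw in
/-- The core combinatorial claim. -/
theorem core_claim
    (hq : ∀ dd : Fin n →₀ ℕ,
      IsMinGen (initialIdeal (rlexLT ord) (toricIdeal K a)) dd → dd w ≠ 0 → expDeg dd = 2) :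
    ∀ (N M : ℕ) (L R : Fin n →₀ ℕ) (g h : Fin n),
      ((g = v ∧ h = w) ∨ (g = w ∧ h = v)) →
      expDeg L = M →
      2 * (M+1)^n - (mu (M+1) ord L + mu (M+1) ord R) ≤ N →
      Av a L = Av a R → 1 ≤ L g → 1 ≤ R h →
      ∃ k, (∃ z', a k + a g = a h + Av a z') ∧ (∃ y', Av a L = a g + a k + Av a y') := by
  classical
  have hvw : v ≠ w := by
    intro hh
    rw [hh] at hv
    omega
  intro N
  induction N with
  | zero =>
      intro M L R g h hgh hM hNle hAv hLg hRh
      exfalso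
      have hMR : expDeg R = M := by rw [← (expDeg_eq_of_Av_eq a hdeg hδ hAv), hM]
      have hLB : ∀ i, L i < M + 1 := fun i => by have := apply_le_expDeg L i; omega
      have hRB : ∀ i, R i < M + 1 := fun i => by have := apply_le_expDeg R i; omega
      have h1 := mu_lt_pow ord hLB
      have h2 := mu_lt_pow ord hRB
      omega
  | succ N ih =>
      intro M L R g h hgh hM hNle hAv hLg hRh
      have hMR : expDeg R = M := by rw [← (expDeg_eq_of_Av_eq a hdeg hδ hAv), hM]
      have hLB : ∀ i, L i < M + 1 := fun i => by have := apply_le_expDeg L i; omega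
      have hRB : ∀ i, R i < M + 1 := fun i => by have := apply_le_expDeg R i; omega
      have hmuL : mu (M+1) ord L < (M+1)^n := mu_lt_pow ord hLB
      have hmuR : mu (M+1) ord R < (M+1)^n := mu_lt_pow ord hRB
      have hgne : g ≠ h := by
        rcases hgh with ⟨rfl, rfl⟩ | ⟨rfl, rfl⟩
        · exact hvw
        · exact hvw.symm
      by_cases hLh : 1 ≤ L h
      · -- the trivial case: `h` already occurs in `L`
        have hle : e g + e h ≤ L := by
          rw [Finsupp.le_def]
          intro i
          rw [Finsupp.add_apply]
          rcases eq_or_ne g i with rfl | hgi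
          · rw [Finsupp.single_eq_same, Finsupp.single_eq_of_ne' (Ne.symm hgne)]
            omega
          · rcases eq_or_ne h i with rfl | hhi
            · rw [Finsupp.single_eq_of_ne' hgi, Finsupp.single_eq_same]
              omega
            · rw [Finsupp.single_eq_of_ne' hgi, Finsupp.single_eq_of_ne' hhi]
              omega
        refine ⟨h, ⟨e g, ?_⟩, ⟨L - (e g + e h), ?_⟩⟩
        · rw [Av_e, add_comm]
        · rw [Av_sub a hle, Av_add, Av_e, Av_e]
      · have hLh0 : L h = 0 := by omega
        have hLRne : L ≠ R := by
          intro hh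
          rw [hh] at hLh0
          omega
        have hdegLR : expDeg L = expDeg R := by rw [hM, hMR]
        rcases rlexLT_total ord hLRne hdegLR with hLsmall | hRsmall
        · -- the initial monomial is `R`
          have hmemR : monomial R (1:K) ∈ initialIdeal (rlexLT ord) (toricIdeal K a) :=
            monomial_mem_initialIdeal a ord hAv.symm hLRne.symm hLsmall
          obtain ⟨dd', hmin, hddle⟩ := exists_minGen (rlexLT ord) (toricIdeal K a) R hmemR
          obtain ⟨c, hcne, hcrl, hcAv⟩ := sibling_of_minGen a ord hmin
          have hddRle : ∀ i, dd' i ≤ R i := Finsupp.le_def.mp hddle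
          by_cases hddw : dd' w = 0
          · -- reduction step on `R`
            set R' := R - dd' + c with hR'
            have hAvR' : Av a R' = Av a R := by
              rw [hR', Av_add, hcAv, add_comm, ← Av_sub a hddle]
            have hdegc : expDeg c = expDeg dd' := expDeg_eq_of_Av_eq a hdeg hδ hcAv
            have hdegR' : expDeg R' = M := by
              rw [hR', expDeg_add, hdegc, add_comm, ← expDeg_sub hddle, hMR]
            have hpex : ∃ p, dd' (ord p) < c (ord p) ∧ ∀ q, q < p → c (ord q) = dd' (ord q) := by
              rcases hcrl with hlt | ⟨_, p, hp1, hp2⟩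
              · omega
              · exact ⟨p, hp1, hp2⟩
            obtain ⟨p, hp1, hp2⟩ := hpex
            have happly : ∀ i, R' i = R i - dd' i + c i := fun i => by
              rw [hR', Finsupp.add_apply, Finsupp.tsub_apply]
            have hagree : ∀ q, q < p → R' (ord q) = R (ord q) := fun q hq => by
              rw [happly, hp2 q hq]
              have := hddRle (ord q)
              omega
            have hppt : R (ord p) < R' (ord p) := by
              rw [happly]
              have := hddRle (ord p)
              omega
            have hR'B : ∀ i, R' i < M + 1 := fun i => by
              have := apply_le_expDeg R' i
              omega
            have hmuR' : mu (M+1) ord R < mu (M+1) ord R' := mu_lt_mu ord hR'B hRB hppt hagree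
            have hmuR'2 : mu (M+1) ord R' < (M+1)^n := mu_lt_pow ord hR'B
            have hcv' : dd' v ≤ c v := by
              have := rlexLT_apply_zero_le ord ⟨p, hp1, hp2⟩ (ord.symm v) hv
              rwa [Equiv.apply_symm_apply] at this
            have hR'v : R v ≤ R' v := by
              rw [happly]
              have := hddRle v
              omega
            have hR'w : R w ≤ R' w := by
              rw [happly]
              have := hddRle w
              omega
            have hR'h : 1 ≤ R' h := by
              rcases hgh with ⟨_, rfl⟩ | ⟨_, rfl⟩
              · omega
              · omega
            exact ih M L R' g h hgh hM (by omega) (hAv.trans hAvR'.symm) hLg hR'h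
          · -- quadratic minimal generator at `R`
            have hdd2 : expDeg dd' = 2 := hq dd' hmin hddw
            have hddw1 : 1 ≤ dd' w := Nat.one_le_iff_ne_zero.mpr hddw
            obtain ⟨k, hk⟩ := expDeg_two_decomp hdd2 (i := w) hddw1
            obtain ⟨β, hβ, hrel⟩ := sibling_hits_v a hdeg hδ hinj ord v w hv hw (k := k)
              (c := c) (hk ▸ hcne) (hk ▸ hcrl) (hk ▸ hcAv)
            have hsecond : Av a L = a w + a k + Av a (R - dd') := by
              rw [hAv, Av_sub a hddle, hk, Av_add, Av_e, Av_e]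
            rcases hgh with ⟨rfl, rfl⟩ | ⟨rfl, rfl⟩
            · -- g = v, h = w
              refine ⟨β, ⟨e k, ?_⟩, ⟨R - dd', ?_⟩⟩
              · rw [Av_e, hrel]
                exact add_comm _ _
              · rw [hsecond, hrel]
            · -- g = w, h = v
              refine ⟨k, ⟨e β, ?_⟩, ⟨R - dd', ?_⟩⟩
              · rw [Av_e, ← hrel]
                exact add_comm _ _
              · exact hsecond
        · -- the initial monomial is `L`
          have hmemL : monomial L (1:K) ∈ initialIdeal (rlexLT ord) (toricIdeal K a) :=
            monomial_mem_initialIdeal a ord hAv hLRne hRsmall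
          obtain ⟨dd', hmin, hddle⟩ := exists_minGen (rlexLT ord) (toricIdeal K a) L hmemL
          obtain ⟨c, hcne, hcrl, hcAv⟩ := sibling_of_minGen a ord hmin
          have hddLle : ∀ i, dd' i ≤ L i := Finsupp.le_def.mp hddle
          by_cases hddw : dd' w = 0
          · -- reduction step on `L`
            set L' := L - dd' + c with hL'
            have hAvL' : Av a L' = Av a L := by
              rw [hL', Av_add, hcAv, add_comm, ← Av_sub a hddle]
            have hdegc : expDeg c = expDeg dd' := expDeg_eq_of_Av_eq a hdeg hδ hcAv
            have hdegL' : expDeg L' = M := by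
              rw [hL', expDeg_add, hdegc, add_comm, ← expDeg_sub hddle, hM]
            have hpex : ∃ p, dd' (ord p) < c (ord p) ∧ ∀ q, q < p → c (ord q) = dd' (ord q) := by
              rcases hcrl with hlt | ⟨_, p, hp1, hp2⟩
              · omega
              · exact ⟨p, hp1, hp2⟩
            obtain ⟨p, hp1, hp2⟩ := hpex
            have happly : ∀ i, L' i = L i - dd' i + c i := fun i => by
              rw [hL', Finsupp.add_apply, Finsupp.tsub_apply]
            have hagree : ∀ q, q < p → L' (ord q) = L (ord q) := fun q hq => by
              rw [happly, hp2 q hq]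
              have := hddLle (ord q)
              omega
            have hppt : L (ord p) < L' (ord p) := by
              rw [happly]
              have := hddLle (ord p)
              omega
            have hL'B : ∀ i, L' i < M + 1 := fun i => by
              have := apply_le_expDeg L' i
              omega
            have hmuL' : mu (M+1) ord L < mu (M+1) ord L' := mu_lt_mu ord hL'B hLB hppt hagree
            have hmuL'2 : mu (M+1) ord L' < (M+1)^n := mu_lt_pow ord hL'B
            have hcv' : dd' v ≤ c v := by
              have := rlexLT_apply_zero_le ord ⟨p, hp1, hp2⟩ (ord.symm v) hv
              rwa [Equiv.apply_symm_apply] at this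
            have hL'v : L v ≤ L' v := by
              rw [happly]
              have := hddLle v
              omega
            have hL'w : L w ≤ L' w := by
              rw [happly]
              have := hddLle w
              omega
            have hL'g : 1 ≤ L' g := by
              rcases hgh with ⟨rfl, _⟩ | ⟨rfl, _⟩
              · omega
              · omega
            obtain ⟨k, hk1, y', hy'⟩ := ih M L' R g h hgh hdegL' (by omega)
              (hAvL'.trans hAv) hL'g hRh
            exact ⟨k, hk1, ⟨y', by rw [← hAvL']; exact hy'⟩⟩
          · -- quadratic minimal generator at `L`
            have hdd2 : expDeg dd' = 2 := hq dd' hmin hddw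
            have hddw1 : 1 ≤ dd' w := Nat.one_le_iff_ne_zero.mpr hddw
            obtain ⟨k, hk⟩ := expDeg_two_decomp hdd2 (i := w) hddw1
            obtain ⟨β, hβ, hrel⟩ := sibling_hits_v a hdeg hδ hinj ord v w hv hw (k := k)
              (c := c) (hk ▸ hcne) (hk ▸ hcrl) (hk ▸ hcAv)
            have hLw : 1 ≤ L w := le_trans hddw1 (hddLle w)
            rcases hgh with ⟨rfl, rfl⟩ | ⟨rfl, rfl⟩
            · exact absurd hLh0 (by omega)
            · refine ⟨k, ⟨e β, ?_⟩, ⟨L - dd', ?_⟩⟩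
              · rw [Av_e, ← hrel]
                exact add_comm _ _
              · rw [Av_sub a hddle, hk, Av_add, Av_e, Av_e]

end Core

end Aux

end

noncomputable section
namespace Aux
open MvPolynomial


theorem main_aux
    (K : Type) [Field K] {n d : ℕ} (a : Fin n → (Fin d →₀ ℕ))
    (δ : ℕ) (hdeg : ∀ i, expDeg (a i) = δ) (hinj : Function.Injective a)
    (H : ∀ i j : Fin n, i < j →
      ∃ ord : Fin n ≃ Fin n, ∃ v w : Fin n,
        ({v, w} : Set (Fin n)) = {i, j} ∧
        (ord.symm v : ℕ) = 0 ∧ (ord.symm w : ℕ) = 1 ∧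
        ∀ dd : Fin n →₀ ℕ,
          IsMinGen (initialIdeal (rlexLT ord) (toricIdeal K a)) dd →
          dd w ≠ 0 → expDeg dd = 2) :
    ToricStronglyKoszul K a := by
  classical
  intro r c hc j
  set u : Fin n → toricRing K a := toricGen K a with hu
  set Good : Set (Fin n) :=
    {k | u k ∈ Submodule.colon (Ideal.span ((fun k => u (c k)) '' {k : Fin r | k < j}))
      (Ideal.span {u (c j)})} with hGood
  refine ⟨u '' Good, ?_, ?_⟩
  · rintro x ⟨k, _, rfl⟩
    exact ⟨k, rfl⟩
  have hJ : Ideal.span ((fun k => u (c k)) '' {k : Fin r | k < j})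
      = Ideal.span (u '' (c '' {k : Fin r | k < j})) := by
    rw [Set.image_image]
  apply le_antisymm
  · intro x hx
    rw [mem_span_gen_iff]
    intro σ hσ
    -- `x * u (c j)` lies in the ideal generated by the previous generators
    have hxu : x * u (c j) ∈ Ideal.span ((fun k => u (c k)) '' {k : Fin r | k < j}) := by
      have := Ideal.mem_colon_span_singleton.mp hx
      exact this
    rw [hJ, hu] at hxu
    have hσ' : σ + a (c j) ∈
        ((x * u (c j) : toricRing K a) : MvPolynomial (Fin d) K).support := by
      have hval : ((x * u (c j) : toricRing K a) : MvPolynomial (Fin d) K)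
          = (x : MvPolynomial (Fin d) K) * monomial (a (c j)) 1 := rfl
      rw [hval, mem_support_iff, coeff_mul_monomial, mul_one]
      exact mem_support_iff.mp hσ
    obtain ⟨i, hiT, z, hz⟩ := (mem_span_gen_iff a _ _).mp hxu (σ + a (c j)) hσ'
    obtain ⟨l, hl, rfl⟩ := hiT
    have hlj : c l < c j := hc hl
    have hclj : c l ≠ c j := ne_of_lt hlj
    have hδ1 : 1 ≤ δ := by
      by_contra hδ0
      have hδ0 : δ = 0 := by omega
      apply hclj
      apply hinj
      have h1 : a (c l) = 0 := expDeg_eq_zero (x := a (c l)) (by rw [hdeg, hδ0])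
      have h2 : a (c j) = 0 := expDeg_eq_zero (x := a (c j)) (by rw [hdeg, hδ0])
      rw [h1, h2]
    obtain ⟨y, hy⟩ := (mem_toricRing_iff a (x : MvPolynomial (Fin d) K)).mp x.2 σ hσ
    obtain ⟨ord, v, w, hvwset, hv0, hw1, hquad⟩ := H (c l) (c j) hlj
    have hvw : v ≠ w := by
      intro hh
      rw [hh] at hv0
      omega
    have hvmem : v ∈ ({c l, c j} : Set (Fin n)) := by
      rw [← hvwset]; exact Set.mem_insert v {w}
    have hwmem : w ∈ ({c l, c j} : Set (Fin n)) := by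
      rw [← hvwset]; exact Set.mem_insert_of_mem v rfl
    have hgh : (c j = v ∧ c l = w) ∨ (c j = w ∧ c l = v) := by
      rcases hvmem with hv' | hv' <;> rcases hwmem with hw' | hw'
      · exact absurd (hv'.trans hw'.symm) hvw
      · right
        rw [Set.mem_singleton_iff] at hw'
        exact ⟨hw'.symm, hv'.symm⟩
      · left
        rw [Set.mem_singleton_iff] at hv'
        exact ⟨hv'.symm, hw'.symm⟩
      · rw [Set.mem_singleton_iff] at hv' hw'
        exact absurd (hv'.trans hw'.symm) hvw
    -- apply the core claim
    set L : Fin n →₀ ℕ := e (c j) + y with hL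
    set R : Fin n →₀ ℕ := e (c l) + z with hR
    have hAvLR : Av a L = Av a R := by
      rw [hL, hR, Av_add, Av_add, Av_e, Av_e, hy, add_comm (a (c j)) σ]
      exact hz
    have hLg : 1 ≤ L (c j) := by
      rw [hL, Finsupp.add_apply, Finsupp.single_eq_same]
      omega
    have hRh : 1 ≤ R (c l) := by
      rw [hR, Finsupp.add_apply, Finsupp.single_eq_same]
      omega
    obtain ⟨k, ⟨z', hkz⟩, ⟨y', hky⟩⟩ := core_claim a hdeg hδ1 hinj ord v w hv0 hw1 hquad
      (2 * (expDeg L + 1)^n) (expDeg L) L R (c j) (c l) hgh rfl (Nat.sub_le _ _)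
      hAvLR hLg hRh
    -- σ decomposes through the generator `u k`
    have hσdec : σ = a k + Av a y' := by
      have h1 : Av a L = a (c j) + σ := by rw [hL, Av_add, Av_e, hy]
      rw [h1, add_assoc] at hky
      exact add_left_cancel hky
    refine ⟨k, ?_, y', hσdec⟩
    -- `u k` is in the colon ideal
    rw [hGood]
    show u k ∈ Submodule.colon _ _
    apply Ideal.mem_colon_span_singleton.mpr
    rw [hJ, hu, mem_span_gen_iff]
    intro τ hτ
    have hval : ((toricGen K a k * toricGen K a (c j) : toricRing K a) :
        MvPolynomial (Fin d) K) = monomial (a k + a (c j)) 1 := by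
      show (monomial (a k)) 1 * (monomial (a (c j))) 1 = _
      rw [monomial_mul, mul_one]
    rw [hval] at hτ
    rcases Finset.mem_singleton.mp (support_monomial_subset hτ)
    exact ⟨c l, ⟨l, hl, rfl⟩, z', hkz⟩
  · rw [Ideal.span_le]
    rintro x ⟨k, hk, rfl⟩
    exact hk

end Aux
end

/-- **Theorem 1.2 (main1).**  Suppose that for each pair `i < j` there is an
ordering `x_{i_1} < x_{i_2} < ⋯ < x_{i_n}` of the variables with
`{i_1, i_2} = {i, j}` such that every monomial in `G(in_rlex(I_A))` divisible by
the second-smallest variable `x_{i_2}` is quadratic.  Then `K[A]` is strongly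
Koszul.  Here `ord : Fin n ≃ Fin n` records the ordering (`ord p` is the
`p`-th smallest variable), `v = x_{i_1}` and `w = x_{i_2}`. -/
theorem rlex_minGen_quadratic_implies_stronglyKoszul
    (K : Type) [Field K] {n d : ℕ} (a : Fin n → (Fin d →₀ ℕ))
    (δ : ℕ) (hdeg : ∀ i, expDeg (a i) = δ) (hinj : Function.Injective a)
    (H : ∀ i j : Fin n, i < j →
      ∃ ord : Fin n ≃ Fin n, ∃ v w : Fin n,
        ({v, w} : Set (Fin n)) = {i, j} ∧
        (ord.symm v : ℕ) = 0 ∧ (ord.symm w : ℕ) = 1 ∧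
        ∀ dd : Fin n →₀ ℕ,
          IsMinGen (initialIdeal (rlexLT ord) (toricIdeal K a)) dd →
          dd w ≠ 0 → expDeg dd = 2) :
    ToricStronglyKoszul K a := by
  exact Aux.main_aux K a δ hdeg hinj H
end

section
/- Let K be a field and A = {u_1,...,u_n} a set of monomials of the same degree in K[t_1,...,t_d]. If the reduced Gröbner basis of the toric ideal I_A with respect to every reverse lexicographic order consists of quadratic binomials, then the toric ring K[A] is strongly Koszul. -/
/-!
Common definitions: toric ideals/rings of monomial families, strong Koszulness
with respect to a system of algebra generators, initial ideals with respect to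
a relation on exponent vectors, (reduced) Gröbner bases, the (graded) reverse
lexicographic order induced by an ordering of the variables, minimal monomial
generators, and compressedness.
-/

open MvPolynomial

set_option synthInstance.maxHeartbeats 1000000
set_option maxHeartbeats 1000000
section Basics

open Finsupp

variable {m : ℕ}

theorem expDeg_eq_sum (v : Fin m →₀ ℕ) : expDeg v = ∑ i, v i :=
  Finsupp.sum_fintype _ _ (fun _ => rfl)

theorem expDeg_zero : expDeg (0 : Fin m →₀ ℕ) = 0 := by simp [expDeg_eq_sum]

theorem expDeg_add (v w : Fin m →₀ ℕ) : expDeg (v + w) = expDeg v + expDeg w := by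
  simp [expDeg_eq_sum, Finset.sum_add_distrib]

theorem expDeg_single (i : Fin m) (k : ℕ) : expDeg (Finsupp.single i k) = k := by
  simp [expDeg_eq_sum, Finsupp.single_apply]

theorem coord_le_expDeg (v : Fin m →₀ ℕ) (i : Fin m) : v i ≤ expDeg v := by
  rw [expDeg_eq_sum]
  exact Finset.single_le_sum (fun _ _ => Nat.zero_le _) (Finset.mem_univ i)

theorem pair_le_expDeg (v : Fin m →₀ ℕ) {i j : Fin m} (h : i ≠ j) :
    v i + v j ≤ expDeg v := by
  rw [expDeg_eq_sum, ← Finset.sum_pair h]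
  exact Finset.sum_le_sum_of_subset (Finset.subset_univ _)

theorem expDeg_eq_zero {v : Fin m →₀ ℕ} (h : expDeg v = 0) : v = 0 := by
  rw [expDeg_eq_sum] at h
  ext i
  have := Finset.sum_eq_zero_iff.mp h i (Finset.mem_univ i)
  simpa using this

theorem expDeg_eq_one {v : Fin m →₀ ℕ} (h : expDeg v = 1) : ∃ i, v = Finsupp.single i 1 := by
  have hne : v ≠ 0 := by intro h0; rw [h0, expDeg_zero] at h; omega
  obtain ⟨i, hi⟩ : ∃ i, v i ≠ 0 := by
    by_contra hc; push_neg at hc; exact hne (Finsupp.ext fun j => hc j)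
  refine ⟨i, Finsupp.ext fun j => ?_⟩
  rcases eq_or_ne j i with rfl | hji
  · have h1 := coord_le_expDeg v j
    rw [h] at h1
    simp [Finsupp.single_apply]; omega
  · have h2 := pair_le_expDeg v (Ne.symm hji)
    have := coord_le_expDeg v i
    rw [h] at h2
    simp [Finsupp.single_apply, Ne.symm hji]
    omega

theorem deg2_decomp {v : Fin m →₀ ℕ} {s : Fin m} (h2 : expDeg v = 2) (hs : 1 ≤ v s) :
    ∃ o, v = Finsupp.single s 1 + Finsupp.single o 1 := by
  have hle : Finsupp.single s 1 ≤ v := Finsupp.single_le_iff.mpr hs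
  have hv : (v - Finsupp.single s 1) + Finsupp.single s 1 = v := tsub_add_cancel_of_le hle
  have hd : expDeg (v - Finsupp.single s 1) = 1 := by
    have := congrArg expDeg hv
    rw [expDeg_add, expDeg_single] at this
    omega
  obtain ⟨o, ho⟩ := expDeg_eq_one hd
  exact ⟨o, by rw [← hv, ho, add_comm]⟩

end Basics
section Rlex

variable {n : ℕ} (ord : Fin n ≃ Fin n)

theorem rlex_irrefl (x : Fin n →₀ ℕ) : ¬ rlexLT ord x x := by
  rintro (h | ⟨-, p, hp, -⟩)
  · omega
  · omega

theorem rlex_asymm {x y : Fin n →₀ ℕ} (h1 : rlexLT ord x y) (h2 : rlexLT ord y x) : False := by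
  rcases h1 with h1 | ⟨hd1, p1, hp1, hq1⟩ <;> rcases h2 with h2 | ⟨hd2, p2, hp2, hq2⟩
  · omega
  · omega
  · omega
  · rcases lt_trichotomy p1 p2 with h | rfl | h
    · have := hq2 p1 h; omega
    · omega
    · have := hq1 p2 h; omega

theorem rlex_trans {x y z : Fin n →₀ ℕ} (h1 : rlexLT ord x y) (h2 : rlexLT ord y z) :
    rlexLT ord x z := by
  rcases h1 with h1 | ⟨hd1, p1, hp1, hq1⟩ <;> rcases h2 with h2 | ⟨hd2, p2, hp2, hq2⟩
  · exact Or.inl (h1.trans h2)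
  · exact Or.inl (hd2 ▸ h1)
  · exact Or.inl (hd1 ▸ h2)
  · refine Or.inr ⟨hd1.trans hd2, ?_⟩
    rcases lt_trichotomy p1 p2 with h | rfl | h
    · exact ⟨p1, by rw [← hq2 p1 h]; exact hp1, fun q hq => by
        rw [hq1 q hq, hq2 q (hq.trans h)]⟩
    · exact ⟨p1, hp2.trans hp1, fun q hq => by rw [hq1 q hq, hq2 q hq]⟩
    · exact ⟨p2, by rw [hq1 p2 h]; exact hp2, fun q hq => by
        rw [hq1 q (hq.trans h), hq2 q hq]⟩

theorem rlex_total {x y : Fin n →₀ ℕ} (hne : x ≠ y) :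
    rlexLT ord x y ∨ rlexLT ord y x := by
  rcases lt_trichotomy (expDeg x) (expDeg y) with h | hd | h
  · exact Or.inl (Or.inl h)
  · have hS : (Finset.univ.filter (fun p => x (ord p) ≠ y (ord p))).Nonempty := by
      by_contra hc
      rw [Finset.not_nonempty_iff_eq_empty, Finset.filter_eq_empty_iff] at hc
      apply hne
      ext v
      have := hc (Finset.mem_univ (ord.symm v))
      simpa using this
    set p := (Finset.univ.filter (fun p => x (ord p) ≠ y (ord p))).min' hS with hpdef
    have hpmem : x (ord p) ≠ y (ord p) := by
      have := (Finset.univ.filter (fun p => x (ord p) ≠ y (ord p))).min'_mem hS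
      simpa using this
    have hqeq : ∀ q, q < p → x (ord q) = y (ord q) := by
      intro q hq
      by_contra hc
      have hmem : q ∈ Finset.univ.filter (fun p => x (ord p) ≠ y (ord p)) := by
        simpa using hc
      have := Finset.min'_le _ q hmem
      omega
    rcases lt_or_gt_of_ne hpmem with h | h
    · exact Or.inr (Or.inr ⟨hd.symm, p, h, fun q hq => (hqeq q hq).symm⟩)
    · exact Or.inl (Or.inr ⟨hd, p, h, hqeq⟩)
  · exact Or.inr (Or.inl h)

theorem rlex_add_left {x y : Fin n →₀ ℕ} (z : Fin n →₀ ℕ) (h : rlexLT ord x y) :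
    rlexLT ord (z + x) (z + y) := by
  rcases h with h | ⟨hd, p, hp, hq⟩
  · exact Or.inl (by rw [expDeg_add, expDeg_add]; omega)
  · refine Or.inr ⟨by rw [expDeg_add, expDeg_add, hd], p, ?_, fun q hqp => ?_⟩
    · simp only [Finsupp.add_apply]; omega
    · simp only [Finsupp.add_apply, hq q hqp]

/-- smaller elements have larger coordinate at the first position where
all earlier coordinates agree -/
theorem rlex_coord_ge {x y : Fin n →₀ ℕ} (h : rlexLT ord x y)
    (hd : expDeg y = expDeg x) (p : Fin n)
    (hq : ∀ q, q < p → x (ord q) = y (ord q)) : y (ord p) ≤ x (ord p) := by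
  by_contra hc
  push_neg at hc
  exact rlex_asymm ord h (Or.inr ⟨hd, p, hc, fun q hqp => (hq q hqp).symm⟩)

end Rlex
noncomputable section SA

variable {K : Type} [Field K] {n d : ℕ} (a : Fin n → (Fin d →₀ ℕ))

/-- The image in `ℕ^d` of an exponent vector: `E ↦ ∑ E i • a i`. -/
def sA (E : Fin n →₀ ℕ) : Fin d →₀ ℕ := E.sum fun i e => e • a i

theorem sA_zero : sA a 0 = 0 := Finsupp.sum_zero_index

theorem sA_add (E F : Fin n →₀ ℕ) : sA a (E + F) = sA a E + sA a F :=
  Finsupp.sum_add_index' (fun _ => zero_smul _ _) (fun _ e e' => add_smul e e' _)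

theorem sA_single (i : Fin n) (k : ℕ) : sA a (Finsupp.single i k) = k • a i :=
  Finsupp.sum_single_index (zero_smul _ _)

theorem sA_single_one (i : Fin n) : sA a (Finsupp.single i 1) = a i := by
  rw [sA_single, one_smul]

theorem aeval_monomial_eq (E : Fin n →₀ ℕ) (c : K) :
    (MvPolynomial.aeval fun i => (MvPolynomial.monomial (a i) (1 : K)))
      (MvPolynomial.monomial E c) = MvPolynomial.monomial (sA a E) c := by
  rw [MvPolynomial.aeval_monomial]
  have : (E.prod fun i k => (MvPolynomial.monomial (a i) (1 : K)) ^ k)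
      = MvPolynomial.monomial (sA a E) (1 : K) := by
    induction E using Finsupp.induction with
    | zero => simp [sA_zero]
    | single_add i b F hiF hb ih =>
      rw [Finsupp.prod_add_index' (fun _ => pow_zero _) (fun _ e e' => pow_add _ e e'),
        Finsupp.prod_single_index
          (h := fun x k => (MvPolynomial.monomial (a x) (1:K)) ^ k) (pow_zero _),
        ih, sA_add, sA_single, MvPolynomial.monomial_pow, one_pow,
        MvPolynomial.monomial_mul, one_mul]
  rw [this, MvPolynomial.algebraMap_eq, MvPolynomial.C_mul_monomial, mul_one]

theorem monomial_injective_exp {m m' : Fin d →₀ ℕ}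
    (h : MvPolynomial.monomial m (1 : K) = MvPolynomial.monomial m' (1 : K)) : m = m' := by
  classical
  by_contra hc
  have h2 := congrArg (MvPolynomial.coeff m) h
  rw [MvPolynomial.coeff_monomial, MvPolynomial.coeff_monomial, if_pos rfl,
    if_neg (fun h' => hc h'.symm)] at h2
  exact one_ne_zero h2

theorem binomial_mem_toricIdeal {U V : Fin n →₀ ℕ} (h : sA a U = sA a V) :
    (MvPolynomial.monomial U (1 : K) - MvPolynomial.monomial V (1 : K)) ∈ toricIdeal K a := by
  rw [toricIdeal, RingHom.mem_ker]
  show (MvPolynomial.aeval fun i => (MvPolynomial.monomial (a i) (1 : K)))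
      (MvPolynomial.monomial U (1 : K) - MvPolynomial.monomial V (1 : K)) = 0
  rw [map_sub, aeval_monomial_eq, aeval_monomial_eq, h, sub_self]

theorem sA_eq_of_mem_toricIdeal {U V : Fin n →₀ ℕ}
    (h : (MvPolynomial.monomial U (1 : K) - MvPolynomial.monomial V (1 : K)) ∈ toricIdeal K a) :
    sA a U = sA a V := by
  rw [toricIdeal, RingHom.mem_ker] at h
  have h' : MvPolynomial.monomial (sA a U) (1:K) - MvPolynomial.monomial (sA a V) (1:K) = 0 := by
    have h2 : (MvPolynomial.aeval fun i => (MvPolynomial.monomial (a i) (1 : K)))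
        (MvPolynomial.monomial U (1 : K) - MvPolynomial.monomial V (1 : K)) = 0 := h
    rwa [map_sub, aeval_monomial_eq, aeval_monomial_eq] at h2
  exact monomial_injective_exp (sub_eq_zero.mp h')

theorem tmon_mem (E : Fin n →₀ ℕ) :
    MvPolynomial.monomial (sA a E) (1 : K) ∈ toricRing K a := by
  induction E using Finsupp.induction with
  | zero =>
    rw [sA_zero, MvPolynomial.monomial_zero', MvPolynomial.C_1]
    exact one_mem _
  | single_add i b F hiF hb ih =>
    rw [sA_add, sA_single, ← one_mul (1:K), ← MvPolynomial.monomial_mul]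
    refine mul_mem ?_ ih
    have h3 : (MvPolynomial.monomial (b • a i) (1:K)) = (MvPolynomial.monomial (a i) (1:K)) ^ b := by
      rw [MvPolynomial.monomial_pow, one_pow]
    rw [h3]
    exact pow_mem (Algebra.subset_adjoin (Set.mem_range_self i)) b

/-- The monomial `t^{sA E}` as an element of the toric ring. -/
def tmon (E : Fin n →₀ ℕ) : toricRing K a :=
  ⟨MvPolynomial.monomial (sA a E) (1 : K), tmon_mem a E⟩

theorem support_mem_sA {v : MvPolynomial (Fin d) K} (hv : v ∈ toricRing K a) :
    ∀ m ∈ v.support, ∃ E, sA a E = m := by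
  classical
  induction hv using Algebra.adjoin_induction with
  | mem x hx =>
    obtain ⟨i, rfl⟩ := hx
    intro m hm
    rw [MvPolynomial.support_monomial, if_neg one_ne_zero] at hm
    simp only [Finset.mem_singleton] at hm
    exact ⟨Finsupp.single i 1, by rw [sA_single_one, hm]⟩
  | algebraMap r =>
    intro m hm
    rw [MvPolynomial.mem_support_iff, MvPolynomial.algebraMap_eq, MvPolynomial.coeff_C] at hm
    have hm0 : m = 0 := by
      by_contra hc
      exact hm (if_neg (fun h => hc h.symm))
    exact ⟨0, by rw [sA_zero, hm0]⟩
  | add x y hx hy ihx ihy =>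
    intro m hm
    rcases Finset.mem_union.mp (MvPolynomial.support_add hm) with h | h
    · exact ihx m h
    · exact ihy m h
  | mul x y hx hy ihx ihy =>
    intro m hm
    obtain ⟨m₁, hm₁, m₂, hm₂, rfl⟩ := Finset.mem_add.mp (MvPolynomial.support_mul x y hm)
    obtain ⟨E₁, hE₁⟩ := ihx m₁ hm₁
    obtain ⟨E₂, hE₂⟩ := ihy m₂ hm₂
    exact ⟨E₁ + E₂, by rw [sA_add, hE₁, hE₂]⟩

end SA
noncomputable section GB

variable {K : Type} [Field K] {n d : ℕ} (a : Fin n → (Fin d →₀ ℕ))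

/-- if a nonzero monomial lies in the ideal spanned by a set of monic monomials,
then its exponent dominates one of the exponents. -/
theorem exists_exp_le_of_monomial_mem_span {σ : Type*} {T : Set (MvPolynomial σ K)}
    {Es : Set (σ →₀ ℕ)} (hT : ∀ t ∈ T, ∃ e ∈ Es, t = MvPolynomial.monomial e (1 : K))
    {D : σ →₀ ℕ} {c : K} (hc : c ≠ 0)
    (h : MvPolynomial.monomial D c ∈ Ideal.span T) : ∃ e ∈ Es, e ≤ D := by
  classical
  rw [Ideal.span] at h
  obtain ⟨N₀, f, g, hsum⟩ := Submodule.mem_span_set'.mp h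
  have hco := congrArg (MvPolynomial.coeff D) hsum
  rw [MvPolynomial.coeff_monomial, if_pos rfl] at hco
  simp only [MvPolynomial.coeff_sum] at hco
  have : ∃ i : Fin N₀, MvPolynomial.coeff D (f i • (g i : MvPolynomial σ K)) ≠ 0 := by
    by_contra hcc
    push_neg at hcc
    rw [Finset.sum_eq_zero (fun i _ => hcc i)] at hco
    exact hc hco.symm
  obtain ⟨i, hi⟩ := this
  obtain ⟨e, heEs, hge⟩ := hT (g i) (g i).2
  rw [smul_eq_mul, hge, MvPolynomial.coeff_mul_monomial'] at hi
  by_cases hle : e ≤ D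
  · exact ⟨e, heEs, hle⟩
  · rw [if_neg hle] at hi; exact absurd rfl hi

/-- A quadratic exchange step allowed by the toric ideal. -/
def QuadStep (ord : Fin n ≃ Fin n) (B C : Fin n →₀ ℕ) : Prop :=
  sA a B = sA a C ∧ expDeg B = 2 ∧ expDeg C = 2 ∧ rlexLT ord C B

/-- `Z` admits a quadratic reduction. -/
def RedStep (ord : Fin n ≃ Fin n) (Z : Fin n →₀ ℕ) : Prop :=
  ∃ B C, QuadStep a ord B C ∧ B ≤ Z

theorem main_div {ord : Fin n ≃ Fin n} {G : Finset (MvPolynomial (Fin n) K)}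
    (hGB : IsReducedGB (rlexLT ord) (toricIdeal K a) G)
    (hquad : ∀ g ∈ G, IsQuadBinomial g) :
    ∀ U V : Fin n →₀ ℕ, U ≠ V → sA a U = sA a V → rlexLT ord V U →
      RedStep a ord U := by
  classical
  intro U V hUV hsUV hVU
  set f := MvPolynomial.monomial U (1:K) - MvPolynomial.monomial V (1:K) with hf
  have hfI : f ∈ toricIdeal K a := binomial_mem_toricIdeal a hsUV
  have hcoeff : ∀ W, MvPolynomial.coeff W f =
      (if U = W then (1:K) else 0) - (if V = W then (1:K) else 0) := by
    intro W
    rw [hf, MvPolynomial.coeff_sub, MvPolynomial.coeff_monomial, MvPolynomial.coeff_monomial]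
  have hUsup : U ∈ f.support := by
    rw [MvPolynomial.mem_support_iff, hcoeff, if_pos rfl, if_neg (fun h => hUV h.symm), sub_zero]
    exact one_ne_zero
  have hinit : IsInitialExp (rlexLT ord) f U := by
    refine ⟨hUsup, fun d' hd' hne => ?_⟩
    rw [MvPolynomial.mem_support_iff, hcoeff] at hd'
    rw [if_neg (fun h => hne h.symm), zero_sub, neg_ne_zero] at hd'
    have : V = d' := by by_contra hc; rw [if_neg hc] at hd'; exact hd' rfl
    rw [← this]; exact hVU
  have hmem : MvPolynomial.monomial U (1:K) ∈ initialIdeal (rlexLT ord) (toricIdeal K a) :=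
    Ideal.subset_span ⟨f, hfI, U, hinit, rfl⟩
  rw [hGB.2.2.1] at hmem
  obtain ⟨e, ⟨g, hgG, hge⟩, heU⟩ := exists_exp_le_of_monomial_mem_span
    (T := {m | ∃ g ∈ G, ∃ dd, IsInitialExp (rlexLT ord) g dd ∧ m = MvPolynomial.monomial dd (1:K)})
    (Es := {e | ∃ g ∈ G, IsInitialExp (rlexLT ord) g e})
    (fun t ht => by obtain ⟨g, hg, dd, hdd, rfl⟩ := ht; exact ⟨dd, ⟨g, hg, hdd⟩, rfl⟩)
    (one_ne_zero) hmem
  -- g is a quadratic binomial with initial exponent e ≤ U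
  obtain ⟨b₀, c₀, hb2, hc2, hgeq⟩ := hquad g hgG
  have hb₀c₀ : b₀ ≠ c₀ := by
    rintro rfl
    have hg0 : g = 0 := by rw [hgeq, sub_self]
    rw [hg0] at hge
    have h5 := hge.1
    rw [MvPolynomial.support_zero] at h5
    exact absurd h5 (Finset.notMem_empty e)
  have hgcoeff : ∀ W, MvPolynomial.coeff W g =
      (if b₀ = W then (1:K) else 0) - (if c₀ = W then (1:K) else 0) := by
    intro W
    rw [hgeq, MvPolynomial.coeff_sub, MvPolynomial.coeff_monomial, MvPolynomial.coeff_monomial]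
  have hsbc : sA a b₀ = sA a c₀ := by
    have hgI : (MvPolynomial.monomial b₀ (1:K) - MvPolynomial.monomial c₀ (1:K))
        ∈ toricIdeal K a := hgeq ▸ hGB.1 g hgG
    exact sA_eq_of_mem_toricIdeal a hgI
  have hesup := hge.1
  rw [MvPolynomial.mem_support_iff, hgcoeff] at hesup
  have he_cases : e = b₀ ∨ e = c₀ := by
    by_contra hc
    push_neg at hc
    rw [if_neg (fun h => hc.1 h.symm), if_neg (fun h => hc.2 h.symm), sub_zero] at hesup
    exact hesup rfl
  -- define B := e and C := the other exponent
  rcases he_cases with h | h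
  · -- e = b₀, other = c₀
    have hc₀sup : c₀ ∈ g.support := by
      rw [MvPolynomial.mem_support_iff, hgcoeff, if_neg hb₀c₀, if_pos rfl, zero_sub, neg_ne_zero]
      exact one_ne_zero
    refine ⟨e, c₀, ⟨by rw [h]; exact hsbc, by rw [h]; exact hb2, hc2, ?_⟩, heU⟩
    exact hge.2 c₀ hc₀sup (by rw [h]; exact Ne.symm hb₀c₀)
  · -- e = c₀, other = b₀
    have hb₀sup : b₀ ∈ g.support := by
      rw [MvPolynomial.mem_support_iff, hgcoeff, if_pos rfl, if_neg (Ne.symm hb₀c₀), sub_zero]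
      exact one_ne_zero
    refine ⟨e, b₀, ⟨by rw [h]; exact hsbc.symm, by rw [h]; exact hc2, hb2, ?_⟩, heU⟩
    exact hge.2 b₀ hb₀sup (by rw [h]; exact hb₀c₀)

theorem irred_unique {ord : Fin n ≃ Fin n}
    (hdiv : ∀ U V : Fin n →₀ ℕ, U ≠ V → sA a U = sA a V → rlexLT ord V U → RedStep a ord U)
    {Z Z' : Fin n →₀ ℕ} (hZ : ¬ RedStep a ord Z) (hZ' : ¬ RedStep a ord Z')
    (hs : sA a Z = sA a Z') : Z = Z' := by
  by_contra hne
  rcases rlex_total ord hne with h | h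
  · exact hZ' (hdiv Z' Z (Ne.symm hne) hs.symm h)
  · exact hZ (hdiv Z Z' hne hs h)

end GB
noncomputable section WFsec

variable {K : Type} [Field K] {n d : ℕ} (a : Fin n → (Fin d →₀ ℕ))

theorem rlex_wf (ord : Fin n ≃ Fin n) (D : ℕ) :
    WellFounded (fun (x y : {F : Fin n →₀ ℕ // expDeg F = D}) => rlexLT ord x.1 y.1) := by
  haveI : Finite {F : Fin n →₀ ℕ // expDeg F = D} := by
    apply Finite.of_injective
      (fun (F : {F : Fin n →₀ ℕ // expDeg F = D}) (i : Fin n) =>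
        (⟨F.1 i, by have := coord_le_expDeg F.1 i; rw [F.2] at this; omega⟩ : Fin (D+1)))
    intro F₁ F₂ h
    apply Subtype.ext
    ext i
    have := congrFun h i
    simpa using congrArg Fin.val this
  haveI : IsTrans {F : Fin n →₀ ℕ // expDeg F = D}
      (fun x y => rlexLT ord x.1 y.1) := ⟨fun _ _ _ h1 h2 => rlex_trans ord h1 h2⟩
  haveI : IsIrrefl {F : Fin n →₀ ℕ // expDeg F = D}
      (fun x y => rlexLT ord x.1 y.1) := ⟨fun x => rlex_irrefl ord x.1⟩
  exact Finite.wellFounded_of_trans_of_irrefl _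

/-- basic facts about a single reduction step -/
theorem red_step_facts {ord : Fin n ≃ Fin n} {Z B C : Fin n →₀ ℕ}
    (hq : QuadStep a ord B C) (hBZ : B ≤ Z) :
    sA a (Z - B + C) = sA a Z ∧ expDeg (Z - B + C) = expDeg Z ∧
      rlexLT ord (Z - B + C) Z ∧ ∀ v, (Z - B + C) v = Z v - B v + C v := by
  obtain ⟨hs, hB2, hC2, hCB⟩ := hq
  have hZeq : (Z - B) + B = Z := tsub_add_cancel_of_le hBZ
  refine ⟨?_, ?_, ?_, ?_⟩
  · rw [sA_add, ← hs, ← sA_add, hZeq]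
  · rw [expDeg_add, ← congrArg expDeg hZeq, expDeg_add, hB2, hC2]
  · conv_rhs => rw [← hZeq]
    exact rlex_add_left ord (Z - B) hCB
  · intro v
    rw [Finsupp.add_apply, Finsupp.tsub_apply]

theorem exists_irred {ord : Fin n ≃ Fin n} (hn : 0 < n)
    (hdiv : ∀ U V : Fin n →₀ ℕ, U ≠ V → sA a U = sA a V → rlexLT ord V U → RedStep a ord U) :
    ∀ Z : Fin n →₀ ℕ, ∃ R, ¬ RedStep a ord R ∧ sA a R = sA a Z ∧
      Z (ord ⟨0, hn⟩) ≤ R (ord ⟨0, hn⟩) := by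
  intro Z0
  set D := expDeg Z0 with hD
  suffices hsuff : ∀ (x : {F : Fin n →₀ ℕ // expDeg F = D}), ∃ R, ¬ RedStep a ord R ∧
      sA a R = sA a x.1 ∧ x.1 (ord ⟨0, hn⟩) ≤ R (ord ⟨0, hn⟩) by
    exact hsuff ⟨Z0, rfl⟩
  intro x
  induction x using (rlex_wf ord D).induction with
  | _ x IH =>
  obtain ⟨Z, hZD⟩ := x
  show ∃ R, ¬ RedStep a ord R ∧ sA a R = sA a Z ∧
      Z (ord ⟨0, hn⟩) ≤ R (ord ⟨0, hn⟩)
  by_cases hr : RedStep a ord Z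
  · obtain ⟨B, C, hq, hBZ⟩ := hr
    obtain ⟨hs', hd', hlt', hco'⟩ := red_step_facts a hq hBZ
    obtain ⟨R, hR1, hR2, hR3⟩ := IH ⟨Z - B + C, by rw [hd']; exact hZD⟩ hlt'
    have hR3' : (Z - B + C) (ord ⟨0, hn⟩) ≤ R (ord ⟨0, hn⟩) := hR3
    refine ⟨R, hR1, by rw [hR2]; exact hs', le_trans ?_ hR3'⟩
    rw [hco' (ord ⟨0, hn⟩)]
    have h1 : B (ord ⟨0, hn⟩) ≤ C (ord ⟨0, hn⟩) := by
      have := rlex_coord_ge ord hq.2.2.2 (by rw [hq.2.1, hq.2.2.1]) ⟨0, hn⟩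
        (fun q hq' => absurd hq' (by simp [Fin.lt_def]))
      exact this
    have h2 : B (ord ⟨0, hn⟩) ≤ Z (ord ⟨0, hn⟩) := Finsupp.le_def.mp hBZ _
    omega
  · exact ⟨Z, hr, rfl, le_refl _⟩

theorem main_claim {ord : Fin n ≃ Fin n} (hn1 : 1 < n)
    (hdiv : ∀ U V : Fin n →₀ ℕ, U ≠ V → sA a U = sA a V → rlexLT ord V U → RedStep a ord U)
    (τ : Fin d →₀ ℕ) (R : Fin n →₀ ℕ) (hRirr : ¬ RedStep a ord R) (hRτ : sA a R = τ)
    (hRs : 1 ≤ R (ord ⟨0, by omega⟩)) :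
    ∀ Z : Fin n →₀ ℕ, sA a Z = τ → Z (ord ⟨0, by omega⟩) = 0 → 1 ≤ Z (ord ⟨1, hn1⟩) →
      ∃ l E₄ E₅, a l + a (ord ⟨0, by omega⟩) = a (ord ⟨1, hn1⟩) + sA a E₅ ∧
        τ = a (ord ⟨0, by omega⟩) + a l + sA a E₄ := by
  intro Z0 h1 h2 h3
  have hn0 : 0 < n := by omega
  set p0 : Fin n := ⟨0, by omega⟩ with hp0
  set p1 : Fin n := ⟨1, hn1⟩ with hp1
  have hp01 : p0 ≠ p1 := by simp [hp0, hp1, Fin.ext_iff]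
  have hop01 : ord p0 ≠ ord p1 := fun h => hp01 (ord.injective h)
  set D := expDeg Z0 with hD
  suffices hsuff : ∀ (x : {F : Fin n →₀ ℕ // expDeg F = D}), sA a x.1 = τ →
      x.1 (ord p0) = 0 → 1 ≤ x.1 (ord p1) →
      ∃ l E₄ E₅, a l + a (ord p0) = a (ord p1) + sA a E₅ ∧
        τ = a (ord p0) + a l + sA a E₄ by
    exact hsuff ⟨Z0, rfl⟩ h1 h2 h3
  intro x
  induction x using (rlex_wf ord D).induction with
  | _ x IH =>
  obtain ⟨Z, hZD⟩ := x
  show sA a Z = τ → Z (ord p0) = 0 → 1 ≤ Z (ord p1) →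
      ∃ l E₄ E₅, a l + a (ord p0) = a (ord p1) + sA a E₅ ∧
        τ = a (ord p0) + a l + sA a E₄
  intro hZτ hZ0 hZ1
  by_cases hr : RedStep a ord Z
  · obtain ⟨B, C, hq, hBZ⟩ := hr
    obtain ⟨hs', hd', hlt', hco'⟩ := red_step_facts a hq hBZ
    obtain ⟨hsBC, hB2, hC2, hCB⟩ := hq
    have hBle : ∀ v, B v ≤ Z v := Finsupp.le_def.mp hBZ
    have hB0 : B (ord p0) = 0 := by have := hBle (ord p0); omega
    have hdBC : expDeg C = expDeg B := by rw [hB2, hC2]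
    by_cases hg0 : 1 ≤ C (ord p0)
    · -- the new exponent contains the smallest variable
      obtain ⟨o, hCeq⟩ := deg2_decomp hC2 hg0
      have hsC : sA a C = a (ord p0) + a o := by
        rw [hCeq, sA_add, sA_single_one, sA_single_one]
      by_cases hb1 : 1 ≤ B (ord p1)
      · -- B contains the second variable: the key exchange
        obtain ⟨d', hBeq⟩ := deg2_decomp hB2 hb1
        have hsB : sA a B = a (ord p1) + a d' := by
          rw [hBeq, sA_add, sA_single_one, sA_single_one]
        refine ⟨o, (Z - B + C) - C, Finsupp.single d' 1, ?_, ?_⟩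
        · rw [sA_single_one, ← hsB, hsBC, hsC, add_comm]
        · have hCle : C ≤ Z - B + C := le_add_self
          have h6 : ((Z - B + C) - C) + C = Z - B + C := tsub_add_cancel_of_le hCle
          have h7 : sA a ((Z - B + C) - C) + sA a C = τ := by
            rw [← sA_add, h6, hs', hZτ]
          rw [hsC] at h7
          rw [← h7]
          abel
      · -- B avoids both distinguished variables
        have hb1' : B (ord p1) = 0 := by omega
        have hZ'0 : 1 ≤ (Z - B + C) (ord p0) := by rw [hco']; omega
        have hZ'1 : 1 ≤ (Z - B + C) (ord p1) := by rw [hco']; omega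
        have hpair : Finsupp.single (ord p0) 1 + Finsupp.single (ord p1) 1 ≤ Z - B + C := by
          rw [Finsupp.le_def]
          intro v
          rw [Finsupp.add_apply, Finsupp.single_apply, Finsupp.single_apply]
          rcases eq_or_ne (ord p0) v with rfl | hv0
          · rw [if_pos rfl, if_neg (fun h : ord p1 = ord p0 => hop01 h.symm)]
            omega
          · rw [if_neg hv0]
            rcases eq_or_ne (ord p1) v with rfl | hv1
            · rw [if_pos rfl]
              omega
            · rw [if_neg hv1]
              omega
        refine ⟨ord p1, (Z - B + C) - (Finsupp.single (ord p0) 1 + Finsupp.single (ord p1) 1),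
          Finsupp.single (ord p0) 1, by rw [sA_single_one], ?_⟩
        have h6 : ((Z - B + C) - (Finsupp.single (ord p0) 1 + Finsupp.single (ord p1) 1))
            + (Finsupp.single (ord p0) 1 + Finsupp.single (ord p1) 1) = Z - B + C :=
          tsub_add_cancel_of_le hpair
        have h7 : sA a ((Z - B + C) - (Finsupp.single (ord p0) 1 + Finsupp.single (ord p1) 1))
            + (a (ord p0) + a (ord p1)) = τ := by
          rw [← sA_single_one a (ord p0), ← sA_single_one a (ord p1), ← sA_add, ← sA_add, h6,
            hs', hZτ]
        rw [← h7]
        abel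
    · -- the step does not involve the smallest variable: recurse
      have hC0 : C (ord p0) = 0 := by omega
      have hB0' : B (ord p0) = 0 := hB0
      have hcge : B (ord p1) ≤ C (ord p1) := by
        refine rlex_coord_ge ord hCB (by rw [hB2, hC2]) p1 (fun q hq' => ?_)
        have hq1 : q.1 < 1 := by simpa [Fin.lt_def, hp1] using hq'
        have hq0 : q = p0 := Fin.ext (by simp [hp0]; omega)
        rw [hq0, hC0, hB0']
      have hZ'0 : (Z - B + C) (ord p0) = 0 := by rw [hco']; omega
      have hZ'1 : 1 ≤ (Z - B + C) (ord p1) := by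
        rw [hco']
        have := hBle (ord p1)
        omega
      exact IH ⟨Z - B + C, by rw [hd']; exact hZD⟩ hlt'
        (by rw [hs']; exact hZτ) hZ'0 hZ'1
  · -- Z is irreducible, hence equals R: contradiction with the coordinate at p0
    have hZR : Z = R := irred_unique a hdiv hr hRirr (by rw [hZτ, hRτ])
    rw [hZR] at hZ0
    omega

end WFsec
noncomputable section ColonSec

variable {K : Type} [Field K] {n d : ℕ} (a : Fin n → (Fin d →₀ ℕ))

theorem coe_tmon (E : Fin n →₀ ℕ) :
    ((tmon a E : toricRing K a) : MvPolynomial (Fin d) K)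
      = MvPolynomial.monomial (sA a E) (1 : K) := rfl

theorem mem_N_support (W : Set (Fin n)) (w : toricRing K a)
    (hw : w ∈ Ideal.span (toricGen K a '' W)) :
    ∀ m' ∈ (w : MvPolynomial (Fin d) K).support, ∃ i ∈ W, ∃ E, m' = a i + sA a E := by
  classical
  rw [Ideal.span] at hw
  obtain ⟨N₀, f, g, hsum⟩ := Submodule.mem_span_set'.mp hw
  intro m' hm'
  rw [MvPolynomial.mem_support_iff] at hm'
  have hco : MvPolynomial.coeff m'
      ((toricRing K a).val (∑ i, f i • (g i : toricRing K a))) ≠ 0 := by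
    rw [hsum]; exact hm'
  rw [map_sum] at hco
  simp only [MvPolynomial.coeff_sum] at hco
  have hex : ∃ i : Fin N₀, MvPolynomial.coeff m'
      ((toricRing K a).val (f i • (g i : toricRing K a))) ≠ 0 := by
    by_contra hcc
    push_neg at hcc
    exact hco (Finset.sum_eq_zero (fun i _ => hcc i))
  obtain ⟨i, hi⟩ := hex
  obtain ⟨l, hlW, hgl⟩ := (g i).2
  have hval : (toricRing K a).val (f i • (g i : toricRing K a))
      = ((f i : toricRing K a) : MvPolynomial (Fin d) K) * MvPolynomial.monomial (a l) 1 := by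
    rw [smul_eq_mul, map_mul]
    congr 1
    rw [← hgl]
    rfl
  rw [hval, MvPolynomial.coeff_mul_monomial'] at hi
  by_cases hle : a l ≤ m'
  · rw [if_pos hle, mul_one] at hi
    have hsup : m' - a l ∈ ((f i : toricRing K a) : MvPolynomial (Fin d) K).support :=
      MvPolynomial.mem_support_iff.mpr hi
    obtain ⟨E, hE⟩ := support_mem_sA a (f i).2 _ hsup
    refine ⟨l, hlW, E, ?_⟩
    rw [hE, add_comm]
    exact (tsub_add_cancel_of_le hle).symm
  · rw [if_neg hle] at hi
    exact absurd rfl hi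

theorem tmon_factor {E E₄ : Fin n →₀ ℕ} {l : Fin n} (h : sA a E = a l + sA a E₄) :
    tmon a E = tmon a E₄ * toricGen K a l := by
  apply Subtype.ext
  show MvPolynomial.monomial (sA a E) (1:K)
    = MvPolynomial.monomial (sA a E₄) 1 * MvPolynomial.monomial (a l) 1
  rw [MvPolynomial.monomial_mul, one_mul, h, add_comm]

theorem mainMono {δ : ℕ} (hdeg : ∀ i, expDeg (a i) = δ) (hinj : Function.Injective a)
    (H : ∀ ord : Fin n ≃ Fin n, ∃ G : Finset (MvPolynomial (Fin n) K),
      IsReducedGB (rlexLT ord) (toricIdeal K a) G ∧ ∀ g ∈ G, IsQuadBinomial g)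
    (s : Fin n) (W : Set (Fin n)) (hsW : s ∉ W)
    (E : Fin n →₀ ℕ) (i : Fin n) (hiW : i ∈ W) (E'' : Fin n →₀ ℕ)
    (hrel : sA a E + a s = a i + sA a E'') :
    tmon a E ∈ Ideal.span
      (toricGen K a '' {l | ∃ i' ∈ W, ∃ E₅, a l + a s = a i' + sA a E₅}) := by
  classical
  have hsi : s ≠ i := fun h => hsW (h ▸ hiW)
  have hn1 : 1 < n := by
    by_contra hc
    push_neg at hc
    exact hsi (Fin.ext (by omega))
  have hn0 : 0 < n := by omega
  by_cases hE0 : E = 0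
  · -- impossible: a s would factor through a i
    exfalso
    rw [hE0, sA_zero, zero_add] at hrel
    have hdd := congrArg expDeg hrel
    rw [expDeg_add, hdeg s, hdeg i] at hdd
    have h0 : expDeg (sA a E'') = 0 := by omega
    rw [expDeg_eq_zero h0, add_zero] at hrel
    exact hsi (hinj hrel)
  · -- build a reverse lexicographic order with x_s smallest and x_i second smallest
    set p0 : Fin n := ⟨0, hn0⟩ with hp0def
    set p1 : Fin n := ⟨1, hn1⟩ with hp1def
    have hp01 : p0 ≠ p1 := by simp [hp0def, hp1def, Fin.ext_iff]
    set e₁ : Fin n ≃ Fin n := Equiv.swap p0 s with he₁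
    set t' : Fin n := e₁.symm i with ht'
    set ord : Fin n ≃ Fin n := (Equiv.swap p1 t').trans e₁ with hord
    have hordeval : ∀ x, ord x = e₁ ((Equiv.swap p1 t') x) := fun x => rfl
    have ht'p0 : t' ≠ p0 := by
      intro h
      apply hsi
      have h2 : e₁ t' = e₁ p0 := by rw [h]
      rw [ht', Equiv.apply_symm_apply, he₁, Equiv.swap_apply_left] at h2
      exact h2.symm
    have hord0 : ord p0 = s := by
      rw [hordeval, Equiv.swap_apply_of_ne_of_ne hp01 (Ne.symm ht'p0), he₁,
        Equiv.swap_apply_left]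
    have hord1 : ord p1 = i := by
      rw [hordeval, Equiv.swap_apply_left, ht', Equiv.apply_symm_apply]
    obtain ⟨G, hGB, hquad⟩ := H ord
    have hdiv := main_div a hGB hquad
    have hZ1s : sA a (Finsupp.single s 1 + E) = sA a E + a s := by
      rw [sA_add, sA_single_one, add_comm]
    obtain ⟨R, hRirr, hRs2, hRge⟩ := exists_irred a hn0 hdiv (Finsupp.single s 1 + E)
    have hRτ : sA a R = sA a E + a s := by rw [hRs2, hZ1s]
    have hRs : 1 ≤ R (ord p0) := by
      refine le_trans ?_ hRge
      rw [hord0, Finsupp.add_apply, Finsupp.single_eq_same]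
      omega
    have hZ₀τ : sA a (Finsupp.single i 1 + E'') = sA a E + a s := by
      rw [sA_add, sA_single_one, hrel]
    by_cases hz : 1 ≤ E'' s
    · -- the witness E'' already contains s
      have h5 : (E'' - Finsupp.single s 1) + Finsupp.single s 1 = E'' :=
        tsub_add_cancel_of_le (Finsupp.single_le_iff.mpr hz)
      have h6 : sA a E'' = sA a (E'' - Finsupp.single s 1) + a s := by
        rw [← sA_single_one a s, ← sA_add, h5]
      have h7 : sA a E = a i + sA a (E'' - Finsupp.single s 1) := by
        have h8 : sA a E + a s = (a i + sA a (E'' - Finsupp.single s 1)) + a s := by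
          rw [hrel, h6]
          abel
        exact add_right_cancel h8
      rw [tmon_factor a h7]
      refine Ideal.mul_mem_left _ _ (Ideal.subset_span ⟨i, ⟨i, hiW, Finsupp.single s 1, ?_⟩, rfl⟩)
      rw [sA_single_one]
    · -- use the main combinatorial claim
      push_neg at hz
      have hZ₀0 : ((Finsupp.single i 1 + E'' : Fin n →₀ ℕ)) (ord p0) = 0 := by
        rw [hord0, Finsupp.add_apply, Finsupp.single_apply, if_neg (fun h => hsi h.symm)]
        omega
      have hZ₀1 : 1 ≤ ((Finsupp.single i 1 + E'' : Fin n →₀ ℕ)) (ord p1) := by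
        rw [hord1, Finsupp.add_apply, Finsupp.single_eq_same]
        omega
      obtain ⟨l, E₄, E₅, hg1, hg2⟩ := main_claim a hn1 hdiv (sA a E + a s) R hRirr hRτ hRs
        (Finsupp.single i 1 + E'') hZ₀τ hZ₀0 hZ₀1
      rw [hord0] at hg1 hg2
      rw [hord1] at hg1
      have h7 : sA a E = a l + sA a E₄ := by
        have h8 : sA a E + a s = (a l + sA a E₄) + a s := by
          rw [hg2]
          abel
        exact add_right_cancel h8
      rw [tmon_factor a h7]
      exact Ideal.mul_mem_left _ _ (Ideal.subset_span ⟨l, ⟨i, hiW, E₅, hg1⟩, rfl⟩)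

end ColonSec
open MvPolynomial

/-- **Corollary 1.3.**  If the reduced Gröbner basis of the toric ideal `I_A`
with respect to every reverse lexicographic order consists of quadratic
binomials, then the toric ring `K[A]` is strongly Koszul. -/
theorem all_rlex_quadratic_implies_stronglyKoszul
    (K : Type) [Field K] {n d : ℕ} (a : Fin n → (Fin d →₀ ℕ))
    (δ : ℕ) (hdeg : ∀ i, expDeg (a i) = δ) (hinj : Function.Injective a)
    (H : ∀ ord : Fin n ≃ Fin n, ∃ G : Finset (MvPolynomial (Fin n) K),
      IsReducedGB (rlexLT ord) (toricIdeal K a) G ∧ ∀ g ∈ G, IsQuadBinomial g) :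
    ToricStronglyKoszul K a := by
  classical
  intro r c hc j
  set s : Fin n := c j with hs
  set W : Set (Fin n) := c '' {k : Fin r | k < j} with hW
  have hsW : s ∉ W := by
    rintro ⟨k, hk, hck⟩
    have hkj : k = j := hc.injective hck
    rw [hkj] at hk
    exact lt_irrefl j hk
  refine ⟨toricGen K a '' {l | ∃ i' ∈ W, ∃ E₅, a l + a s = a i' + sA a E₅},
    Set.image_subset_range _ _, ?_⟩
  have himg : ((fun k => toricGen K a (c k)) '' {k : Fin r | k < j}) = toricGen K a '' W := by
    rw [hW, Set.image_image]
  apply le_antisymm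
  · -- the colon ideal is contained in the span of the distinguished generators
    intro v hv
    have hvs : v * toricGen K a s ∈ Ideal.span (toricGen K a '' W) := by
      rw [← himg]
      have h1 := Submodule.mem_colon.mp hv (toricGen K a (c j))
        (Ideal.subset_span (Set.mem_singleton _))
      rw [smul_eq_mul] at h1
      exact h1
    have hsupp : ∀ m ∈ (v : MvPolynomial (Fin d) K).support, ∃ Em, sA a Em = m :=
      support_mem_sA a v.2
    choose Em hEm using hsupp
    have hrelm : ∀ (m) (hm : m ∈ (v : MvPolynomial (Fin d) K).support),
        ∃ i' ∈ W, ∃ E'', sA a (Em m hm) + a s = a i' + sA a E'' := by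
      intro m hm
      have hmem : m + a s ∈
          ((v * toricGen K a s : toricRing K a) : MvPolynomial (Fin d) K).support := by
        have hcoe : ((v * toricGen K a s : toricRing K a) : MvPolynomial (Fin d) K)
            = (v : MvPolynomial (Fin d) K) * MvPolynomial.monomial (a s) 1 := rfl
        rw [hcoe, MvPolynomial.mem_support_iff, MvPolynomial.coeff_mul_monomial',
          if_pos le_add_self, add_tsub_cancel_right, mul_one]
        exact MvPolynomial.mem_support_iff.mp hm
      obtain ⟨i', hi', E'', hE''⟩ := mem_N_support a W _ hvs _ hmem
      exact ⟨i', hi', E'', by rw [hEm m hm, ← hE'']⟩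
    have hvdec : v = ∑ m ∈ (v : MvPolynomial (Fin d) K).support.attach,
        MvPolynomial.coeff m.1 (v : MvPolynomial (Fin d) K) • tmon a (Em m.1 m.2) := by
      apply Subtype.coe_injective
      calc (v : MvPolynomial (Fin d) K)
          = ∑ m ∈ (v : MvPolynomial (Fin d) K).support,
              MvPolynomial.monomial m (MvPolynomial.coeff m (v : MvPolynomial (Fin d) K)) :=
            MvPolynomial.as_sum _
        _ = ∑ m ∈ (v : MvPolynomial (Fin d) K).support.attach,
              MvPolynomial.monomial m.1 (MvPolynomial.coeff m.1 (v : MvPolynomial (Fin d) K)) :=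
            (Finset.sum_attach _ _).symm
        _ = ∑ m ∈ (v : MvPolynomial (Fin d) K).support.attach,
              MvPolynomial.coeff m.1 (v : MvPolynomial (Fin d) K) •
                MvPolynomial.monomial (sA a (Em m.1 m.2)) (1:K) := by
            refine Finset.sum_congr rfl (fun m _ => ?_)
            rw [hEm m.1 m.2, MvPolynomial.smul_monomial, smul_eq_mul, mul_one]
        _ = ((∑ m ∈ (v : MvPolynomial (Fin d) K).support.attach,
              MvPolynomial.coeff m.1 (v : MvPolynomial (Fin d) K) • tmon a (Em m.1 m.2) :
                toricRing K a) : MvPolynomial (Fin d) K) := by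
            show _ = (toricRing K a).val _
            rw [map_sum]
            refine Finset.sum_congr rfl (fun m _ => ?_)
            rw [map_smul]
            rfl
    rw [hvdec]
    apply Submodule.sum_mem
    intro m hm
    rw [Algebra.smul_def]
    apply Ideal.mul_mem_left
    obtain ⟨i', hi', E'', hE''⟩ := hrelm m.1 m.2
    exact mainMono a hdeg hinj H s W hsW (Em m.1 m.2) i' hi' E'' hE''
  · -- the distinguished generators lie in the colon ideal
    rw [Ideal.span_le]
    rintro x ⟨l, ⟨i', hi', E₅, hrel⟩, rfl⟩
    rw [SetLike.mem_coe, Submodule.mem_colon]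
    intro p hp
    obtain ⟨t, rfl⟩ := Ideal.mem_span_singleton'.mp hp
    have hfac : toricGen K a l * toricGen K a s = tmon a E₅ * toricGen K a i' := by
      apply Subtype.ext
      show MvPolynomial.monomial (a l) (1:K) * MvPolynomial.monomial (a s) 1
        = MvPolynomial.monomial (sA a E₅) 1 * MvPolynomial.monomial (a i') 1
      rw [MvPolynomial.monomial_mul, MvPolynomial.monomial_mul, one_mul, hrel,
        add_comm (a i')]
    have hre : toricGen K a l • (t * toricGen K a (c j))
        = (t * tmon a E₅) * toricGen K a i' := by
      rw [smul_eq_mul, ← hs]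
      calc toricGen K a l * (t * toricGen K a s)
          = t * (toricGen K a l * toricGen K a s) := by ring
        _ = t * (tmon a E₅ * toricGen K a i') := by rw [hfac]
        _ = (t * tmon a E₅) * toricGen K a i' := by ring
    rw [hre]
    apply Ideal.mul_mem_left
    obtain ⟨k, hk, rfl⟩ := hi'
    exact Ideal.subset_span ⟨k, hk, rfl⟩
end

section
/- Let K be a field and A = {u_1,...,u_n} a set of monomials of the same degree in K[t_1,...,t_d]. Suppose the toric ring K[A] is strongly Koszul and that the toric ideal I_A contains no quadratic binomial of the form x_i^2 − x_j x_k. Then K[A] is compressed, i.e., the initial ideal in_<(I_A) is a radical ideal for every reverse lexicographic order <. -/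
/-!
Common definitions: toric ideals/rings of monomial families, strong Koszulness
with respect to a system of algebra generators, initial ideals with respect to
a relation on exponent vectors, (reduced) Gröbner bases, the (graded) reverse
lexicographic order induced by an ordering of the variables, minimal monomial
generators, and compressedness.
-/

open MvPolynomial

open MvPolynomial

set_option maxHeartbeats 1000000
set_option synthInstance.maxHeartbeats 400000

noncomputable section

namespace TCaux

variable {n : ℕ}

theorem expDeg_eq_sum (w : Fin n →₀ ℕ) : expDeg w = ∑ i ∈ w.support, w i := rfl

theorem expDeg_add (x y : Fin n →₀ ℕ) : expDeg (x + y) = expDeg x + expDeg y := by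
  unfold expDeg
  exact Finsupp.sum_add_index' (fun _ => rfl) (fun _ _ _ => rfl)

@[simp] theorem expDeg_zero : expDeg (0 : Fin n →₀ ℕ) = 0 := rfl

@[simp] theorem expDeg_single (i : Fin n) (k : ℕ) : expDeg (Finsupp.single i k) = k := by
  unfold expDeg
  exact Finsupp.sum_single_index rfl

theorem apply_le_expDeg (w : Fin n →₀ ℕ) (i : Fin n) : w i ≤ expDeg w := by
  by_cases h : i ∈ w.support
  · exact Finset.single_le_sum (fun _ _ => Nat.zero_le _) h
  · simp [Finsupp.notMem_support_iff.mp h]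

theorem expDeg_eq_zero {w : Fin n →₀ ℕ} (h : expDeg w = 0) : w = 0 := by
  ext i
  have := apply_le_expDeg w i
  simp only [Finsupp.coe_zero, Pi.zero_apply]
  omega

theorem expDeg_mono {x y : Fin n →₀ ℕ} (h : x ≤ y) : expDeg x ≤ expDeg y := by
  have : y = x + (y - x) := (add_tsub_cancel_of_le h).symm
  rw [this, expDeg_add]; omega

theorem expDeg_tsub {x y : Fin n →₀ ℕ} (h : x ≤ y) :
    expDeg (y - x) = expDeg y - expDeg x := by
  have : y = x + (y - x) := (add_tsub_cancel_of_le h).symm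
  conv_rhs => rw [this]
  rw [expDeg_add]; omega

theorem eq_of_le_of_expDeg_le {x y : Fin n →₀ ℕ} (h : x ≤ y) (hd : expDeg y ≤ expDeg x) :
    x = y := by
  have h1 : y = x + (y - x) := (add_tsub_cancel_of_le h).symm
  have h2 : expDeg (y - x) = 0 := by
    have := expDeg_add x (y - x)
    rw [← h1] at this; omega
  have := expDeg_eq_zero h2
  rw [h1, this, add_zero]

theorem expDeg_lt_of_lt {x y : Fin n →₀ ℕ} (h : x ≤ y) (hne : x ≠ y) :
    expDeg x < expDeg y := by
  rcases Nat.lt_or_ge (expDeg x) (expDeg y) with h1 | h1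
  · exact h1
  · exact absurd (eq_of_le_of_expDeg_le h h1) hne

theorem eq_single_of_expDeg_one {w : Fin n →₀ ℕ} (h : expDeg w = 1) :
    ∃ i, w = Finsupp.single i 1 := by
  have hne : w ≠ 0 := by
    intro h0; rw [h0] at h; simp at h
  obtain ⟨i, hi⟩ := Finsupp.ne_iff.mp hne
  simp only [Finsupp.coe_zero, Pi.zero_apply] at hi
  refine ⟨i, ?_⟩
  have hle : Finsupp.single i 1 ≤ w := by
    rw [Finsupp.le_def]
    intro j
    rcases eq_or_ne j i with rfl | hj
    · simp; omega
    · simp [Finsupp.single_apply, Ne.symm hj]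
  have := eq_of_le_of_expDeg_le hle (by simp [h])
  exact this.symm

theorem eq_two_single_of_expDeg_two {w : Fin n →₀ ℕ} (h : expDeg w = 2) :
    ∃ i j, w = Finsupp.single i 1 + Finsupp.single j 1 := by
  have hne : w ≠ 0 := by
    intro h0; rw [h0] at h; simp at h
  obtain ⟨i, hi⟩ := Finsupp.ne_iff.mp hne
  simp only [Finsupp.coe_zero, Pi.zero_apply] at hi
  have hle : Finsupp.single i 1 ≤ w := by
    rw [Finsupp.le_def]
    intro j
    rcases eq_or_ne j i with rfl | hj
    · simp; omega
    · simp [Finsupp.single_apply, Ne.symm hj]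
  have hdeg : expDeg (w - Finsupp.single i 1) = 1 := by
    rw [expDeg_tsub hle]; simp [h]
  obtain ⟨j, hj⟩ := eq_single_of_expDeg_one hdeg
  refine ⟨i, j, ?_⟩
  have := add_tsub_cancel_of_le hle
  rw [hj] at this
  rw [← this, add_comm]


section rlex

variable (ord : Fin n ≃ Fin n)

theorem rlex_irrefl (x : Fin n →₀ ℕ) : ¬ rlexLT ord x x := by
  rintro (h | ⟨-, p, hp, -⟩)
  · omega
  · omega

theorem rlex_deg_le {x y : Fin n →₀ ℕ} (h : rlexLT ord x y) : expDeg x ≤ expDeg y := by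
  rcases h with h | ⟨h, -⟩ <;> omega

theorem rlex_trans {x y z : Fin n →₀ ℕ} (h1 : rlexLT ord x y) (h2 : rlexLT ord y z) :
    rlexLT ord x z := by
  rcases h1 with h1 | ⟨hd1, p1, hp1, hq1⟩
  · exact Or.inl (lt_of_lt_of_le h1 (rlex_deg_le ord h2))
  · rcases h2 with h2 | ⟨hd2, p2, hp2, hq2⟩
    · exact Or.inl (by omega)
    · refine Or.inr ⟨by omega, ?_⟩
      rcases lt_trichotomy p1 p2 with h | h | h
      · exact ⟨p1, by rw [← hq2 p1 h]; exact hp1, fun q hq => (hq1 q hq).trans (hq2 q (hq.trans h))⟩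
      · exact ⟨p1, by rw [h] at hp1 ⊢; omega,
          fun q hq => (hq1 q hq).trans (hq2 q (by rw [← h]; exact hq))⟩
      · exact ⟨p2, by rw [hq1 p2 h]; exact hp2, fun q hq => (hq1 q (hq.trans h)).trans (hq2 q hq)⟩

theorem rlex_total {x y : Fin n →₀ ℕ} (hne : x ≠ y) :
    rlexLT ord x y ∨ rlexLT ord y x := by
  rcases lt_trichotomy (expDeg x) (expDeg y) with h | h | h
  · exact Or.inl (Or.inl h)
  · have hset : (Finset.univ.filter (fun p => x (ord p) ≠ y (ord p))).Nonempty := by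
      obtain ⟨t, ht⟩ := Finsupp.ne_iff.mp hne
      exact ⟨ord.symm t, by simp [ht]⟩
    set s := Finset.univ.filter (fun p => x (ord p) ≠ y (ord p)) with hs
    set p0 := s.min' hset with hp0
    have hp0mem : p0 ∈ s := s.min'_mem hset
    have hp0ne : x (ord p0) ≠ y (ord p0) := by
      have := hp0mem; rw [hs] at this; simpa using this
    have hbefore : ∀ q : Fin n, q < p0 → x (ord q) = y (ord q) := by
      intro q hq
      by_contra hne'
      have : q ∈ s := by rw [hs]; simpa using hne'
      exact absurd (s.min'_le q this) (by omega)
    rcases Nat.lt_or_ge (x (ord p0)) (y (ord p0)) with h' | h'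
    · exact Or.inr (Or.inr ⟨h.symm, p0, h', fun q hq => (hbefore q hq).symm⟩)
    · exact Or.inl (Or.inr ⟨h, p0, by omega, hbefore⟩)
  · exact Or.inr (Or.inl h)

theorem rlex_asymm {x y : Fin n →₀ ℕ} (h : rlexLT ord x y) : ¬ rlexLT ord y x :=
  fun h' => rlex_irrefl ord x (rlex_trans ord h h')

theorem rlex_add_right {x y c : Fin n →₀ ℕ} :
    rlexLT ord (x + c) (y + c) ↔ rlexLT ord x y := by
  have hdeg : ∀ u v : Fin n →₀ ℕ, expDeg (u + c) = expDeg (v + c) ↔ expDeg u = expDeg v := by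
    intro u v; rw [expDeg_add, expDeg_add]; omega
  constructor
  · rintro (h | ⟨hd, p, hp, hq⟩)
    · rw [expDeg_add, expDeg_add] at h; exact Or.inl (by omega)
    · refine Or.inr ⟨(hdeg x y).mp hd, p, ?_, ?_⟩
      · simpa using hp
      · intro q hqlt
        have := hq q hqlt
        simpa using this
  · rintro (h | ⟨hd, p, hp, hq⟩)
    · exact Or.inl (by rw [expDeg_add, expDeg_add]; omega)
    · refine Or.inr ⟨(hdeg x y).mpr hd, p, ?_, ?_⟩
      · simpa using hp
      · intro q hqlt
        have := hq q hqlt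
        simp only [Finsupp.add_apply]
        omega

theorem rlex_small {X Y : Fin n →₀ ℕ} (z : Fin n) (hdeg : expDeg Y = expDeg X)
    (hX : ∀ t : Fin n, ord.symm t ≤ ord.symm z → X t = 0) (hYz : Y z ≠ 0) :
    rlexLT ord Y X := by
  have hset : (Finset.univ.filter (fun p => Y (ord p) ≠ X (ord p))).Nonempty := by
    refine ⟨ord.symm z, ?_⟩
    simp only [Finset.mem_filter, Finset.mem_univ, true_and, Equiv.apply_symm_apply]
    rw [hX z le_rfl]
    exact hYz
  set s := Finset.univ.filter (fun p => Y (ord p) ≠ X (ord p)) with hs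
  set p0 := s.min' hset with hp0
  have hp0mem : p0 ∈ s := s.min'_mem hset
  have hp0ne : Y (ord p0) ≠ X (ord p0) := by
    have := hp0mem; rw [hs] at this; simpa using this
  have hp0le : p0 ≤ ord.symm z := s.min'_le _ (by
    simp only [hs, Finset.mem_filter, Finset.mem_univ, true_and, Equiv.apply_symm_apply]
    rw [hX z le_rfl]; exact hYz)
  have hXp0 : X (ord p0) = 0 := hX (ord p0) (by simpa using hp0le)
  refine Or.inr ⟨hdeg, p0, by omega, ?_⟩
  intro q hq
  by_contra hne'
  have : q ∈ s := by rw [hs]; simpa using hne'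
  exact absurd (s.min'_le q this) (by omega)

theorem rlex_not_lt_zero (v : Fin n →₀ ℕ) : ¬ rlexLT ord v 0 := by
  rintro (h | ⟨hd, p, hp, -⟩)
  · simp at h
  · have : v = 0 := expDeg_eq_zero (by simpa using hd)
    rw [this] at hp; simp at hp

theorem rlex_max_exists (s : Finset (Fin n →₀ ℕ)) (hs : s.Nonempty) :
    ∃ m ∈ s, ∀ x ∈ s, x ≠ m → rlexLT ord x m := by
  classical
  induction s using Finset.induction_on with
  | empty => exact absurd hs (by simp)
  | @insert a s' ha ih =>
    rcases s'.eq_empty_or_nonempty with rfl | hs'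
    · refine ⟨a, by simp, ?_⟩
      intro x hx hxa
      simp only [Finset.mem_insert, Finset.notMem_empty, or_false] at hx
      exact absurd hx hxa
    · obtain ⟨m, hm, hmax⟩ := ih hs'
      rcases eq_or_ne a m with rfl | ham
      · exact ⟨a, by simp, fun x hx hxm => hmax x (by
          rcases Finset.mem_insert.mp hx with rfl | h
          · exact absurd rfl hxm
          · exact h) hxm⟩
      rcases rlex_total ord ham with h | h
      · refine ⟨m, by simp [hm], ?_⟩
        intro x hx hxm
        rcases Finset.mem_insert.mp hx with rfl | hxs
        · exact h
        · exact hmax x hxs hxm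
      · refine ⟨a, by simp, ?_⟩
        intro x hx hxa
        rcases Finset.mem_insert.mp hx with rfl | hxs
        · exact absurd rfl hxa
        · rcases eq_or_ne x m with rfl | hxm
          · exact h
          · exact rlex_trans ord (hmax x hxs hxm) h

theorem rlex_min_exists (s : Finset (Fin n →₀ ℕ)) (hs : s.Nonempty) :
    ∃ m ∈ s, ∀ x ∈ s, x ≠ m → rlexLT ord m x := by
  classical
  induction s using Finset.induction_on with
  | empty => exact absurd hs (by simp)
  | @insert a s' ha ih =>
    rcases s'.eq_empty_or_nonempty with rfl | hs'
    · refine ⟨a, by simp, ?_⟩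
      intro x hx hxa
      simp only [Finset.mem_insert, Finset.notMem_empty, or_false] at hx
      exact absurd hx hxa
    · obtain ⟨m, hm, hmin⟩ := ih hs'
      rcases eq_or_ne a m with rfl | ham
      · exact ⟨a, by simp, fun x hx hxm => hmin x (by
          rcases Finset.mem_insert.mp hx with rfl | h
          · exact absurd rfl hxm
          · exact h) hxm⟩
      rcases rlex_total ord ham with h | h
      · refine ⟨a, by simp, ?_⟩
        intro x hx hxa
        rcases Finset.mem_insert.mp hx with rfl | hxs
        · exact absurd rfl hxa
        · rcases eq_or_ne x m with rfl | hxm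
          · exact h
          · exact rlex_trans ord h (hmin x hxs hxm)
      · refine ⟨m, by simp [hm], ?_⟩
        intro x hx hxm
        rcases Finset.mem_insert.mp hx with rfl | hxs
        · exact h
        · exact hmin x hxs hxm

end rlex

section Phi

variable {d : ℕ} (a : Fin n → (Fin d →₀ ℕ))

def Phi (e : Fin n →₀ ℕ) : Fin d →₀ ℕ := e.sum fun i c => c • a i

theorem Phi_add (x y : Fin n →₀ ℕ) : Phi a (x + y) = Phi a x + Phi a y :=
  Finsupp.sum_add_index' (fun _ => zero_smul _ _) (fun _ b₁ b₂ => add_smul b₁ b₂ _)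

@[simp] theorem Phi_zero : Phi a 0 = 0 := Finsupp.sum_zero_index

@[simp] theorem Phi_single (i : Fin n) (k : ℕ) : Phi a (Finsupp.single i k) = k • a i :=
  Finsupp.sum_single_index (zero_smul _ _)

theorem expDeg_smul (k : ℕ) (v : Fin d →₀ ℕ) : expDeg (k • v) = k * expDeg v := by
  induction k with
  | zero => simp
  | succ m ih => rw [succ_nsmul, expDeg_add, ih]; ring

theorem expDeg_Phi {δ : ℕ} (hdeg : ∀ i, expDeg (a i) = δ) (e : Fin n →₀ ℕ) :
    expDeg (Phi a e) = δ * expDeg e := by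
  induction e using Finsupp.induction with
  | zero => simp
  | single_add i k f hif hk ih =>
    rw [Phi_add, expDeg_add, expDeg_add, ih, Phi_single, expDeg_smul, hdeg, expDeg_single]
    ring

theorem expDeg_eq_of_Phi_eq {δ : ℕ} (hdeg : ∀ i, expDeg (a i) = δ) (hδ : 0 < δ)
    {x y : Fin n →₀ ℕ} (h : Phi a x = Phi a y) : expDeg x = expDeg y := by
  have h1 := expDeg_Phi a hdeg x
  have h2 := expDeg_Phi a hdeg y
  rw [h] at h1
  have := h1.symm.trans h2
  exact Nat.eq_of_mul_eq_mul_left hδ this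

theorem Phi_tsub {x y : Fin n →₀ ℕ} (h : x ≤ y) :
    Phi a (y - x) + Phi a x = Phi a y := by
  rw [← Phi_add, tsub_add_cancel_of_le h]

end Phi

section Toric

variable {K : Type} [Field K] {n d : ℕ} (a : Fin n → (Fin d →₀ ℕ))

theorem prod_mon (e : Fin n →₀ ℕ) :
    (e.prod fun i k => (monomial (a i) (1:K)) ^ k) = monomial (Phi a e) 1 := by
  induction e using Finsupp.induction with
  | zero => rw [Finsupp.prod_zero_index, Phi_zero, monomial_zero', C_1]
  | single_add i k f hif hk ih =>
    rw [Finsupp.prod_add_index' (fun _ => pow_zero _) (fun _ _ _ => pow_add _ _ _),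
      Finsupp.prod_single_index (h := fun x k => (monomial (a x) (1:K)) ^ k) (pow_zero _),
      ih, Phi_add, Phi_single, monomial_pow, monomial_mul, one_pow, one_mul]

theorem pi_monomial (e : Fin n →₀ ℕ) (c : K) :
    MvPolynomial.aeval (fun i => (monomial (a i) (1:K) : MvPolynomial (Fin d) K))
      (monomial e c) = monomial (Phi a e) c := by
  rw [aeval_monomial, prod_mon, algebraMap_eq, C_mul_monomial, mul_one]

theorem mem_toricIdeal_iff (f : MvPolynomial (Fin n) K) :
    f ∈ toricIdeal K a ↔
      MvPolynomial.aeval (fun i => (monomial (a i) (1:K) : MvPolynomial (Fin d) K)) f = 0 := by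
  rw [toricIdeal, RingHom.mem_ker, AlgHom.toRingHom_eq_coe, RingHom.coe_coe]

theorem binomial_mem {b c : Fin n →₀ ℕ} (h : Phi a b = Phi a c) :
    (monomial b (1:K) - monomial c 1) ∈ toricIdeal K a := by
  rw [mem_toricIdeal_iff, map_sub, pi_monomial, pi_monomial, h, sub_self]

theorem exists_partner {f : MvPolynomial (Fin n) K} (hf : f ∈ toricIdeal K a)
    {dd : Fin n →₀ ℕ} (hdd : dd ∈ f.support) :
    ∃ v ∈ f.support, v ≠ dd ∧ Phi a v = Phi a dd := by
  classical
  rw [mem_toricIdeal_iff] at hf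
  have hsum : (∑ v ∈ f.support, monomial (Phi a v) (coeff v f)) = 0 := by
    rw [← hf]
    conv_rhs => rw [f.as_sum]
    rw [map_sum]
    exact Finset.sum_congr rfl fun v _ => (pi_monomial a v (coeff v f)).symm
  have hcoeff : (∑ v ∈ f.support, if Phi a v = Phi a dd then coeff v f else 0) = 0 := by
    have h2 := congrArg (coeff (Phi a dd)) hsum
    rw [coeff_sum, coeff_zero] at h2
    calc (∑ v ∈ f.support, if Phi a v = Phi a dd then coeff v f else 0)
        = ∑ v ∈ f.support, coeff (Phi a dd) (monomial (Phi a v) (coeff v f)) :=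
          Finset.sum_congr rfl fun v _ => (coeff_monomial _ _ _).symm
      _ = 0 := h2
  by_contra hcon
  push_neg at hcon
  have hrest : ∀ v ∈ f.support \ {dd}, (if Phi a v = Phi a dd then coeff v f else 0) = 0 := by
    intro v hv
    rcases Finset.mem_sdiff.mp hv with ⟨hv1, hv2⟩
    have hne : v ≠ dd := by simpa using hv2
    rcases eq_or_ne (Phi a v) (Phi a dd) with he | he
    · exact absurd he (hcon v hv1 hne)
    · simp [he]
  have := Finset.sum_eq_sum_sdiff_singleton_add hdd
    (fun v => if Phi a v = Phi a dd then coeff v f else 0)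
  rw [this, Finset.sum_eq_zero hrest, zero_add, if_pos rfl] at hcoeff
  exact (mem_support_iff.mp hdd) hcoeff

theorem mon_mem (w : Fin n →₀ ℕ) :
    (monomial (Phi a w) (1:K) : MvPolynomial (Fin d) K) ∈ toricRing K a := by
  induction w using Finsupp.induction with
  | zero =>
    rw [Phi_zero, monomial_zero', C_1]
    exact Subalgebra.one_mem _
  | single_add i k f hif hk ih =>
    rw [Phi_add, Phi_single, ← one_mul (1:K), ← monomial_mul]
    refine Subalgebra.mul_mem _ ?_ ih
    rw [← one_pow k, ← monomial_pow]
    exact Subalgebra.pow_mem _ (Algebra.subset_adjoin (Set.mem_range_self i)) _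

theorem supp_mem {x : MvPolynomial (Fin d) K} (hx : x ∈ toricRing K a)
    {μ : Fin d →₀ ℕ} (hμ : μ ∈ x.support) : ∃ w, μ = Phi a w := by
  classical
  induction hx using Algebra.adjoin_induction generalizing μ with
  | mem y hy =>
    obtain ⟨i, rfl⟩ := hy
    rw [support_monomial, if_neg (one_ne_zero)] at hμ
    exact ⟨Finsupp.single i 1, by simp [Finset.mem_singleton.mp hμ]⟩
  | algebraMap r =>
    have hC : (algebraMap K (MvPolynomial (Fin d) K)) r = monomial 0 r := by
      rw [algebraMap_eq, monomial_zero']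
    rw [hC, support_monomial] at hμ
    split_ifs at hμ
    · simp at hμ
    · exact ⟨0, by simp [Finset.mem_singleton.mp hμ]⟩
  | add p q hp hq ihp ihq =>
    have := MvPolynomial.support_add (p := p) (q := q) hμ
    rcases Finset.mem_union.mp this with h | h
    · exact ihp h
    · exact ihq h
  | mul p q hp hq ihp ihq =>
    have := MvPolynomial.support_mul p q hμ
    rw [Finset.mem_add] at this
    obtain ⟨μ₁, hμ₁, μ₂, hμ₂, rfl⟩ := this
    obtain ⟨w₁, rfl⟩ := ihp hμ₁
    obtain ⟨w₂, rfl⟩ := ihq hμ₂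
    exact ⟨w₁ + w₂, (Phi_add a w₁ w₂).symm⟩

theorem noquad_comb
    (hnoquad : ∀ i j k : Fin n,
      (MvPolynomial.monomial (Finsupp.single i 2) (1 : K)
        - MvPolynomial.monomial (Finsupp.single j 1 + Finsupp.single k 1) (1 : K)
          ∈ toricIdeal K a) →
      Finsupp.single i 2 = Finsupp.single j 1 + Finsupp.single k 1)
    {α l m : Fin n} (h : (2:ℕ) • a α = a l + a m) : l = α ∧ m = α := by
  have hPhi : Phi a (Finsupp.single α 2) = Phi a (Finsupp.single l 1 + Finsupp.single m 1) := by
    rw [Phi_single, Phi_add, Phi_single, Phi_single, one_smul, one_smul, h]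
  have heq := hnoquad α l m (binomial_mem a hPhi)
  have h1 := DFunLike.congr_fun heq α
  rw [Finsupp.single_eq_same, Finsupp.add_apply, Finsupp.single_apply, Finsupp.single_apply] at h1
  by_cases hl : l = α
  · by_cases hm : m = α
    · exact ⟨hl, hm⟩
    · rw [if_pos hl, if_neg hm] at h1; omega
  · rw [if_neg hl] at h1; split_ifs at h1 <;> omega

theorem skPairLT (hSK : ToricStronglyKoszul K a) {δ : ℕ} (hdeg : ∀ i, expDeg (a i) = δ)
    (hδ : 0 < δ) {i k : Fin n} (hik : i < k) (e w : Fin n →₀ ℕ)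
    (heq : Phi a e + a k = a i + Phi a w) :
    ∃ l w₂ m, Phi a e = a l + Phi a w₂ ∧ a l + a k = a i + a m := by
  classical
  have hmono : StrictMono ![i, k] := by
    intro x y hxy
    fin_cases x <;> fin_cases y <;> simp_all
  obtain ⟨S, hSrange, hcolon⟩ := hSK 2 ![i, k] hmono 1
  have hset : ((fun k' => toricGen K a (![i, k] k')) '' {k' : Fin 2 | k' < 1})
      = {toricGen K a i} := by
    ext x
    constructor
    · rintro ⟨p, hp, rfl⟩
      have hp0 : p = 0 := by
        fin_cases p
        · rfl
        · exact absurd hp (by decide)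
      subst hp0
      simp
    · rintro rfl
      exact ⟨0, by simp, by simp⟩
  rw [hset] at hcolon
  have hc1 : (![i, k] (1 : Fin 2)) = k := rfl
  rw [hc1] at hcolon
  set g := toricGen K a with hg
  set te : toricRing K a := ⟨monomial (Phi a e) 1, mon_mem a e⟩ with hte
  set tw : toricRing K a := ⟨monomial (Phi a w) 1, mon_mem a w⟩ with htw
  have hprod : tw * g i = te * g k := by
    apply Subtype.ext
    show (monomial (Phi a w) 1 * monomial (a i) 1 : MvPolynomial (Fin d) K)
      = monomial (Phi a e) 1 * monomial (a k) 1
    rw [monomial_mul, monomial_mul, one_mul, heq, add_comm]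
  have hmem : te ∈ Submodule.colon (Ideal.span {g i}) (Ideal.span {g k}) :=
    Ideal.mem_colon_span_singleton.mpr (Ideal.mem_span_singleton'.mpr ⟨tw, hprod⟩)
  rw [hcolon] at hmem
  obtain ⟨c, hcsupp, hcsum⟩ := Submodule.mem_span_set.mp hmem
  have hval : (((c.sum fun mi r => r • mi : toricRing K a)) : MvPolynomial (Fin d) K)
      = monomial (Phi a e) 1 := by rw [hcsum]
  have hval' : (∑ mi ∈ c.support, ((c mi : toricRing K a) : MvPolynomial (Fin d) K) * (mi : MvPolynomial (Fin d) K))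
      = monomial (Phi a e) 1 := by
    rw [← hval]
    simp only [Finsupp.sum, AddSubmonoidClass.coe_finset_sum, smul_eq_mul, MulMemClass.coe_mul]
  have hcoeff1 : coeff (Phi a e) (∑ mi ∈ c.support, ((c mi : toricRing K a) : MvPolynomial (Fin d) K) * (mi : MvPolynomial (Fin d) K)) ≠ 0 := by
    rw [hval', coeff_monomial, if_pos rfl]
    exact one_ne_zero
  rw [coeff_sum] at hcoeff1
  obtain ⟨mi, hmi, hne⟩ := Finset.exists_ne_zero_of_sum_ne_zero hcoeff1
  have hmiS : mi ∈ S := hcsupp hmi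
  obtain ⟨l, hl⟩ := hSrange hmiS
  have hmi1 : (mi : MvPolynomial (Fin d) K) = monomial (a l) 1 := by rw [← hl]; rfl
  rw [hmi1, coeff_mul_monomial'] at hne
  split_ifs at hne with hle
  · rw [mul_one] at hne
    obtain ⟨w₂, hw₂⟩ := supp_mem a (c mi).2 (mem_support_iff.mpr hne)
    have he2 : Phi a e = a l + Phi a w₂ := by
      rw [← hw₂, add_tsub_cancel_of_le hle]
    -- now the relation for l
    have hlcolon : g l ∈ Ideal.span S := Ideal.subset_span (hl ▸ hmiS)
    rw [← hcolon, Ideal.mem_colon_span_singleton] at hlcolon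
    obtain ⟨r, hr⟩ := Ideal.mem_span_singleton'.mp hlcolon
    have hrval : (r : MvPolynomial (Fin d) K) * monomial (a i) 1 = monomial (a l + a k) 1 := by
      have := congrArg (Subalgebra.val (toricRing K a)) hr
      rw [map_mul, map_mul] at this
      calc (r : MvPolynomial (Fin d) K) * monomial (a i) 1
          = (monomial (a l) 1 : MvPolynomial (Fin d) K) * monomial (a k) 1 := this
        _ = monomial (a l + a k) 1 := by rw [monomial_mul, one_mul]
    have hco2 : coeff (a l + a k) ((r : MvPolynomial (Fin d) K) * monomial (a i) 1) ≠ 0 := by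
      rw [hrval, coeff_monomial, if_pos rfl]; exact one_ne_zero
    rw [coeff_mul_monomial'] at hco2
    split_ifs at hco2 with hle2
    · rw [mul_one] at hco2
      obtain ⟨w₃, hw₃⟩ := supp_mem a r.2 (mem_support_iff.mpr hco2)
      have hrel : a l + a k = a i + Phi a w₃ := by
        rw [← hw₃, add_tsub_cancel_of_le hle2]
      have hdeg3 : expDeg w₃ = 1 := by
        have h1 : expDeg (a l + a k) = expDeg (a i + Phi a w₃) := by rw [hrel]
        rw [expDeg_add, expDeg_add, expDeg_Phi a hdeg, hdeg, hdeg, hdeg] at h1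
        have : δ * expDeg w₃ = δ := by omega
        have := Nat.eq_of_mul_eq_mul_left hδ (by omega : δ * expDeg w₃ = δ * 1)
        omega
      obtain ⟨m, hm⟩ := eq_single_of_expDeg_one hdeg3
      refine ⟨l, w₂, m, he2, ?_⟩
      rw [hrel, hm, Phi_single, one_smul]
    · exact absurd rfl hco2
  · exact absurd rfl hne

theorem skPair (hSK : ToricStronglyKoszul K a) {δ : ℕ} (hdeg : ∀ i, expDeg (a i) = δ)
    (hδ : 0 < δ) {i k : Fin n} (hik : i ≠ k) (e w : Fin n →₀ ℕ)
    (heq : Phi a e + a k = a i + Phi a w) :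
    ∃ l w₂ m, Phi a e = a l + Phi a w₂ ∧ a l + a k = a i + a m := by
  rcases lt_or_gt_of_ne hik with h | h
  · exact skPairLT a hSK hdeg hδ h e w heq
  · have heq' : Phi a w + a i = a k + Phi a e := by
      rw [add_comm (Phi a w) (a i), add_comm (a k) (Phi a e)]
      exact heq.symm
    obtain ⟨l₁, w₂, m₁, h1, h2⟩ := skPairLT a hSK hdeg hδ h w e heq'
    refine ⟨m₁, w₂, l₁, ?_, ?_⟩
    · have hstep : a k + Phi a e = a k + (a m₁ + Phi a w₂) := by
        rw [add_comm (a k) (Phi a e), heq, h1]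
        calc a i + (a l₁ + Phi a w₂) = (a l₁ + a i) + Phi a w₂ := by abel
          _ = (a k + a m₁) + Phi a w₂ := by rw [h2]
          _ = a k + (a m₁ + Phi a w₂) := by abel
      exact add_left_cancel hstep
    · rw [add_comm (a m₁) (a k), ← h2, add_comm]
  
end Toric

section InitialSec

variable {n d : ℕ} (a : Fin n → (Fin d →₀ ℕ)) (ord : Fin n ≃ Fin n)

/-- Combinatorial notion of an initial exponent: the leading exponent of some binomial
in the toric ideal. -/
def TInitial (dd : Fin n →₀ ℕ) : Prop :=
  ∃ v, Phi a v = Phi a dd ∧ v ≠ dd ∧ rlexLT ord v dd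

variable {K : Type} [Field K]

theorem binomial_supp {dd v : Fin n →₀ ℕ} (hne : v ≠ dd) (x : Fin n →₀ ℕ) :
    x ∈ (monomial dd (1:K) - monomial v 1).support ↔ (x = dd ∨ x = v) := by
  rw [mem_support_iff, coeff_sub, coeff_monomial, coeff_monomial]
  rcases eq_or_ne x dd with rfl | hxd
  · rw [if_pos rfl, if_neg hne]
    simp
  · rw [if_neg (Ne.symm hxd)]
    rcases eq_or_ne x v with rfl | hxv
    · rw [if_pos rfl]
      simp [hxd]
    · rw [if_neg (Ne.symm hxv)]
      simp [hxd, hxv]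

theorem initialIdeal_eq :
    initialIdeal (rlexLT ord) (toricIdeal K a)
      = Ideal.span ((fun dd => monomial dd (1:K)) '' {dd | TInitial a ord dd}) := by
  apply le_antisymm
  · rw [initialIdeal, Ideal.span_le]
    rintro m ⟨f, hfI, dd, hinit, rfl⟩
    apply Ideal.subset_span
    obtain ⟨v, hv, hvne, hvPhi⟩ := exists_partner a hfI hinit.1
    exact ⟨dd, ⟨v, hvPhi, hvne, hinit.2 v hv hvne⟩, rfl⟩
  · rw [Ideal.span_le]
    rintro m ⟨dd, ⟨v, hvPhi, hvne, hvlt⟩, rfl⟩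
    apply Ideal.subset_span
    refine ⟨monomial dd (1:K) - monomial v 1, binomial_mem a hvPhi.symm, dd, ⟨?_, ?_⟩, rfl⟩
    · exact (binomial_supp hvne dd).mpr (Or.inl rfl)
    · intro d' hd' hdne
      rcases (binomial_supp hvne d').mp hd' with rfl | rfl
      · exact absurd rfl hdne
      · exact hvlt

/-- Maximal exponent of a polynomial with respect to rlex. -/
def IsMaxExp (p : MvPolynomial (Fin n) K) (dd : Fin n →₀ ℕ) : Prop :=
  dd ∈ p.support ∧ ∀ d' ∈ p.support, d' ≠ dd → rlexLT ord d' dd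

theorem exists_maxExp {p : MvPolynomial (Fin n) K} (hp : p ≠ 0) :
    ∃ dd, IsMaxExp ord p dd := by
  obtain ⟨m, hm, hmax⟩ := rlex_max_exists ord p.support (by
    rw [Finset.nonempty_iff_ne_empty]
    simpa [MvPolynomial.support_eq_empty] using hp)
  exact ⟨m, hm, hmax⟩

theorem rlex_add_lt {x d₁ y d₂ : Fin n →₀ ℕ}
    (hx : x = d₁ ∨ rlexLT ord x d₁) (hy : y = d₂ ∨ rlexLT ord y d₂)
    (hne : ¬(x = d₁ ∧ y = d₂)) : rlexLT ord (x + y) (d₁ + d₂) := by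
  rcases hx with rfl | hx
  · rcases hy with rfl | hy
    · exact absurd ⟨rfl, rfl⟩ hne
    · rw [add_comm x y, add_comm x d₂]
      exact (rlex_add_right ord).mpr hy
  · rcases hy with rfl | hy
    · exact (rlex_add_right ord).mpr hx
    · have h1 : rlexLT ord (x + y) (d₁ + y) := (rlex_add_right ord).mpr hx
      have h2 : rlexLT ord (d₁ + y) (d₁ + d₂) := by
        rw [add_comm d₁ y, add_comm d₁ d₂]
        exact (rlex_add_right ord).mpr hy
      exact rlex_trans ord h1 h2

theorem isMax_mul {p q : MvPolynomial (Fin n) K} {d₁ d₂ : Fin n →₀ ℕ}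
    (hp : IsMaxExp ord p d₁) (hq : IsMaxExp ord q d₂) :
    IsMaxExp ord (p * q) (d₁ + d₂) := by
  classical
  have hcoeff : coeff (d₁ + d₂) (p * q) = coeff d₁ p * coeff d₂ q := by
    rw [coeff_mul]
    apply Finset.sum_eq_single_of_mem (d₁, d₂) (Finset.HasAntidiagonal.mem_antidiagonal.mpr rfl)
    rintro ⟨x, y⟩ hmem hne
    have hxy : x + y = d₁ + d₂ := Finset.HasAntidiagonal.mem_antidiagonal.mp hmem
    by_contra hc
    have hxp : x ∈ p.support := mem_support_iff.mpr fun h => hc (by simp [h])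
    have hyq : y ∈ q.support := mem_support_iff.mpr fun h => hc (by simp [h])
    have hx : x = d₁ ∨ rlexLT ord x d₁ := by
      rcases eq_or_ne x d₁ with h | h
      · exact Or.inl h
      · exact Or.inr (hp.2 x hxp h)
    have hy : y = d₂ ∨ rlexLT ord y d₂ := by
      rcases eq_or_ne y d₂ with h | h
      · exact Or.inl h
      · exact Or.inr (hq.2 y hyq h)
    have hne2 : ¬(x = d₁ ∧ y = d₂) := by
      rintro ⟨rfl, rfl⟩
      exact hne rfl
    have := rlex_add_lt ord hx hy hne2
    rw [hxy] at this
    exact rlex_irrefl ord _ this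
  constructor
  · rw [mem_support_iff, hcoeff]
    exact mul_ne_zero (mem_support_iff.mp hp.1) (mem_support_iff.mp hq.1)
  · intro d' hd' hne
    have := MvPolynomial.support_mul p q hd'
    rw [Finset.mem_add] at this
    obtain ⟨x, hx, y, hy, rfl⟩ := this
    have hx' : x = d₁ ∨ rlexLT ord x d₁ := by
      rcases eq_or_ne x d₁ with h | h
      · exact Or.inl h
      · exact Or.inr (hp.2 x hx h)
    have hy' : y = d₂ ∨ rlexLT ord y d₂ := by
      rcases eq_or_ne y d₂ with h | h
      · exact Or.inl h
      · exact Or.inr (hq.2 y hy h)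
    refine rlex_add_lt ord hx' hy' ?_
    rintro ⟨rfl, rfl⟩
    exact hne rfl

theorem isMax_pow {p : MvPolynomial (Fin n) K} {dd : Fin n →₀ ℕ}
    (h : IsMaxExp ord p dd) (N : ℕ) (hN : 0 < N) : IsMaxExp ord (p ^ N) (N • dd) := by
  induction N with
  | zero => omega
  | succ m ih =>
    rcases Nat.eq_zero_or_pos m with rfl | hm
    · simpa using h
    · rw [pow_succ, succ_nsmul]
      exact isMax_mul ord (ih hm) h

theorem radical_span_initial
    (hsq : ∀ dd, TInitial a ord dd → ∃ e, TInitial a ord e ∧ e ≤ dd ∧ ∀ x, e x ≤ 1) :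
    (Ideal.span ((fun dd => monomial dd (1:K)) '' {dd | TInitial a ord dd})).radical
      = Ideal.span ((fun dd => monomial dd (1:K)) '' {dd | TInitial a ord dd}) := by
  classical
  set J := Ideal.span ((fun dd => monomial dd (1:K)) '' {dd | TInitial a ord dd}) with hJ
  refine le_antisymm ?_ Ideal.le_radical
  have key : ∀ N : ℕ, ∀ f : MvPolynomial (Fin n) K, f.support.card ≤ N →
      f ∈ J.radical → f ∈ J := by
    intro N
    induction N with
    | zero =>
      intro f hcard _
      have : f.support = ∅ := Finset.card_eq_zero.mp (by omega)
      have : f = 0 := MvPolynomial.support_eq_empty.mp this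
      rw [this]
      exact Ideal.zero_mem J
    | succ N ih =>
      intro f hcard hf
      rcases eq_or_ne f 0 with rfl | hne
      · exact Ideal.zero_mem J
      obtain ⟨dd, hdd⟩ := exists_maxExp ord hne
      obtain ⟨k, hk⟩ := Ideal.mem_radical_iff.mp hf
      rcases Nat.eq_zero_or_pos k with rfl | hkpos
      · rw [pow_zero] at hk
        have : J = ⊤ := (Ideal.eq_top_iff_one J).mpr hk
        rw [this]
        exact Submodule.mem_top
      have hmaxpow := isMax_pow ord hdd k hkpos
      have hdiv := mem_ideal_span_monomial_image.mp hk (k • dd) hmaxpow.1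
      obtain ⟨e, he, hle⟩ := hdiv
      obtain ⟨e', he', hle', hsf⟩ := hsq e he
      have he'dd : e' ≤ dd := by
        rw [Finsupp.le_def]
        intro x
        have h1 : e' x ≤ 1 := hsf x
        have h2 : e' x ≤ k * dd x := by
          have := (Finsupp.le_def.mp (hle'.trans hle)) x
          simpa [Finsupp.smul_apply] using this
        rcases Nat.eq_zero_or_pos (dd x) with h | h
        · rw [h] at h2 ⊢
          omega
        · omega
      have hhead : (monomial dd (coeff dd f) : MvPolynomial (Fin n) K) ∈ J := by
        rw [hJ]
        apply mem_ideal_span_monomial_image.mpr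
        intro xi hxi
        rw [support_monomial] at hxi
        split_ifs at hxi
        · simp at hxi
        · rw [Finset.mem_singleton] at hxi
          exact ⟨e', he', hxi ▸ he'dd⟩
      have hf' : f - monomial dd (coeff dd f) ∈ J.radical :=
        Submodule.sub_mem _ hf (Ideal.le_radical hhead)
      have hsupp' : (f - monomial dd (coeff dd f)).support = f.support.erase dd := by
        ext x
        rw [Finset.mem_erase, mem_support_iff, coeff_sub, coeff_monomial, mem_support_iff]
        rcases eq_or_ne x dd with rfl | hxd
        · rw [if_pos rfl]
          simp
        · rw [if_neg (Ne.symm hxd)]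
          simp [hxd]
      have hcard' : (f - monomial dd (coeff dd f)).support.card ≤ N := by
        rw [hsupp']
        have := Finset.card_erase_of_mem hdd.1
        omega
      have := ih _ hcard' hf'
      have hfinal := Ideal.add_mem J this hhead
      rw [sub_add_cancel] at hfinal
      exact hfinal
  intro f hf
  exact key f.support.card f le_rfl hf

end InitialSec

section MainComb

variable {n d : ℕ} (a : Fin n → (Fin d →₀ ℕ)) (ord : Fin n ≃ Fin n)

theorem exists_fibermin {δ : ℕ} (hdeg : ∀ i, expDeg (a i) = δ) (hδ : 0 < δ)
    {u : Fin n →₀ ℕ} (hu : TInitial a ord u) :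
    ∃ v, Phi a v = Phi a u ∧ v ≠ u ∧ rlexLT ord v u ∧
      (∀ w, Phi a w = Phi a u → w ≠ v → rlexLT ord v w) := by
  classical
  set C : Fin n →₀ ℕ := Finsupp.equivFunOnFinite.symm (fun _ => expDeg u) with hC
  have hCval : ∀ x, C x = expDeg u := fun x => rfl
  have hfib : ∀ w, Phi a w = Phi a u → w ∈ (Finset.Iic C).filter (fun w => Phi a w = Phi a u) := by
    intro w hw
    rw [Finset.mem_filter, Finset.mem_Iic]
    refine ⟨?_, hw⟩
    rw [Finsupp.le_def]
    intro x
    rw [hCval]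
    calc w x ≤ expDeg w := apply_le_expDeg w x
      _ = expDeg u := expDeg_eq_of_Phi_eq a hdeg hδ hw
  have hne : ((Finset.Iic C).filter (fun w => Phi a w = Phi a u)).Nonempty :=
    ⟨u, hfib u rfl⟩
  obtain ⟨v, hvmem, hvmin⟩ := rlex_min_exists ord _ hne
  have hvPhi : Phi a v = Phi a u := (Finset.mem_filter.mp hvmem).2
  have hvne : v ≠ u := by
    rintro rfl
    obtain ⟨v₀, h1, h2, h3⟩ := hu
    exact rlex_asymm ord h3 (hvmin v₀ (hfib v₀ h1) h2)
  refine ⟨v, hvPhi, hvne, hvmin u (hfib u rfl) (Ne.symm hvne), ?_⟩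
  intro w hw hwv
  exact hvmin w (hfib w hw) hwv

/-- The key inductive "peeling" process. -/
theorem process {δ : ℕ} (hdeg : ∀ i, expDeg (a i) = δ) (hδ : 0 < δ)
    (hsk : ∀ i k : Fin n, i ≠ k → ∀ e w : Fin n →₀ ℕ,
      Phi a e + a k = a i + Phi a w →
      ∃ l w₂ m, Phi a e = a l + Phi a w₂ ∧ a l + a k = a i + a m)
    (hnq : ∀ α l m : Fin n, (2:ℕ) • a α = a l + a m → l = α ∧ m = α)
    {u : Fin n →₀ ℕ} {z α : Fin n}
    (hzu : ∀ k, u k ≠ 0 → ord.symm z < ord.symm k)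
    (hmin : ∀ w, w ≤ u → w ≠ u → ¬ TInitial a ord w) :
    ∀ q' : ℕ, 2 ≤ q' → ∀ T lam ω ρ, expDeg T = q' → Finsupp.single α 2 ≤ T → T ≤ u →
      T lam = 0 → Phi a T = a lam + Phi a ω →
      a lam + Phi a (u - T) = a z + Phi a ρ → False := by
  have huz : u z = 0 := by
    by_contra h
    exact absurd (hzu z h) (lt_irrefl _)
  intro q'
  induction q' using Nat.strong_induction_on with
  | _ q' IH =>
    intro hq2 T lam ω ρ hTdeg hT2 hTu hlam hTω hinv
    rcases eq_or_lt_of_le hq2 with heq2 | hgt2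
    · -- base case : T = single α 2
      have hTeq : T = Finsupp.single α 2 := by
        refine (eq_of_le_of_expDeg_le hT2 ?_).symm
        rw [expDeg_single, hTdeg, ← heq2]
      have hω1 : expDeg ω = 1 := by
        have h1 : expDeg (Phi a T) = expDeg (a lam) + expDeg (Phi a ω) := by
          rw [hTω, expDeg_add]
        rw [expDeg_Phi a hdeg, expDeg_Phi a hdeg, hTdeg, hdeg, ← heq2] at h1
        have : δ * expDeg ω = δ * 1 := by omega
        exact Nat.eq_of_mul_eq_mul_left hδ this
      obtain ⟨m, hm⟩ := eq_single_of_expDeg_one hω1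
      have hrel : (2:ℕ) • a α = a lam + a m := by
        have : Phi a T = (2:ℕ) • a α := by rw [hTeq, Phi_single]
        rw [this, hm, Phi_single, one_smul] at hTω
        exact hTω
      obtain ⟨hlα, -⟩ := hnq α lam m hrel
      rw [hTeq, hlα] at hlam
      simp at hlam
    · -- step case : expDeg T = q' ≥ 3
      have hq3 : 3 ≤ q' := hgt2
      -- choose c in the support of T - single α 2
      have hTα : expDeg (T - Finsupp.single α 2) = q' - 2 := by
        rw [expDeg_tsub hT2, expDeg_single, hTdeg]
      have hTαne : T - Finsupp.single α 2 ≠ 0 := by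
        intro h0
        rw [h0] at hTα
        simp at hTα
        omega
      obtain ⟨c, hc⟩ := Finsupp.ne_iff.mp hTαne
      simp only [Finsupp.coe_zero, Pi.zero_apply] at hc
      have hcT2 : (T - Finsupp.single α 2 : Fin n →₀ ℕ) c ≠ 0 := hc
      have hcT : T c ≠ 0 := by
        have := Finsupp.tsub_apply T (Finsupp.single α 2) c
        omega
      have hcu : u c ≠ 0 := by
        have := Finsupp.le_def.mp hTu c
        omega
      have hcz : z ≠ c := fun h => by
        have := hzu c hcu
        rw [h] at this
        exact absurd this (lt_irrefl _)
      have hlamc : lam ≠ c := fun h => by rw [h] at hlam; exact hcT hlam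
      have hecT : Finsupp.single c 1 ≤ T := by
        rw [Finsupp.le_def]
        intro x
        rcases eq_or_ne x c with rfl | hxc
        · rw [Finsupp.single_eq_same]; omega
        · rw [Finsupp.single_apply, if_neg (Ne.symm hxc)]; omega
      -- apply strong Koszulness
      have hprem : Phi a (T - Finsupp.single c 1) + a c = a lam + Phi a ω := by
        have h1 : Phi a (T - Finsupp.single c 1) + Phi a (Finsupp.single c 1) = Phi a T :=
          Phi_tsub a hecT
        rw [Phi_single, one_smul] at h1
        rw [h1, hTω]
      obtain ⟨l, w₂, m, h1, h2⟩ := hsk lam c hlamc (T - Finsupp.single c 1) ω hprem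
      -- the new invariant
      have hsub : u - (T - Finsupp.single c 1) = (u - T) + Finsupp.single c 1 :=
        tsub_tsub_assoc hTu hecT
      have hinv2 : a l + Phi a (u - (T - Finsupp.single c 1))
          = a z + Phi a (ρ + Finsupp.single m 1) := by
        rw [hsub, Phi_add, Phi_single, one_smul, Phi_add, Phi_single, one_smul]
        calc a l + (Phi a (u - T) + a c) = (a l + a c) + Phi a (u - T) := by abel
          _ = (a lam + a m) + Phi a (u - T) := by rw [h2]
          _ = (a lam + Phi a (u - T)) + a m := by abel
          _ = (a z + Phi a ρ) + a m := by rw [hinv]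
          _ = a z + (Phi a ρ + a m) := by abel
      rcases eq_or_ne ((T - Finsupp.single c 1 : Fin n →₀ ℕ) l) 0 with hl0 | hl0
      · -- recurse
        have hcT2' : (if α = c then 2 else 0) < T c := by
          have h4 := Finsupp.tsub_apply T (Finsupp.single α 2) c
          rw [Finsupp.single_apply] at h4
          omega
        have hTc2 : Finsupp.single α 2 ≤ T - Finsupp.single c 1 := by
          rw [Finsupp.le_def]
          intro x
          rw [Finsupp.tsub_apply, Finsupp.single_apply, Finsupp.single_apply]
          have hx2 := Finsupp.le_def.mp hT2 x
          rw [Finsupp.single_apply] at hx2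
          rcases eq_or_ne α x with h1 | h1
          · subst h1
            rw [if_pos rfl] at hx2 ⊢
            rcases eq_or_ne c α with h2 | h2
            · rw [if_pos h2]
              rw [if_pos h2.symm, h2] at hcT2'
              omega
            · rw [if_neg h2]
              rw [if_neg (fun h : α = c => h2 h.symm)] at hcT2'
              omega
          · rw [if_neg h1]
            exact Nat.zero_le _
        have hdegT' : expDeg (T - Finsupp.single c 1) = q' - 1 := by
          rw [expDeg_tsub hecT, expDeg_single, hTdeg]
        exact IH (q' - 1) (by omega) (by omega) (T - Finsupp.single c 1) l w₂
          (ρ + Finsupp.single m 1) hdegT' hTc2 (tsub_le_self.trans hTu) hl0 h1 hinv2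
      · -- found quadratic inside u : contradiction with minimality
        have h5 : 0 < T l - (if c = l then 1 else 0) := by
          have h6 := Finsupp.tsub_apply T (Finsupp.single c 1) l
          rw [Finsupp.single_apply] at h6
          omega
        have hclT : Finsupp.single c 1 + Finsupp.single l 1 ≤ T := by
          rw [Finsupp.le_def]
          intro x
          rw [Finsupp.add_apply, Finsupp.single_apply, Finsupp.single_apply]
          by_cases h1 : c = x
          · by_cases h2 : l = x
            · have hcl : c = l := h1.trans h2.symm
              rw [if_pos hcl] at h5
              rw [if_pos h1, if_pos h2]
              subst h2
              omega
            · rw [if_pos h1, if_neg h2]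
              subst h1
              omega
          · by_cases h2 : l = x
            · rw [if_neg h1, if_pos h2]
              subst h2
              rw [if_neg h1] at h5
              omega
            · rw [if_neg h1, if_neg h2]
              omega
        set W := (u - T) + (Finsupp.single c 1 + Finsupp.single l 1) with hW
        have hWu : W ≤ u := by
          calc W ≤ (u - T) + T := add_le_add_right hclT _
            _ = u := tsub_add_cancel_of_le hTu
        have hTlne : T l ≠ 0 := by
          have := Finsupp.tsub_apply T (Finsupp.single c 1) l
          omega
        have hul : u l ≠ 0 := by
          have := Finsupp.le_def.mp hTu l
          omega
        have hWdeg : expDeg W < expDeg u := by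
          rw [hW, expDeg_add, expDeg_tsub hTu, expDeg_add, expDeg_single, expDeg_single]
          have := expDeg_mono hTu
          omega
        have hWne : W ≠ u := fun h => by rw [h] at hWdeg; omega
        have hPhiW : Phi a W = a z + Phi a (ρ + Finsupp.single m 1) := by
          rw [← hinv2, hsub]
          rw [hW, Phi_add, Phi_add, Phi_single, Phi_single, one_smul, one_smul,
            Phi_add, Phi_single, one_smul]
          calc Phi a (u - T) + (a c + a l) = a l + (Phi a (u - T) + a c) := by abel
            _ = _ := rfl
        have hWz : ∀ t, ord.symm t ≤ ord.symm z → W t = 0 := by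
          intro t ht
          have hut : u t = 0 := by
            by_contra h
            have := hzu t h
            omega
          have h6 := Finsupp.le_def.mp hWu t
          omega
        have hWinit : TInitial a ord W := by
          refine ⟨Finsupp.single z 1 + (ρ + Finsupp.single m 1), ?_, ?_, ?_⟩
          · rw [Phi_add, Phi_single, one_smul, hPhiW]
          · intro h
            have h7 := DFunLike.congr_fun h z
            rw [Finsupp.add_apply, Finsupp.single_eq_same] at h7
            have := hWz z le_rfl
            omega
          · refine rlex_small ord z ?_ ?_ ?_
            · have : Phi a (Finsupp.single z 1 + (ρ + Finsupp.single m 1)) = Phi a W := by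
                rw [Phi_add, Phi_single, one_smul, hPhiW]
              exact expDeg_eq_of_Phi_eq a hdeg hδ this
            · exact hWz
            · rw [Finsupp.add_apply, Finsupp.single_eq_same]
              omega
        exact hmin W hWu hWne hWinit

theorem mingen_squarefree {δ : ℕ} (hdeg : ∀ i, expDeg (a i) = δ) (hδ : 0 < δ)
    (hsk : ∀ i k : Fin n, i ≠ k → ∀ e w : Fin n →₀ ℕ,
      Phi a e + a k = a i + Phi a w →
      ∃ l w₂ m, Phi a e = a l + Phi a w₂ ∧ a l + a k = a i + a m)
    (hnq : ∀ α l m : Fin n, (2:ℕ) • a α = a l + a m → l = α ∧ m = α)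
    {u : Fin n →₀ ℕ} (hu : TInitial a ord u)
    (hmin : ∀ w, w ≤ u → w ≠ u → ¬ TInitial a ord w) : ∀ x, u x ≤ 1 := by
  by_contra hcon
  push_neg at hcon
  obtain ⟨α, hα⟩ := hcon
  obtain ⟨v, hvPhi, hvne, hvlt, hvmin⟩ := exists_fibermin a ord hdeg hδ hu
  -- disjoint supports
  have hdisj : ∀ t, u t = 0 ∨ v t = 0 := by
    intro t
    by_contra hct
    push_neg at hct
    obtain ⟨hut, hvt⟩ := hct
    have hetu : Finsupp.single t 1 ≤ u := by
      rw [Finsupp.le_def]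
      intro x
      rw [Finsupp.single_apply]
      rcases eq_or_ne t x with rfl | h
      · rw [if_pos rfl]; omega
      · rw [if_neg h]; omega
    have hetv : Finsupp.single t 1 ≤ v := by
      rw [Finsupp.le_def]
      intro x
      rw [Finsupp.single_apply]
      rcases eq_or_ne t x with rfl | h
      · rw [if_pos rfl]; omega
      · rw [if_neg h]; omega
    have hPhieq : Phi a (v - Finsupp.single t 1) = Phi a (u - Finsupp.single t 1) := by
      have h1 := Phi_tsub a hetu
      have h2 := Phi_tsub a hetv
      have : Phi a (v - Finsupp.single t 1) + Phi a (Finsupp.single t 1)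
          = Phi a (u - Finsupp.single t 1) + Phi a (Finsupp.single t 1) := by
        rw [h1, h2, hvPhi]
      exact add_right_cancel this
    have hne' : v - Finsupp.single t 1 ≠ u - Finsupp.single t 1 := by
      intro h
      apply hvne
      have := congrArg (· + Finsupp.single t 1) h
      simpa [tsub_add_cancel_of_le hetu, tsub_add_cancel_of_le hetv] using this
    have hlt' : rlexLT ord (v - Finsupp.single t 1) (u - Finsupp.single t 1) := by
      rw [← rlex_add_right ord (c := Finsupp.single t 1)]
      rw [tsub_add_cancel_of_le hetu, tsub_add_cancel_of_le hetv]
      exact hvlt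
    have : u - Finsupp.single t 1 ≠ u := by
      intro h
      have := DFunLike.congr_fun h t
      rw [Finsupp.tsub_apply, Finsupp.single_eq_same] at this
      omega
    exact hmin (u - Finsupp.single t 1) tsub_le_self this
      ⟨v - Finsupp.single t 1, hPhieq, hne', hlt'⟩
  -- extract z
  have hdegvu : expDeg v = expDeg u := expDeg_eq_of_Phi_eq a hdeg hδ hvPhi
  rcases hvlt with hdlt | ⟨hdeq, p, hp, hq⟩
  · omega
  set z := ord p with hz
  have hsymz : ord.symm z = p := Equiv.symm_apply_apply ord p
  have hzv : u z < v z := hp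
  have huz : u z = 0 := by
    rcases hdisj z with h | h
    · exact h
    · omega
  have hzu : ∀ k, u k ≠ 0 → ord.symm z < ord.symm k := by
    intro k hk
    rcases lt_trichotomy (ord.symm z) (ord.symm k) with h | h | h
    · exact h
    · exfalso
      have h8 : z = k := ord.symm.injective h
      exact hk (h8 ▸ huz)
    · exfalso
      have hkq : v (ord (ord.symm k)) = u (ord (ord.symm k)) := hq (ord.symm k) (by omega)
      rw [Equiv.apply_symm_apply] at hkq
      rcases hdisj k with h' | h'
      · exact hk h'
      · rw [h'] at hkq
        exact hk hkq.symm
  -- prepare data and run the process with T = u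
  have hα2 : Finsupp.single α 2 ≤ u := by
    rw [Finsupp.le_def]
    intro x
    rw [Finsupp.single_apply]
    rcases eq_or_ne α x with rfl | h
    · rw [if_pos rfl]; omega
    · rw [if_neg h]; omega
  have hq2 : 2 ≤ expDeg u := by
    have := apply_le_expDeg u α
    omega
  have hezv : Finsupp.single z 1 ≤ v := by
    rw [Finsupp.le_def]
    intro x
    rw [Finsupp.single_apply]
    rcases eq_or_ne z x with rfl | h
    · rw [if_pos rfl]; omega
    · rw [if_neg h]; omega
  have hTω : Phi a u = a z + Phi a (v - Finsupp.single z 1) := by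
    have h1 := Phi_tsub a hezv
    rw [Phi_single, one_smul] at h1
    rw [← hvPhi, ← h1, add_comm]
  have hinv0 : a z + Phi a (u - u) = a z + Phi a (0 : Fin n →₀ ℕ) := by
    rw [tsub_self]
  exact process a ord hdeg hδ hsk hnq hzu hmin (expDeg u) hq2 u z
    (v - Finsupp.single z 1) 0 rfl hα2 le_rfl huz hTω hinv0

theorem mingen_init_squarefree {δ : ℕ} (hdeg : ∀ i, expDeg (a i) = δ) (hδ : 0 < δ)
    (hsk : ∀ i k : Fin n, i ≠ k → ∀ e w : Fin n →₀ ℕ,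
      Phi a e + a k = a i + Phi a w →
      ∃ l w₂ m, Phi a e = a l + Phi a w₂ ∧ a l + a k = a i + a m)
    (hnq : ∀ α l m : Fin n, (2:ℕ) • a α = a l + a m → l = α ∧ m = α) :
    ∀ dd, TInitial a ord dd → ∃ e, TInitial a ord e ∧ e ≤ dd ∧ ∀ x, e x ≤ 1 := by
  have key : ∀ N : ℕ, ∀ dd, expDeg dd ≤ N → TInitial a ord dd →
      ∃ e, TInitial a ord e ∧ e ≤ dd ∧ ∀ x, e x ≤ 1 := by
    intro N
    induction N with
    | zero =>
      intro dd hdd hinit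
      exfalso
      obtain ⟨v, -, -, hvlt⟩ := hinit
      have : dd = 0 := expDeg_eq_zero (by omega)
      rw [this] at hvlt
      exact rlex_not_lt_zero ord v hvlt
    | succ N ih =>
      intro dd hdd hinit
      by_cases hex : ∃ w, w ≤ dd ∧ w ≠ dd ∧ TInitial a ord w
      · obtain ⟨w, hw1, hw2, hw3⟩ := hex
        have hlt : expDeg w < expDeg dd := expDeg_lt_of_lt hw1 hw2
        obtain ⟨e, he1, he2, he3⟩ := ih w (by omega) hw3
        exact ⟨e, he1, he2.trans hw1, he3⟩
      · push_neg at hex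
        have hmin : ∀ w, w ≤ dd → w ≠ dd → ¬ TInitial a ord w := hex
        exact ⟨dd, hinit, le_rfl,
          mingen_squarefree a ord hdeg hδ hsk hnq hinit hmin⟩
  intro dd hinit
  exact key (expDeg dd) dd le_rfl hinit

theorem sqfree_divisor_zero (hdeg : ∀ i, expDeg (a i) = 0) :
    ∀ dd, TInitial a ord dd → ∃ e, TInitial a ord e ∧ e ≤ dd ∧ ∀ x, e x ≤ 1 := by
  have ha0 : ∀ i, a i = 0 := fun i => expDeg_eq_zero (hdeg i)
  have hPhi0 : ∀ e : Fin n →₀ ℕ, Phi a e = 0 := by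
    intro e
    unfold Phi
    have h1 : (e.sum fun i c => c • a i) = e.sum fun _ _ => (0 : Fin d →₀ ℕ) :=
      Finsupp.sum_congr (fun i _ => by rw [ha0 i, smul_zero])
    rw [h1]
    exact Finset.sum_const_zero
  intro dd hinit
  have hddne : dd ≠ 0 := by
    rintro rfl
    obtain ⟨v, -, -, hvlt⟩ := hinit
    exact rlex_not_lt_zero ord v hvlt
  obtain ⟨t, ht⟩ := Finsupp.support_nonempty_iff.mpr hddne
  have htne : dd t ≠ 0 := Finsupp.mem_support_iff.mp ht
  refine ⟨Finsupp.single t 1, ⟨0, ?_, ?_, ?_⟩, ?_, ?_⟩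
  · rw [hPhi0, hPhi0]
  · intro h
    have := DFunLike.congr_fun h t
    rw [Finsupp.single_eq_same] at this
    simp at this
  · exact Or.inl (by rw [expDeg_zero, expDeg_single]; omega)
  · rw [Finsupp.le_def]
    intro x
    rw [Finsupp.single_apply]
    rcases eq_or_ne t x with rfl | h
    · rw [if_pos rfl]; omega
    · rw [if_neg h]; omega
  · intro x
    rw [Finsupp.single_apply]
    split_ifs <;> omega

end MainComb

end TCaux

end

/-- **(ii) ⟹ (iii) of Theorem 2.1.**  If `K[A]` is strongly Koszul and `I_A`
contains no (nonzero) quadratic binomial of the form `x_i^2 - x_j x_k`, then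
`K[A]` is compressed, i.e. `in_<(I_A)` is radical for every reverse
lexicographic order `<`. -/
theorem stronglyKoszul_no_square_binomial_implies_compressed
    (K : Type) [Field K] {n d : ℕ} (a : Fin n → (Fin d →₀ ℕ))
    (δ : ℕ) (hdeg : ∀ i, expDeg (a i) = δ) (hinj : Function.Injective a)
    (hSK : ToricStronglyKoszul K a)
    (hnoquad : ∀ i j k : Fin n,
      (MvPolynomial.monomial (Finsupp.single i 2) (1 : K)
        - MvPolynomial.monomial (Finsupp.single j 1 + Finsupp.single k 1) (1 : K)
          ∈ toricIdeal K a) →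
      Finsupp.single i 2 = Finsupp.single j 1 + Finsupp.single k 1) :
    ToricCompressed K a := by
  intro ord
  rw [TCaux.initialIdeal_eq a ord]
  apply TCaux.radical_span_initial a ord
  rcases Nat.eq_zero_or_pos δ with rfl | hδ
  · exact TCaux.sqfree_divisor_zero a ord hdeg
  · exact TCaux.mingen_init_squarefree a ord hdeg hδ
      (fun i k hik e w heq => TCaux.skPair a hSK hdeg hδ hik e w heq)
      (fun α l m h => TCaux.noquad_comb a hnoquad h)
end
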